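/- arXiv:1911.12479 — 6 statements merged into one kernel-verified Lean document; each statement's English description precedes it below -/
import Mathlib

section
/- Fix n ≥ 0, non-negative integers a_1,…,a_n, v = (v_0,…,v_n) ∈ ℤ^{n+1}, a partition λ with |λ| = |v|, and m ∈ {0,1,…,n+1}. If −v_0 ≤ a_1+⋯+a_n, then there exists a polynomial P with coefficients in ℚ(q), of degree at most a_1+⋯+a_n+v_0, such that D_{v,λ}((a_0,a_1,…,a_n), m) = P(q^{a_0}) for every non-negative integer a_0. If −v_0 > a_1+⋯+a_n, then D_{v,λ}((a_0,a_1,…,a_n), m) = 0 for every non-negative integer a_0. -/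
/- Laurent polynomials in `N` variables `x_0, …, x_{N-1}` over `K = ℚ(q)`,
constant-term extraction, the q-Dyson product, the symmetric-function data and
the constant term `D_{v,λ}(a,m)` from the paper. -/

noncomputable section

/-- The field `K = ℚ(q)`. -/
abbrev KK : Type := RatFunc ℚ

/-- The indeterminate `q ∈ ℚ(q)`. -/
def qq : KK := RatFunc.X

/-- Laurent polynomials in `x_0, …, x_{N-1}` over `K`. -/
abbrev LL (N : ℕ) : Type := AddMonoidAlgebra KK (Fin N →₀ ℤ)

/-- Constant (scalar) Laurent polynomial. -/
def CK {N : ℕ} (c : KK) : LL N := AddMonoidAlgebra.single 0 c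

/-- The Laurent monomial `x_i^e`. -/
def Xm {N : ℕ} (i : Fin N) (e : ℤ) : LL N := AddMonoidAlgebra.single (Finsupp.single i e) 1

/-- Constant term: the coefficient of `x_0^0 ⋯ x_{N-1}^0`. -/
def CT {N : ℕ} (f : LL N) : KK := f.coeff 0

/-- The complete homogeneous symmetric polynomial `h_r` evaluated at the
(finitely indexed) alphabet `y`. -/
def hsym {N : ℕ} {ι : Type} [Fintype ι] [DecidableEq ι] (y : ι → LL N) (r : ℕ) : LL N :=
  ∑ c ∈ Finset.piAntidiag (Finset.univ : Finset ι) r, ∏ i, y i ^ (c i)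

/-- The alphabet `x_m^{(a)}`, consisting of the `|a|` Laurent monomials
`x_i q^{j - χ(i<m)}` for `0 ≤ i ≤ N-1`, `0 ≤ j ≤ a_i - 1`. -/
def alphabetX {N : ℕ} (a : Fin N → ℕ) (m : ℕ) : ((i : Fin N) × Fin (a i)) → LL N :=
  fun p => Xm p.1 1 * CK (qq ^ ((p.2 : ℤ) - (if (p.1 : ℕ) < m then 1 else 0)))

/-- `h_λ(x_m^{(a)}) = h_{λ_0} h_{λ_1} ⋯` where `λ` is given as the list of its parts. -/
def hPart {N : ℕ} (a : Fin N → ℕ) (m : ℕ) (lam : List ℕ) : LL N :=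
  (lam.map (fun r => hsym (alphabetX a m) r)).prod

/-- The q-shifted factorial `(z; q)_k` for a Laurent polynomial `z`. -/
def qPochL {N : ℕ} (z : LL N) (k : ℕ) : LL N :=
  ∏ i ∈ Finset.range k, (1 - z * CK (qq ^ i))

/-- The q-Dyson product `∏_{0 ≤ i < j ≤ N-1} (x_i/x_j; q)_{a_i} (q x_j/x_i; q)_{a_j}`. -/
def dysonProd {N : ℕ} (a : Fin N → ℕ) : LL N :=
  ∏ p ∈ Finset.univ.filter (fun p : Fin N × Fin N => p.1 < p.2),
    (qPochL (Xm p.1 1 * Xm p.2 (-1)) (a p.1) * qPochL (CK qq * Xm p.2 1 * Xm p.1 (-1)) (a p.2))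

/-- The constant term `D_{v,λ}(a,m)`, with `λ` given as the list of its parts. -/
def Dterm (N : ℕ) (v : Fin N → ℤ) (lam : List ℕ) (a : Fin N → ℕ) (m : ℕ) : KK :=
  CT ((∏ i, Xm i (-(v i))) * hPart a m lam * dysonProd a)

/-- The q-shifted factorial `(z; q)_k` in `K`. -/
def qPochK (z : KK) (k : ℕ) : KK := ∏ i ∈ Finset.range k, (1 - z * qq ^ i)

/-- The q-binomial coefficient `[N choose k]_q = (q^{N-k+1};q)_k / (q;q)_k`
(equal to `0` for `k < 0`). -/
def qBinom (nn : ℤ) (k : ℤ) : KK :=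
  if k < 0 then 0 else qPochK (qq ^ (nn - k + 1)) k.toNat / qPochK qq k.toNat

/-- `v⁺`: the weakly decreasing rearrangement of `v`, as a list. -/
def vplusL {N : ℕ} (v : Fin N → ℕ) : List ℕ :=
  (Multiset.sort (Multiset.map v Finset.univ.val) (· ≤ ·)).reverse

/-- `v⁺` for integer vectors `v`. -/
def vplusLZ {N : ℕ} (v : Fin N → ℤ) : List ℤ :=
  (Multiset.sort (Multiset.map v Finset.univ.val) (· ≤ ·)).reverse

namespace QDyson
open Finset Pointwise Polynomial

instance instCoeFunLL {N : ℕ} : CoeFun (LL N) (fun _ => (Fin N →₀ ℤ) → KK) :=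
  ⟨fun f => AddMonoidAlgebra.coeff f⟩

lemma qq_ne_zero : qq ≠ 0 := RatFunc.X_ne_zero

lemma qq_pow_ne_one {k : ℕ} (hk : k ≠ 0) : qq ^ k ≠ 1 := by
  intro h
  have h2 : (algebraMap (Polynomial ℚ) KK) (Polynomial.X ^ k) = (algebraMap (Polynomial ℚ) KK) 1 := by
    simpa [qq, RatFunc.algebraMap_X, map_pow] using h
  have h3 := RatFunc.algebraMap_injective ℚ |>.eq_iff.mp h2
  have hd := congrArg Polynomial.natDegree h3
  simp [Polynomial.natDegree_X_pow] at hd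
  exact hk hd

lemma one_sub_qq_pow_ne_zero {k : ℕ} (hk : k ≠ 0) : (1:KK) - qq ^ k ≠ 0 :=
  sub_ne_zero.mpr (Ne.symm (qq_pow_ne_one hk))

/-! ### lbx0 : lower bound for the x₀-exponent on the support -/

def lbx0 {N : ℕ} (f : LL (N+1)) (d : ℤ) : Prop := ∀ ν ∈ f.coeff.support, d ≤ ν 0

lemma lbx0_mono {N : ℕ} {f : LL (N+1)} {d e : ℤ} (h : lbx0 f d) (hde : e ≤ d) : lbx0 f e :=
  fun ν hν => le_trans hde (h ν hν)

lemma lbx0_single {N : ℕ} {μ : Fin (N+1) →₀ ℤ} {c : KK} {d : ℤ} (h : d ≤ μ 0) :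
    lbx0 (AddMonoidAlgebra.single μ c) d := by
  intro ν hν
  have := Finsupp.support_single_subset hν
  simp only [Finset.mem_singleton] at this
  subst this; exact h

lemma lbx0_one {N : ℕ} : lbx0 (1 : LL (N+1)) 0 := by
  have : (1 : LL (N+1)) = AddMonoidAlgebra.single 0 1 := rfl
  rw [this]; exact lbx0_single (by simp)

lemma lbx0_mul {N : ℕ} {f g : LL (N+1)} {d e : ℤ} (hf : lbx0 f d) (hg : lbx0 g e) :
    lbx0 (f * g) (d + e) := by
  classical
  intro ν hν
  obtain ⟨α, hα, β, hβ, rfl⟩ := Finset.mem_add.mp (AddMonoidAlgebra.support_coeff_mul_subset f g hν)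
  have h1 := hf α hα
  have h2 := hg β hβ
  simp only [Finsupp.add_apply]
  omega

lemma lbx0_add {N : ℕ} {f g : LL (N+1)} {d : ℤ} (hf : lbx0 f d) (hg : lbx0 g d) :
    lbx0 (f + g) d := by
  intro ν hν
  have := Finsupp.support_add hν
  rcases Finset.mem_union.mp this with h | h
  · exact hf ν h
  · exact hg ν h

lemma lbx0_neg {N : ℕ} {f : LL (N+1)} {d : ℤ} (hf : lbx0 f d) : lbx0 (-f) d := by
  intro ν hν
  apply hf
  rwa [AddMonoidAlgebra.coeff_neg, Finsupp.support_neg] at hν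

lemma lbx0_sub {N : ℕ} {f g : LL (N+1)} {d : ℤ} (hf : lbx0 f d) (hg : lbx0 g d) :
    lbx0 (f - g) d := by
  rw [sub_eq_add_neg]; exact lbx0_add hf (lbx0_neg hg)

lemma lbx0_prod {N : ℕ} {κ : Type*} (s : Finset κ) (F : κ → LL (N+1)) (D : κ → ℤ)
    (h : ∀ k ∈ s, lbx0 (F k) (D k)) : lbx0 (∏ k ∈ s, F k) (∑ k ∈ s, D k) := by
  classical
  induction s using Finset.induction with
  | empty => simpa using lbx0_one
  | insert x s hx ih =>
    rw [Finset.prod_insert hx, Finset.sum_insert hx]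
    exact lbx0_mul (h x (Finset.mem_insert_self x s)) (ih fun k hk => h k (Finset.mem_insert_of_mem hk))

lemma lbx0_CT {N : ℕ} {f : LL (N+1)} {d : ℤ} (hf : lbx0 f d) (hd : 0 < d) : CT f = 0 := by
  by_contra h
  have : (0 : Fin (N+1) →₀ ℤ) ∈ f.coeff.support := Finsupp.mem_support_iff.mpr h
  have := hf 0 this
  simp at this
  omega

/-! ### The GoodF predicate -/

structure GoodF {N : ℕ} (c : ℕ) (W : ℕ → LL (N+1)) : Prop where
  supp : ∀ a0 ν, (W a0) ν ≠ 0 → ∀ j, -(ν 0) - c ≤ ν j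
  coeffs : ∀ μ : Fin (N+1) →₀ ℤ, ∃ Q : Polynomial KK,
    (∀ k : ℕ, (μ 0 : ℤ) < k → Q.coeff k = 0) ∧ ∀ a0, (W a0) μ = Q.eval (qq ^ a0)

lemma mul_apply_left {N : ℕ} (f g : LL N) (μ : Fin N →₀ ℤ) :
    (f * g) μ = ∑ ν ∈ f.coeff.support, f ν * g (μ - ν) := by
  conv_lhs => rw [← AddMonoidAlgebra.sum_coeff_single f]
  rw [Finsupp.sum, Finset.sum_mul, AddMonoidAlgebra.coeff_sum, Finsupp.finset_sum_apply]
  refine Finset.sum_congr rfl fun ν _ => ?_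
  rw [AddMonoidAlgebra.coeff_single_mul_apply]
  rw [neg_add_eq_sub]

lemma mul_apply_superset {N : ℕ} (f g : LL N) (μ : Fin N →₀ ℤ) (T : Finset (Fin N →₀ ℤ))
    (hT : ∀ ν, f ν ≠ 0 → g (μ - ν) ≠ 0 → ν ∈ T) :
    (f * g) μ = ∑ ν ∈ T, f ν * g (μ - ν) := by
  classical
  rw [mul_apply_left]
  rw [Finset.sum_subset (Finset.subset_union_left (s₂ := T))
    (fun ν _ hν => by simp [Finsupp.notMem_support_iff.mp hν])]
  refine (Finset.sum_subset (Finset.subset_union_right (s₁ := f.coeff.support)) fun ν _ hν => ?_).symm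
  by_contra h
  rcases mul_ne_zero_iff.mp h with ⟨h1, h2⟩
  exact hν (hT ν h1 h2)

lemma coeff_vanish_mul {p q : Polynomial KK} {A B : ℤ}
    (hp : ∀ k : ℕ, A < k → p.coeff k = 0) (hq : ∀ k : ℕ, B < k → q.coeff k = 0) :
    ∀ k : ℕ, A + B < k → (p * q).coeff k = 0 := by
  intro k hk
  by_cases hA : A < 0
  · have : p = 0 := Polynomial.ext fun n => by simpa using hp n (by omega)
    simp [this]
  by_cases hB : B < 0
  · have : q = 0 := Polynomial.ext fun n => by simpa using hq n (by omega)
    simp [this]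
  have hpd : p.natDegree ≤ A.toNat :=
    Polynomial.natDegree_le_iff_coeff_eq_zero.mpr fun m hm => hp m (by omega)
  have hqd : q.natDegree ≤ B.toNat :=
    Polynomial.natDegree_le_iff_coeff_eq_zero.mpr fun m hm => hq m (by omega)
  apply Polynomial.coeff_eq_zero_of_natDegree_lt
  calc (p*q).natDegree ≤ p.natDegree + q.natDegree := Polynomial.natDegree_mul_le
  _ ≤ A.toNat + B.toNat := add_le_add hpd hqd
  _ < k := by omega

lemma GoodF.zero_le {N : ℕ} {c : ℕ} {W : ℕ → LL (N+1)} (h : GoodF c W) :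
    ∀ a0 ν, (W a0) ν ≠ 0 → -(c:ℤ) ≤ ν 0 := by
  intro a0 ν hν
  have := h.supp a0 ν hν 0
  omega

lemma GoodF.mul {N : ℕ} {c c' : ℕ} {W V : ℕ → LL (N+1)} (hW : GoodF c W) (hV : GoodF c' V) :
    GoodF (c + c') (fun a0 => W a0 * V a0) := by
  classical
  constructor
  · intro a0 ν hν j
    have hν' : ν ∈ (W a0 * V a0).coeff.support := Finsupp.mem_support_iff.mpr hν
    obtain ⟨α, hα, β, hβ, rfl⟩ := Finset.mem_add.mp (AddMonoidAlgebra.support_coeff_mul_subset _ _ hν')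
    have h1 := hW.supp a0 α (Finsupp.mem_support_iff.mp hα) j
    have h2 := hV.supp a0 β (Finsupp.mem_support_iff.mp hβ) j
    have h10 := hW.supp a0 α (Finsupp.mem_support_iff.mp hα) 0
    have h20 := hV.supp a0 β (Finsupp.mem_support_iff.mp hβ) 0
    simp only [Finsupp.add_apply]
    push_cast
    omega
  · intro μ
    choose Qw hw1 hw2 using hW.coeffs
    choose Qv hv1 hv2 using hV.coeffs
    set lo : Fin (N+1) →₀ ℤ :=
      Finsupp.equivFunOnFinite.symm (fun _ => -(μ 0) - c' - c) with hlo
    set hi : Fin (N+1) →₀ ℤ :=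
      μ + Finsupp.equivFunOnFinite.symm (fun _ => μ 0 + c + c') with hhi
    set T := Finset.Icc lo hi with hTd
    have hbox : ∀ a0 (ν : Fin (N+1) →₀ ℤ), (W a0) ν ≠ 0 → (V a0) (μ - ν) ≠ 0 → ν ∈ T := by
      intro a0 ν h1 h2
      have s1 := hW.supp a0 ν h1
      have s2 := hV.supp a0 (μ - ν) h2
      have s10 := s1 0
      have s20 := s2 0
      simp only [Finsupp.sub_apply] at s2 s20
      rw [hTd, Finset.mem_Icc]
      constructor
      · rw [Finsupp.le_def]
        intro j
        have := s1 j
        simp only [hlo, Finsupp.coe_equivFunOnFinite_symm]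
        omega
      · rw [Finsupp.le_def]
        intro j
        have := s2 j
        simp only [hhi, Finsupp.add_apply, Finsupp.coe_equivFunOnFinite_symm]
        omega
    refine ⟨∑ ν ∈ T, Qw ν * Qv (μ - ν), ?_, ?_⟩
    · intro k hk
      rw [Polynomial.finset_sum_coeff]
      refine Finset.sum_eq_zero fun ν _ => ?_
      refine coeff_vanish_mul (hw1 ν) (hv1 (μ - ν)) k ?_
      simp only [Finsupp.sub_apply]
      omega
    · intro a0
      rw [mul_apply_superset (W a0) (V a0) μ T (hbox a0)]
      rw [Polynomial.eval_finset_sum]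
      exact Finset.sum_congr rfl fun ν _ => by rw [Polynomial.eval_mul, hw2, hv2]

lemma GoodF.one {N : ℕ} : GoodF (N := N) 0 (fun _ => 1) := by
  constructor
  · intro a0 ν hν j
    have : ν ∈ (1 : LL (N+1)).coeff.support := Finsupp.mem_support_iff.mpr hν
    have h1 : ν ∈ ({0} : Finset (Fin (N+1) →₀ ℤ)) := Finsupp.support_single_subset this
    simp only [Finset.mem_singleton] at h1
    subst h1; simp
  · intro μ
    classical
    refine ⟨if μ = 0 then 1 else 0, ?_, ?_⟩
    · intro k hk
      split
      · rename_i h; subst h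
        simp at hk
        rw [Polynomial.coeff_one]
        simp; omega
      · simp
    · intro a0
      have h1 : (1 : LL (N+1)) μ = if μ = 0 then 1 else 0 := by
        show (AddMonoidAlgebra.single 0 1 : LL (N+1)) μ = _
        rw [AddMonoidAlgebra.coeff_single_apply]
        simp [eq_comm]
      rw [h1]
      split <;> simp

lemma GoodF.prod {N : ℕ} {κ : Type*} (s : Finset κ) (Ws : κ → ℕ → LL (N+1))
    (h : ∀ k ∈ s, GoodF 0 (Ws k)) : GoodF 0 (fun a0 => ∏ k ∈ s, Ws k a0) := by
  classical
  induction s using Finset.induction with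
  | empty => simpa using GoodF.one
  | insert x s hx ih =>
    have := (h x (Finset.mem_insert_self x s)).mul (ih fun k hk => h k (Finset.mem_insert_of_mem hk))
    simp only [Finset.prod_insert hx]
    simpa using this


/-! ### CK basics -/

lemma CK_one {N : ℕ} : (CK 1 : LL N) = 1 := rfl

lemma CK_mul {N : ℕ} (a b : KK) : (CK (a * b) : LL N) = CK a * CK b := by
  rw [CK, CK, CK, AddMonoidAlgebra.single_mul_single, zero_add]

lemma CK_sub {N : ℕ} (a b : KK) : (CK (a - b) : LL N) = CK a - CK b := by
  simp [CK, Finsupp.single_sub]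

/-! ### the q-binomial coefficient polynomials -/

def uC (k : ℕ) : KK := (-1)^k * qq^(Nat.choose k 2) * (∏ i ∈ Finset.range k, (1 - qq^(i+1)))⁻¹

lemma prodden_ne (k : ℕ) : (∏ i ∈ Finset.range k, (1 - qq^(i+1))) ≠ 0 :=
  Finset.prod_ne_zero_iff.mpr fun i _ => one_sub_qq_pow_ne_zero (Nat.succ_ne_zero i)

lemma uC_zero : uC 0 = 1 := by simp [uC]

lemma uC_succ (k : ℕ) : uC (k+1) * (1 - qq^(k+1)) = -(qq^k) * uC k := by
  have hP := prodden_ne k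
  have hP1 := prodden_ne (k+1)
  have hmp : ∀ j : ℕ, uC j * ∏ i ∈ Finset.range j, (1 - qq^(i+1)) = (-1)^j * qq^(Nat.choose j 2) := by
    intro j
    rw [uC]
    field_simp
    rw [mul_div_assoc, div_self (prodden_ne j), mul_one]
  have h2 : Nat.choose (k+1) 2 = Nat.choose k 2 + k := by
    rw [Nat.choose_succ_succ k 1, Nat.choose_one_right]
    exact Nat.add_comm _ _
  apply mul_right_cancel₀ hP
  have e1 : uC (k+1) * (1 - qq^(k+1)) * ∏ i ∈ Finset.range k, (1 - qq^(i+1))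
      = uC (k+1) * ∏ i ∈ Finset.range (k+1), (1 - qq^(i+1)) := by
    rw [Finset.prod_range_succ]
    ring
  rw [e1, hmp (k+1), h2]
  have e2 : -(qq^k) * uC k * ∏ i ∈ Finset.range k, (1 - qq^(i+1))
      = -(qq^k) * ((-1)^k * qq^(Nat.choose k 2)) := by
    rw [mul_assoc, hmp k]
  rw [e2, pow_add, pow_succ]
  ring

def ckP (k : ℕ) : Polynomial KK :=
  C (uC k) * ∏ i ∈ Finset.range k, (1 - C (qq ^ ((i:ℤ) + 1 - k)) * X)

lemma ckP_natDegree_le (k : ℕ) : (ckP k).natDegree ≤ k := by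
  rw [ckP]
  refine le_trans (Polynomial.natDegree_mul_le) ?_
  rw [Polynomial.natDegree_C, zero_add]
  refine le_trans (Polynomial.natDegree_prod_le _ _) ?_
  calc ∑ i ∈ Finset.range k, (1 - C (qq ^ ((i:ℤ) + 1 - k)) * X).natDegree
      ≤ ∑ i ∈ Finset.range k, 1 := by
        refine Finset.sum_le_sum fun i _ => ?_
        refine le_trans (Polynomial.natDegree_sub_le _ _) ?_
        simp [Polynomial.natDegree_C_mul_le]
        exact le_trans (Polynomial.natDegree_C_mul_le _ _) (by simp)
  _ = k := by simp

lemma ckP_eval (k t : ℕ) :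
    (ckP k).eval (qq ^ t) = uC k * ∏ i ∈ Finset.range k, (1 - qq ^ ((t:ℤ) + i + 1 - k)) := by
  rw [ckP]
  rw [Polynomial.eval_mul, Polynomial.eval_C, Polynomial.eval_prod]
  congr 1
  refine Finset.prod_congr rfl fun i _ => ?_
  rw [Polynomial.eval_sub, Polynomial.eval_one, Polynomial.eval_mul, Polynomial.eval_C,
    Polynomial.eval_X]
  congr 1
  rw [← zpow_natCast qq t, ← zpow_add₀ qq_ne_zero]
  congr 1
  ring

lemma ckP_eval_zero {k t : ℕ} (h : t < k) : (ckP k).eval (qq ^ t) = 0 := by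
  rw [ckP_eval]
  have hmem : k - 1 - t ∈ Finset.range k := by
    apply Finset.mem_range.mpr; omega
  rw [Finset.prod_eq_zero hmem]
  · ring
  · have : (t:ℤ) + (k - 1 - t : ℕ) + 1 - k = 0 := by push_cast; omega
    rw [this]
    simp

lemma ckP_zero : ckP 0 = Polynomial.C 1 := by
  simp [ckP, uC_zero]

lemma ckP_pascal (k a0 : ℕ) :
    (ckP (k+1)).eval (qq ^ (a0+1)) =
      (ckP (k+1)).eval (qq ^ a0) - qq ^ a0 * (ckP k).eval (qq ^ a0) := by
  have h2 : (1 - qq^((a0:ℤ)+1)) - (1 - qq^((a0:ℤ) - k)) = qq^((a0:ℤ)-k) * (1 - qq^((k:ℤ)+1)) := by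
    rw [mul_sub, mul_one, ← zpow_add₀ qq_ne_zero]
    rw [show (a0:ℤ) - k + ((k:ℤ)+1) = (a0:ℤ) + 1 by ring]
    ring
  have h1 : uC (k+1) * ((1 - qq^((a0:ℤ)+1)) - (1 - qq^((a0:ℤ) - k))) = -(qq^(a0:ℕ) * uC k) := by
    rw [h2]
    calc uC (k+1) * (qq^((a0:ℤ)-k) * (1 - qq^((k:ℤ)+1)))
        = (uC (k+1) * (1 - qq^(k+1))) * qq^((a0:ℤ)-k) := by
          rw [show ((k:ℤ)+1) = ((k+1 : ℕ) : ℤ) by push_cast; ring, zpow_natCast qq (k+1)]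
          ring
      _ = (-(qq^k) * uC k) * qq^((a0:ℤ)-k) := by rw [uC_succ]
      _ = -(qq^(a0:ℕ) * uC k) := by
          rw [← zpow_natCast qq k, ← zpow_natCast qq a0]
          rw [show -(qq^(k:ℤ)) * uC k * qq^((a0:ℤ)-k) = -((qq^(k:ℤ) * qq^((a0:ℤ)-k)) * uC k) by
            ring]
          rw [← zpow_add₀ qq_ne_zero]
          rw [show (k:ℤ) + ((a0:ℤ)-k) = ((a0:ℕ):ℤ) by push_cast; ring]
  have key : uC (k+1) * (1 - qq^((a0:ℤ)+1)) =
      uC (k+1) * (1 - qq^((a0:ℤ)-k)) - qq^(a0:ℕ) * uC k := by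
    linear_combination h1
  rw [ckP_eval, ckP_eval, ckP_eval]
  set P := ∏ i ∈ Finset.range k, (1 - qq^((a0:ℤ)+i+1-k)) with hPd
  have L1 : ∏ i ∈ Finset.range (k+1), (1 - qq ^ (((a0+1:ℕ):ℤ) + i + 1 - ((k+1:ℕ):ℤ)))
      = P * (1 - qq^((a0:ℤ)+1)) := by
    rw [Finset.prod_range_succ]
    congr 1
    · refine Finset.prod_congr rfl fun i _ => ?_
      congr 1
      push_cast
      ring
    · congr 1
      push_cast
      ring
  have L2 : ∏ i ∈ Finset.range (k+1), (1 - qq ^ (((a0:ℕ):ℤ) + i + 1 - ((k+1:ℕ):ℤ)))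
      = P * (1 - qq^((a0:ℤ)-k)) := by
    rw [Finset.prod_range_succ']
    congr 1
    · refine Finset.prod_congr rfl fun i _ => ?_
      congr 1
      push_cast
      ring
    · congr 1
      push_cast
      ring
  rw [L1, L2]
  linear_combination P * key

lemma CK_zero {N : ℕ} : (CK 0 : LL N) = 0 := by simp [CK]

lemma qPochL_expand {N : ℕ} (z : LL N) (a0 : ℕ) :
    qPochL z a0 = ∑ k ∈ Finset.range (a0+1), CK ((ckP k).eval (qq ^ a0)) * z ^ k := by
  induction a0 with
  | zero =>
    rw [qPochL, Finset.range_zero, Finset.prod_empty, Finset.sum_range_one, ckP_zero]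
    simp [CK_one]
  | succ a0 ih =>
    have hstep : qPochL z (a0+1) = qPochL z a0 * (1 - z * CK (qq ^ a0)) := by
      rw [qPochL, qPochL, Finset.prod_range_succ]
    rw [hstep, ih]
    rw [Finset.sum_range_succ' (fun k => CK ((ckP k).eval (qq ^ (a0+1))) * z ^ k) (a0+1)]
    have h0 : CK ((ckP 0).eval (qq ^ (a0+1))) * z ^ 0 = CK ((ckP 0).eval (qq ^ a0)) * z ^ 0 := by
      rw [ckP_zero]; simp
    rw [h0]
    have h1 : ∀ k ∈ Finset.range (a0+1),
        CK ((ckP (k+1)).eval (qq ^ (a0+1))) * z ^ (k+1)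
        = CK ((ckP (k+1)).eval (qq ^ a0)) * z ^ (k+1)
          - CK (qq ^ a0 * (ckP k).eval (qq ^ a0)) * z ^ (k+1) := by
      intro k _
      rw [ckP_pascal, CK_sub, sub_mul]
    rw [Finset.sum_congr rfl h1, Finset.sum_sub_distrib]
    have h2 : ∑ k ∈ Finset.range (a0+1), CK ((ckP (k+1)).eval (qq ^ a0)) * z ^ (k+1)
        = ∑ k ∈ Finset.range (a0+1), CK ((ckP k).eval (qq ^ a0)) * z ^ k
          - CK ((ckP 0).eval (qq ^ a0)) * z ^ 0 := by
      have e1 := Finset.sum_range_succ' (fun k => CK ((ckP k).eval (qq ^ a0)) * z ^ k) (a0+1)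
      have e2 := Finset.sum_range_succ (fun k => CK ((ckP k).eval (qq ^ a0)) * z ^ k) (a0+1)
      rw [ckP_eval_zero (Nat.lt_succ_self a0), CK_zero, zero_mul, add_zero] at e2
      linear_combination e2 - e1
    rw [h2]
    have h3 : (∑ k ∈ Finset.range (a0+1), CK ((ckP k).eval (qq ^ a0)) * z ^ k) * (z * CK (qq ^ a0))
        = ∑ k ∈ Finset.range (a0+1), CK (qq ^ a0 * (ckP k).eval (qq ^ a0)) * z ^ (k+1) := by
      rw [Finset.sum_mul]
      refine Finset.sum_congr rfl fun k _ => ?_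
      rw [CK_mul]
      ring
    linear_combination -h3

/-! ### GoodF for the Pochhammer factors -/

def dvec {N : ℕ} (j : Fin (N+1)) : Fin (N+1) →₀ ℤ :=
  Finsupp.single 0 1 + Finsupp.single j (-1)

lemma dvec_at0 {N : ℕ} {j : Fin (N+1)} (hj : j ≠ 0) : dvec j 0 = 1 := by
  rw [dvec, Finsupp.add_apply, Finsupp.single_eq_same, Finsupp.single_apply]
  simp [hj]

lemma dvec_ge {N : ℕ} (j : Fin (N+1)) (i : Fin (N+1)) : -1 ≤ dvec j i := by
  rw [dvec, Finsupp.add_apply, Finsupp.single_apply, Finsupp.single_apply]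
  split <;> split <;> omega

lemma zpow_single {N : ℕ} (j : Fin (N+1)) (k : ℕ) :
    (Xm (0 : Fin (N+1)) 1 * Xm j (-1)) ^ k = AddMonoidAlgebra.single (k • dvec j) (1:KK) := by
  rw [Xm, Xm, AddMonoidAlgebra.single_mul_single, AddMonoidAlgebra.single_pow, one_mul, one_pow,
    dvec]

lemma CK_mul_single {N : ℕ} (α : KK) (A : Fin N →₀ ℤ) (β : KK) :
    (CK α : LL N) * AddMonoidAlgebra.single A β = AddMonoidAlgebra.single A (α * β) := by
  rw [CK, AddMonoidAlgebra.single_mul_single, zero_add]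

lemma smul_dvec_apply {N : ℕ} (j : Fin (N+1)) (k : ℕ) (i : Fin (N+1)) :
    (k • dvec j) i = (k : ℤ) * dvec j i := by
  rw [Finsupp.smul_apply]
  simp

lemma GoodF_poch {N : ℕ} (j : Fin (N+1)) (hj : j ≠ 0) :
    GoodF 0 (fun a0 => qPochL (Xm (0 : Fin (N+1)) 1 * Xm j (-1)) a0) := by
  have happ : ∀ a0 (ν : Fin (N+1) →₀ ℤ),
      (qPochL (Xm (0 : Fin (N+1)) 1 * Xm j (-1)) a0) ν
      = ∑ k ∈ Finset.range (a0+1),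
          (AddMonoidAlgebra.single (k • dvec j) ((ckP k).eval (qq ^ a0)) : LL (N+1)) ν := by
    intro a0 ν
    rw [qPochL_expand]
    rw [AddMonoidAlgebra.coeff_sum, Finsupp.finset_sum_apply]
    refine Finset.sum_congr rfl fun k _ => ?_
    rw [zpow_single, CK_mul_single, mul_one]
  have hinj : ∀ k k' : ℕ, (k • dvec j : Fin (N+1) →₀ ℤ) = k' • dvec j → k = k' := by
    intro k k' h
    have := congrArg (fun f : Fin (N+1) →₀ ℤ => f 0) h
    simp only [smul_dvec_apply, dvec_at0 hj, mul_one] at this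
    exact_mod_cast this
  constructor
  · intro a0 ν hν i
    rw [happ] at hν
    obtain ⟨k, _, hk⟩ := Finset.exists_ne_zero_of_sum_ne_zero hν
    have hsupp := Finsupp.support_single_subset (Finsupp.mem_support_iff.mpr hk)
    simp only [Finset.mem_singleton] at hsupp
    subst hsupp
    rw [smul_dvec_apply, smul_dvec_apply, dvec_at0 hj, mul_one]
    have := dvec_ge j i
    nlinarith [Nat.cast_nonneg (α := ℤ) k]
  · intro μ
    by_cases h : ∃ k : ℕ, μ = k • dvec j
    · obtain ⟨k, rfl⟩ := h
      refine ⟨ckP k, ?_, ?_⟩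
      · intro k' hk'
        apply Polynomial.coeff_eq_zero_of_natDegree_lt
        have := ckP_natDegree_le k
        rw [smul_dvec_apply, dvec_at0 hj, mul_one] at hk'
        omega
      · intro a0
        rw [happ]
        by_cases hka : k < a0 + 1
        · rw [Finset.sum_eq_single_of_mem k (Finset.mem_range.mpr hka)]
          · rw [AddMonoidAlgebra.coeff_single, Finsupp.single_eq_same]
          · intro k' _ hne
            rw [AddMonoidAlgebra.coeff_single_apply]
            split
            · exact absurd (hinj k' k (by assumption)) hne
            · rfl
        · rw [Finset.sum_eq_zero, ckP_eval_zero (by omega)]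
          intro k' hk'
          rw [AddMonoidAlgebra.coeff_single_apply]
          split
          · exact absurd (hinj k' k (by assumption)) (by simp at hk'; omega)
          · rfl
    · refine ⟨0, by simp, fun a0 => ?_⟩
      rw [happ, Finset.sum_eq_zero, Polynomial.eval_zero]
      intro k _
      rw [AddMonoidAlgebra.coeff_single_apply]
      split
      · exact absurd (by rename_i hx; exact hx.symm) (fun hc => h ⟨k, hc⟩)
      · rfl


/-! ### generic hsym lemmas -/

lemma mem_piAntidiag_univ {ι : Type} [Fintype ι] [DecidableEq ι] {c : ι → ℕ} {r : ℕ} :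
    c ∈ Finset.piAntidiag (Finset.univ : Finset ι) r ↔ ∑ i, c i = r := by
  rw [Finset.mem_piAntidiag]
  simp

lemma hsym_zero {N : ℕ} {ι : Type} [Fintype ι] [DecidableEq ι] (y : ι → LL N) :
    hsym y 0 = 1 := by
  rw [hsym, Finset.piAntidiag_zero, Finset.sum_singleton]
  simp

lemma hsym_reindex {N : ℕ} {ι κ : Type} [Fintype ι] [DecidableEq ι] [Fintype κ] [DecidableEq κ]
    (e : ι ≃ κ) (y : κ → LL N) (r : ℕ) : hsym (fun i => y (e i)) r = hsym y r := by
  rw [hsym, hsym]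
  refine Finset.sum_nbij' (fun c => c ∘ e.symm) (fun c => c ∘ e) ?_ ?_ ?_ ?_ ?_
  · intro c hc
    rw [mem_piAntidiag_univ] at hc ⊢
    rw [← hc]
    exact Equiv.sum_comp e.symm c
  · intro c hc
    rw [mem_piAntidiag_univ] at hc ⊢
    rw [← hc]
    exact Equiv.sum_comp e c
  · intro c _
    funext i; simp
  · intro c _
    funext k; simp
  · intro c _
    rw [← Equiv.prod_comp e (fun k => y k ^ ((c ∘ e.symm) k))]
    refine Finset.prod_congr rfl fun i _ => ?_
    simp

lemma hsym_succ {N : ℕ} {ι : Type} [Fintype ι] [DecidableEq ι]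
    (Y : ι ⊕ PUnit → LL N) (r : ℕ) :
    hsym Y (r+1) = hsym (fun i => Y (Sum.inl i)) (r+1) + Y (Sum.inr PUnit.unit) * hsym Y r := by
  classical
  rw [hsym]
  rw [← Finset.sum_filter_add_sum_filter_not _ (fun c => c (Sum.inr PUnit.unit) = 0)]
  congr 1
  · -- part A
    rw [hsym]
    refine Finset.sum_nbij' (fun c => c ∘ Sum.inl) (fun c => Sum.elim c 0) ?_ ?_ ?_ ?_ ?_
    · intro c hc
      rw [Finset.mem_filter, mem_piAntidiag_univ] at hc
      rw [mem_piAntidiag_univ, ← hc.1, Fintype.sum_sum_type]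
      have : ∑ u : PUnit, c (Sum.inr u) = 0 := by
        simp [hc.2]
      rw [this, add_zero]
      rfl
    · intro c hc
      rw [mem_piAntidiag_univ] at hc
      rw [Finset.mem_filter, mem_piAntidiag_univ, Fintype.sum_sum_type]
      refine ⟨by simpa using hc, rfl⟩
    · intro c hc
      rw [Finset.mem_filter] at hc
      funext p
      cases p with
      | inl i => rfl
      | inr u => cases u; exact (hc.2).symm
    · intro c _
      funext i; rfl
    · intro c _
      rw [Fintype.prod_sum_type]
      have : ∀ u : PUnit, Y (Sum.inr u) ^ (c (Sum.inr u)) = 1 := by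
        intro u
        rcases Finset.mem_filter.mp ‹c ∈ _› with ⟨_, h2⟩
        cases u
        rw [h2, pow_zero]
      rw [Finset.prod_congr rfl (fun u _ => this u), Finset.prod_const_one, mul_one]
      rfl
  · -- part B
    rw [hsym, Finset.mul_sum]
    refine (Finset.sum_nbij' (fun c => (fun p => c p + (if p = Sum.inr PUnit.unit then 1 else 0)))
      (fun c => (fun p => c p - (if p = Sum.inr PUnit.unit then 1 else 0))) ?_ ?_ ?_ ?_ ?_).symm
    · intro c hc
      rw [mem_piAntidiag_univ] at hc
      rw [Finset.mem_filter, mem_piAntidiag_univ]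
      constructor
      · rw [Finset.sum_add_distrib, hc, Finset.sum_ite_eq' Finset.univ (Sum.inr PUnit.unit)
          (fun _ => 1)]
        simp
      · simp
    · intro c hc
      rw [Finset.mem_filter, mem_piAntidiag_univ] at hc
      rw [mem_piAntidiag_univ]
      have hpos : 1 ≤ c (Sum.inr PUnit.unit) := Nat.one_le_iff_ne_zero.mpr hc.2
      have : ∑ p, (c p - (if p = Sum.inr PUnit.unit then 1 else 0))
          = (∑ p, c p) - ∑ p : ι ⊕ PUnit, (if p = Sum.inr PUnit.unit then 1 else 0) := by
        rw [eq_tsub_iff_add_eq_of_le, ← Finset.sum_add_distrib]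
        · refine Finset.sum_congr rfl fun p _ => ?_
          split
          · rename_i hp; subst hp; omega
          · omega
        · refine Finset.sum_le_sum fun p _ => ?_
          split
          · rename_i hp; subst hp; omega
          · omega
      rw [this, hc.1, Finset.sum_ite_eq' Finset.univ (Sum.inr PUnit.unit) (fun _ => 1)]
      simp
    · intro c _
      funext p
      dsimp only
      split <;> omega
    · intro c hc
      rw [Finset.mem_filter] at hc
      have hpos : 1 ≤ c (Sum.inr PUnit.unit) := Nat.one_le_iff_ne_zero.mpr hc.2
      funext p
      dsimp only
      split
      · rename_i hp; subst hp; omega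
      · omega
    · intro c _
      have key : ∏ p, Y p ^ (c p + (if p = Sum.inr PUnit.unit then 1 else 0))
          = Y (Sum.inr PUnit.unit) * ∏ p, Y p ^ c p := by
        have : ∀ p, Y p ^ (c p + (if p = Sum.inr PUnit.unit then 1 else 0))
            = Y p ^ c p * Y p ^ (if p = Sum.inr PUnit.unit then 1 else 0) := fun p => pow_add _ _ _
        rw [Finset.prod_congr rfl (fun p _ => this p), Finset.prod_mul_distrib]
        have h2 : ∏ p : ι ⊕ PUnit, Y p ^ (if p = Sum.inr PUnit.unit then 1 else 0)
            = Y (Sum.inr PUnit.unit) := by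
          rw [Finset.prod_eq_single (Sum.inr PUnit.unit)]
          · simp
          · intro p _ hp
            simp [hp]
          · simp
        rw [h2]
        ring
      rw [key]

/-! ### alphabet terms as monomials -/

lemma alphabet_term_single {N : ℕ} (a : Fin N → ℕ) (m : ℕ) (c : ((i : Fin N) × Fin (a i)) → ℕ) :
    ∏ p, (alphabetX a m p) ^ (c p)
      = AddMonoidAlgebra.single (∑ p, c p • Finsupp.single p.1 (1:ℤ))
          (∏ p, (qq ^ ((p.2:ℤ) - (if (p.1:ℕ) < m then 1 else 0))) ^ (c p)) := by
  have h1 : ∀ p : ((i : Fin N) × Fin (a i)), (alphabetX a m p) ^ (c p) =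
      AddMonoidAlgebra.single (c p • Finsupp.single p.1 (1:ℤ))
        ((qq ^ ((p.2:ℤ) - (if (p.1:ℕ) < m then 1 else 0))) ^ (c p)) := by
    intro p
    rw [alphabetX, Xm, CK, AddMonoidAlgebra.single_mul_single, add_zero, one_mul,
      AddMonoidAlgebra.single_pow]
  rw [Finset.prod_congr rfl (fun p _ => h1 p), AddMonoidAlgebra.prod_single]

lemma hsym_alphabet_exists {N : ℕ} (a : Fin N → ℕ) (m : ℕ) (r : ℕ) (μ : Fin N →₀ ℤ)
    (h : (hsym (alphabetX a m) r) μ ≠ 0) :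
    ∃ c : ((i : Fin N) × Fin (a i)) → ℕ, (∑ p, c p = r) ∧ μ = ∑ p, c p • Finsupp.single p.1 (1:ℤ) := by
  rw [hsym, AddMonoidAlgebra.coeff_sum, Finsupp.finset_sum_apply] at h
  obtain ⟨c, hc, hne⟩ := Finset.exists_ne_zero_of_sum_ne_zero h
  rw [alphabet_term_single, AddMonoidAlgebra.coeff_single_apply] at hne
  refine ⟨c, mem_piAntidiag_univ.mp hc, ?_⟩
  by_contra hx
  rw [if_neg (fun hy => hx hy.symm)] at hne
  exact hne rfl

lemma sum_single_coord {N : ℕ} {ι : Type} [Fintype ι] (g : ι → Fin N) (c : ι → ℕ) (j : Fin N) :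
    (∑ p, c p • Finsupp.single (g p) (1:ℤ)) j
      = ∑ p, (if g p = j then (c p : ℤ) else 0) := by
  rw [Finsupp.finset_sum_apply]
  refine Finset.sum_congr rfl fun p _ => ?_
  rw [Finsupp.smul_apply, Finsupp.single_apply]
  split <;> simp

lemma hsym_alphabet_nonneg {N : ℕ} (a : Fin N → ℕ) (m : ℕ) (r : ℕ) (μ : Fin N →₀ ℤ)
    (h : (hsym (alphabetX a m) r) μ ≠ 0) (j : Fin N) : 0 ≤ μ j := by
  obtain ⟨c, _, rfl⟩ := hsym_alphabet_exists a m r μ h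
  rw [sum_single_coord]
  refine Finset.sum_nonneg fun p _ => ?_
  split <;> simp


/-! ### the HH polynomials -/

def vden (s : ℕ) : KK := (∏ i ∈ Finset.range s, (1 - qq^(i+1)))⁻¹

def HHP (s : ℕ) : Polynomial KK := C (vden s) * ∏ i ∈ Finset.range s, (1 - C (qq^i) * X)

lemma HHP_natDegree_le (s : ℕ) : (HHP s).natDegree ≤ s := by
  rw [HHP]
  refine le_trans (Polynomial.natDegree_mul_le) ?_
  rw [Polynomial.natDegree_C, zero_add]
  refine le_trans (Polynomial.natDegree_prod_le _ _) ?_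
  calc ∑ i ∈ Finset.range s, (1 - C (qq ^ i) * X).natDegree
      ≤ ∑ i ∈ Finset.range s, 1 := by
        refine Finset.sum_le_sum fun i _ => ?_
        refine le_trans (Polynomial.natDegree_sub_le _ _) ?_
        simp only [Polynomial.natDegree_one, Nat.max_le, Nat.le_zero]
        exact ⟨by omega, le_trans (Polynomial.natDegree_C_mul_le _ _) (by simp)⟩
  _ = s := by simp

lemma HHP_zero : HHP 0 = C 1 := by
  simp [HHP, vden]

lemma HHP_eval (s t : ℕ) :
    (HHP s).eval (qq ^ t) = vden s * ∏ i ∈ Finset.range s, (1 - qq ^ (i + t)) := by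
  rw [HHP, Polynomial.eval_mul, Polynomial.eval_C, Polynomial.eval_prod]
  congr 1
  refine Finset.prod_congr rfl fun i _ => ?_
  rw [Polynomial.eval_sub, Polynomial.eval_one, Polynomial.eval_mul, Polynomial.eval_C,
    Polynomial.eval_X, ← pow_add]

lemma vden_mul (s : ℕ) : vden s * ∏ i ∈ Finset.range s, (1 - qq^(i+1)) = 1 := by
  rw [vden, inv_mul_cancel₀ (prodden_ne s)]

lemma HHP_eval_one (s : ℕ) : (HHP s).eval (qq ^ 1) = 1 := by
  rw [HHP_eval]
  rw [show (∏ i ∈ Finset.range s, (1 - qq ^ (i + 1))) = ∏ i ∈ Finset.range s, (1 - qq^(i+1))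
    from rfl]
  exact vden_mul s

lemma HHP_eval_zero {s : ℕ} (hs : s ≠ 0) : (HHP s).eval (qq ^ 0) = 0 := by
  rw [HHP_eval]
  have h0 : (0:ℕ) ∈ Finset.range s := Finset.mem_range.mpr (Nat.pos_of_ne_zero hs)
  rw [Finset.prod_eq_zero h0]
  · ring
  · simp

lemma HHP_pascal (s a0 : ℕ) :
    (HHP (s+1)).eval (qq ^ (a0+1)) =
      (HHP (s+1)).eval (qq ^ a0) + qq ^ a0 * (HHP s).eval (qq ^ (a0+1)) := by
  have scalar : vden (s+1) * (1 - qq^(s+(a0+1))) = vden (s+1) * (1 - qq^a0) + qq^a0 * vden s := by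
    have hs1 := one_sub_qq_pow_ne_zero (Nat.succ_ne_zero s)
    have hv : vden (s+1) * (1 - qq^(s+1)) = vden s := by
      apply mul_right_cancel₀ (prodden_ne s)
      have e1 : vden (s+1) * (1 - qq^(s+1)) * ∏ i ∈ Finset.range s, (1 - qq^(i+1))
          = vden (s+1) * ∏ i ∈ Finset.range (s+1), (1 - qq^(i+1)) := by
        rw [Finset.prod_range_succ]; ring
      rw [e1, vden_mul, vden_mul]
    have e2 : (1 - qq^(s+(a0+1))) = (1 - qq^a0) + qq^a0 * (1 - qq^(s+1)) := by
      rw [show s+(a0+1) = a0 + (s+1) by ring, pow_add]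
      ring
    rw [e2, mul_add, ← mul_assoc, mul_comm (vden (s+1)) (qq^a0), mul_assoc, hv]
  rw [HHP_eval, HHP_eval, HHP_eval]
  set P := ∏ i ∈ Finset.range s, (1 - qq^(i+(a0+1))) with hP
  have L1 : ∏ i ∈ Finset.range (s+1), (1 - qq ^ (i+(a0+1))) = P * (1 - qq^(s+(a0+1))) := by
    rw [Finset.prod_range_succ]
  have L2 : ∏ i ∈ Finset.range (s+1), (1 - qq ^ (i+a0)) = P * (1 - qq^a0) := by
    rw [Finset.prod_range_succ']
    congr 1
    · refine Finset.prod_congr rfl fun i _ => ?_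
      rw [show i+1+a0 = i+(a0+1) by ring]
    · rw [show 0+a0 = a0 by ring]
  rw [L1, L2]
  linear_combination P * scalar

/-! ### the hsym alphabet family in a₀ -/

def WH (n : ℕ) (atail : Fin n → ℕ) (m : ℕ) (r a0 : ℕ) : LL (n+1) :=
  hsym (alphabetX (Fin.cons a0 atail) m) r

lemma cons_le (n : ℕ) (atail : Fin n → ℕ) (a0 : ℕ) (i : Fin (n+1)) :
    (Fin.cons a0 atail : Fin (n+1) → ℕ) i ≤ (Fin.cons (a0+1) atail : Fin (n+1) → ℕ) i := by
  refine Fin.cases ?_ ?_ i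
  · simp
  · intro k
    simp

lemma cons_ne_zero_eq (n : ℕ) (b b' : ℕ) (f : Fin n → ℕ) (i : Fin (n+1)) (hi : i ≠ 0) :
    (Fin.cons b f : Fin (n+1) → ℕ) i = (Fin.cons b' f : Fin (n+1) → ℕ) i := by
  rcases Fin.eq_zero_or_eq_succ i with h | ⟨k, rfl⟩
  · exact absurd h hi
  · simp

def consEquiv (n : ℕ) (atail : Fin n → ℕ) (a0 : ℕ) :
    ((i : Fin (n+1)) × Fin ((Fin.cons a0 atail : Fin (n+1) → ℕ) i)) ⊕ PUnit ≃
      ((i : Fin (n+1)) × Fin ((Fin.cons (a0+1) atail : Fin (n+1) → ℕ) i)) where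
  toFun := Sum.elim (fun p => ⟨p.1, Fin.castLE (cons_le n atail a0 p.1) p.2⟩)
    (fun _ => ⟨0, ⟨a0, by rw [Fin.cons_zero]; omega⟩⟩)
  invFun := fun p =>
    if h : (p.2 : ℕ) < (Fin.cons a0 atail : Fin (n+1) → ℕ) p.1 then Sum.inl ⟨p.1, ⟨p.2, h⟩⟩
    else Sum.inr PUnit.unit
  left_inv := by
    intro c
    cases c with
    | inl p =>
      have hlt : ((Fin.castLE (cons_le n atail a0 p.1) p.2 : Fin _) : ℕ) < (Fin.cons a0 atail : Fin (n+1) → ℕ) p.1 := by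
        simpa using p.2.isLt
      simp only [Sum.elim_inl]
      refine (dif_pos hlt).trans ?_
      rfl
    | inr u =>
      cases u
      simp only [Sum.elim_inr]
      refine dif_neg ?_
      simp [Fin.cons_zero]
  right_inv := by
    intro p
    rcases p with ⟨i, j⟩
    by_cases h : (j : ℕ) < (Fin.cons a0 atail : Fin (n+1) → ℕ) i
    · dsimp only
      rw [dif_pos h]
      simp only [Sum.elim_inl]
      rfl
    · dsimp only
      rw [dif_neg h]
      have hi0 : i = 0 := by
        by_contra hi
        have hlt := j.isLt
        have heq : (Fin.cons (a0+1) atail : Fin (n+1) → ℕ) i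
            = (Fin.cons a0 atail : Fin (n+1) → ℕ) i := cons_ne_zero_eq n (a0+1) a0 atail i hi
        omega
      subst hi0
      have hv1 : (Fin.cons (a0+1) atail : Fin (n+1) → ℕ) 0 = a0+1 := Fin.cons_zero _ _
      have hv0 : (Fin.cons a0 atail : Fin (n+1) → ℕ) 0 = a0 := Fin.cons_zero _ _
      have hlt := j.isLt
      have hj : (j : ℕ) = a0 := by omega
      simp only [Sum.elim_inr]
      exact congrArg (fun t => (⟨0, t⟩ : (i : Fin (n+1)) × Fin ((Fin.cons (a0+1) atail : Fin (n+1) → ℕ) i)))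
        (Fin.ext (by simpa using hj.symm))

set_option maxHeartbeats 1000000 in
lemma WH_rec (n : ℕ) (atail : Fin n → ℕ) (m : ℕ) (r a0 : ℕ) :
    WH n atail m (r+1) (a0+1)
      = WH n atail m (r+1) a0
        + (Xm (0 : Fin (n+1)) 1
            * CK (qq ^ ((a0:ℤ) - (if (((0 : Fin (n+1))) : ℕ) < m then 1 else 0))))
          * WH n atail m r (a0+1) := by
  have h1 := hsym_reindex (consEquiv n atail a0) (alphabetX (Fin.cons (a0+1) atail) m) (r+1)
  have h2 := hsym_reindex (consEquiv n atail a0) (alphabetX (Fin.cons (a0+1) atail) m) r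
  have h3 := hsym_succ (fun c => alphabetX (Fin.cons (a0+1) atail) m ((consEquiv n atail a0) c)) r
  show hsym (alphabetX (Fin.cons (a0+1) atail) m) (r+1) = _
  rw [← h1, h3, h2]
  rfl

lemma XmCK_single {n : ℕ} (α : KK) :
    Xm (0 : Fin (n+1)) 1 * CK α = AddMonoidAlgebra.single (Finsupp.single 0 1) α := by
  rw [Xm, CK, AddMonoidAlgebra.single_mul_single, add_zero, one_mul]

lemma LL_one_apply {N : ℕ} (μ : Fin N →₀ ℤ) : (1 : LL N) μ = if μ = 0 then 1 else 0 := by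
  show (AddMonoidAlgebra.single 0 1 : LL N) μ = _
  rw [AddMonoidAlgebra.coeff_single_apply]
  simp [eq_comm]

lemma WH_apply_rec (n : ℕ) (atail : Fin n → ℕ) (m r a0 : ℕ) (μ : Fin (n+1) →₀ ℤ) :
    (WH n atail m (r+1) (a0+1)) μ
      = (WH n atail m (r+1) a0) μ
        + qq ^ ((a0:ℤ) - (if (0:ℕ) < m then 1 else 0))
            * (WH n atail m r (a0+1)) (μ - Finsupp.single 0 1) := by
  rw [WH_rec n atail m r a0, XmCK_single, AddMonoidAlgebra.coeff_add, Finsupp.add_apply,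
    AddMonoidAlgebra.coeff_single_mul_apply,
    neg_add_eq_sub]
  simp only [Fin.val_zero]
  rfl

lemma WH_nonneg (n : ℕ) (atail : Fin n → ℕ) (m r a0 : ℕ) (μ : Fin (n+1) →₀ ℤ)
    (h : (WH n atail m r a0) μ ≠ 0) (j : Fin (n+1)) : 0 ≤ μ j :=
  hsym_alphabet_nonneg _ m r μ h j

lemma WH_zero0 (n : ℕ) (atail : Fin n → ℕ) (m r : ℕ) (μ : Fin (n+1) →₀ ℤ)
    (h0 : 0 < μ 0) : (WH n atail m r 0) μ = 0 := by
  by_contra hne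
  obtain ⟨c, hsum, hμ⟩ := hsym_alphabet_exists (Fin.cons 0 atail) m r μ hne
  have hco : μ 0 = ∑ p : (i : Fin (n+1)) × Fin ((Fin.cons 0 atail : Fin (n+1) → ℕ) i),
      (if p.1 = 0 then (c p : ℤ) else 0) := by
    rw [hμ, sum_single_coord]
  have hz : ∀ p : (i : Fin (n+1)) × Fin ((Fin.cons 0 atail : Fin (n+1) → ℕ) i),
      (if p.1 = 0 then (c p : ℤ) else 0) = 0 := by
    intro p
    split
    · rename_i hp
      exfalso
      have hlt := p.2.isLt
      have hv : (Fin.cons 0 atail : Fin (n+1) → ℕ) p.1 = 0 := by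
        rw [hp]
        exact Fin.cons_zero _ _
      omega
    · rfl
  rw [Finset.sum_congr rfl (fun p _ => hz p), Finset.sum_const_zero] at hco
  omega

def cCst (n : ℕ) (atail : Fin n → ℕ) (m : ℕ) (r : ℕ) (μ : Fin (n+1) →₀ ℤ) : KK :=
  qq ^ ((if 0 < m then 1 else 0 : ℕ) * (μ 0).toNat) * (WH n atail m r 1) μ

lemma cCst_shift (n : ℕ) (atail : Fin n → ℕ) (m r : ℕ) (μ : Fin (n+1) →₀ ℤ)
    (h1 : 1 ≤ μ 0) :
    cCst n atail m (r+1) μ = cCst n atail m r (μ - Finsupp.single 0 1) := by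
  have happ := WH_apply_rec n atail m r 0 μ
  rw [WH_zero0 n atail m (r+1) μ (by omega), zero_add] at happ
  rw [cCst, cCst, happ]
  have hμ' : ((μ - Finsupp.single (0 : Fin (n+1)) 1 : Fin (n+1) →₀ ℤ)) 0 = μ 0 - 1 := by
    rw [Finsupp.sub_apply, Finsupp.single_eq_same]
  rw [hμ']
  have htn : (μ 0 - 1).toNat = (μ 0).toNat - 1 := by omega
  rw [htn]
  have hexp : qq ^ ((if 0 < m then 1 else 0 : ℕ) * (μ 0).toNat)
        * qq ^ ((((0:ℕ)):ℤ) - (if (0:ℕ) < m then 1 else 0))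
      = qq ^ ((if 0 < m then 1 else 0 : ℕ) * ((μ 0).toNat - 1)) := by
    rw [← zpow_natCast qq ((if 0 < m then 1 else 0 : ℕ) * (μ 0).toNat),
      ← zpow_natCast qq ((if 0 < m then 1 else 0 : ℕ) * ((μ 0).toNat - 1)),
      ← zpow_add₀ qq_ne_zero]
    congr 1
    have ht1 : 1 ≤ (μ 0).toNat := by omega
    split_ifs <;> push_cast <;> omega
  linear_combination ((WH n atail m r 1) (μ - Finsupp.single 0 1 : Fin (n+1) →₀ ℤ)) * hexp

set_option maxHeartbeats 1600000 in
lemma WH_claim (n : ℕ) (atail : Fin n → ℕ) (m : ℕ) :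
    ∀ r (μ : Fin (n+1) →₀ ℤ), 0 ≤ μ 0 → ∀ a0,
      qq ^ ((if 0 < m then 1 else 0 : ℕ) * (μ 0).toNat) * (WH n atail m r a0) μ
        = cCst n atail m r μ * (HHP (μ 0).toNat).eval (qq ^ a0) := by
  intro r
  induction r with
  | zero =>
    intro μ h0 a0
    have hone : ∀ b, WH n atail m 0 b = 1 := fun b => hsym_zero _
    rw [cCst, hone, hone]
    by_cases hμ : μ = (0 : Fin (n+1) →₀ ℤ)
    · subst hμ
      simp only [Finsupp.coe_zero, Pi.zero_apply, Int.toNat_zero, HHP_zero]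
      rw [LL_one_apply]
      simp
    · rw [LL_one_apply, if_neg hμ]
      ring
  | succ r IH =>
    intro μ h0
    by_cases hz : μ 0 = 0
    · have hvanish : ∀ b, (WH n atail m r (b+1)) (μ - Finsupp.single 0 1) = 0 := by
        intro b
        by_contra hne
        have := WH_nonneg n atail m r (b+1) _ hne 0
        rw [Finsupp.sub_apply, Finsupp.single_eq_same] at this
        omega
      have hconst : ∀ b, (WH n atail m (r+1) (b+1)) μ = (WH n atail m (r+1) b) μ := by
        intro b
        rw [WH_apply_rec, hvanish, mul_zero, add_zero]
      have hall : ∀ b, (WH n atail m (r+1) b) μ = (WH n atail m (r+1) 1) μ := by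
        intro b
        induction b with
        | zero => exact (hconst 0).symm
        | succ b ih => rw [hconst b, ih]
      intro a0
      rw [hall a0, cCst, hz]
      simp only [Int.toNat_zero, HHP_zero]
      rw [Polynomial.eval_C]
      ring
    · have h1 : (1:ℤ) ≤ μ 0 := by omega
      intro a0
      induction a0 with
      | zero =>
        rw [WH_zero0 n atail m (r+1) μ (by omega), mul_zero,
          HHP_eval_zero (by omega : (μ 0).toNat ≠ 0), mul_zero]
      | succ a0 ih =>
        rw [WH_apply_rec, mul_add, ih]
        have hμ'0 : ((μ - Finsupp.single (0 : Fin (n+1)) 1 : Fin (n+1) →₀ ℤ)) 0 = μ 0 - 1 := by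
          rw [Finsupp.sub_apply, Finsupp.single_eq_same]
        have h0' : (0:ℤ) ≤ ((μ - Finsupp.single (0 : Fin (n+1)) 1 : Fin (n+1) →₀ ℤ)) 0 := by
          rw [hμ'0]; omega
        have houter := IH (μ - Finsupp.single 0 1) h0' (a0+1)
        have htn : (((μ - Finsupp.single (0 : Fin (n+1)) 1 : Fin (n+1) →₀ ℤ)) 0).toNat = (μ 0).toNat - 1 := by
          rw [hμ'0]; omega
        rw [htn] at houter
        have hcomb : qq ^ ((if 0 < m then 1 else 0 : ℕ) * (μ 0).toNat)
              * (qq ^ ((a0:ℤ) - (if (0:ℕ) < m then 1 else 0))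
                  * (WH n atail m r (a0+1)) (μ - Finsupp.single 0 1 : Fin (n+1) →₀ ℤ))
            = qq ^ a0 * (qq ^ ((if 0 < m then 1 else 0 : ℕ) * ((μ 0).toNat - 1))
                * (WH n atail m r (a0+1)) (μ - Finsupp.single 0 1 : Fin (n+1) →₀ ℤ)) := by
          rw [← mul_assoc, ← mul_assoc]
          congr 1
          rw [← zpow_natCast qq ((if 0 < m then 1 else 0 : ℕ) * (μ 0).toNat),
            ← zpow_natCast qq a0,
            ← zpow_natCast qq ((if 0 < m then 1 else 0 : ℕ) * ((μ 0).toNat - 1)),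
            ← zpow_add₀ qq_ne_zero, ← zpow_add₀ qq_ne_zero]
          congr 1
          have ht1 : 1 ≤ (μ 0).toNat := by omega
          split_ifs <;> push_cast <;> omega
        rw [hcomb, houter, ← cCst_shift n atail m r μ h1]
        have hp := HHP_pascal ((μ 0).toNat - 1) a0
        rw [show (μ 0).toNat - 1 + 1 = (μ 0).toNat from by omega] at hp
        linear_combination (-(cCst n atail m (r+1) μ)) * hp

lemma GoodF_WH (n : ℕ) (atail : Fin n → ℕ) (m r : ℕ) :
    GoodF 0 (fun a0 => WH n atail m r a0) := by
  constructor
  · intro a0 ν hν j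
    have h1 := WH_nonneg n atail m r a0 ν hν j
    have h2 := WH_nonneg n atail m r a0 ν hν 0
    push_cast
    omega
  · intro μ
    by_cases h0 : (0:ℤ) ≤ μ 0
    · refine ⟨Polynomial.C ((qq ^ ((if 0 < m then 1 else 0 : ℕ) * (μ 0).toNat))⁻¹
          * cCst n atail m r μ) * HHP (μ 0).toNat, ?_, ?_⟩
      · intro k hk
        apply Polynomial.coeff_eq_zero_of_natDegree_lt
        have hd := HHP_natDegree_le (μ 0).toNat
        have hcm := Polynomial.natDegree_C_mul_le
          ((qq ^ ((if 0 < m then 1 else 0 : ℕ) * (μ 0).toNat))⁻¹ * cCst n atail m r μ)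
          (HHP (μ 0).toNat)
        have hcast : ((μ 0).toNat : ℤ) = μ 0 := Int.toNat_of_nonneg h0
        omega
      · intro a0
        have hcl := WH_claim n atail m r μ h0 a0
        have hne : (qq ^ ((if 0 < m then 1 else 0 : ℕ) * (μ 0).toNat)) ≠ 0 :=
          pow_ne_zero _ qq_ne_zero
        rw [Polynomial.eval_mul, Polynomial.eval_C]
        have hiv : (WH n atail m r a0) μ
            = (qq ^ ((if 0 < m then 1 else 0 : ℕ) * (μ 0).toNat))⁻¹
              * (qq ^ ((if 0 < m then 1 else 0 : ℕ) * (μ 0).toNat) * (WH n atail m r a0) μ) := by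
          rw [← mul_assoc, inv_mul_cancel₀ hne, one_mul]
        rw [hiv, hcl, mul_assoc]
    · refine ⟨0, by simp, fun a0 => ?_⟩
      rw [Polynomial.eval_zero]
      by_contra hne
      have := WH_nonneg n atail m r a0 μ hne 0
      omega

/-! ### splitting the Dyson product -/

def Afun (n : ℕ) (a0 : ℕ) : LL (n+1) :=
  ∏ j ∈ Finset.univ.filter (fun j : Fin (n+1) => (0:Fin (n+1)) < j),
    qPochL (Xm (0 : Fin (n+1)) 1 * Xm j (-1)) a0

def Bfix (n : ℕ) (atail : Fin n → ℕ) : LL (n+1) :=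
  (∏ j ∈ Finset.univ.filter (fun j : Fin (n+1) => (0:Fin (n+1)) < j),
      qPochL (CK qq * Xm j 1 * Xm (0 : Fin (n+1)) (-1)) ((Fin.cons 0 atail : Fin (n+1) → ℕ) j))
  * ∏ p ∈ Finset.univ.filter
      (fun p : Fin (n+1) × Fin (n+1) => (0:Fin (n+1)) < p.1 ∧ p.1 < p.2),
      (qPochL (Xm p.1 1 * Xm p.2 (-1)) ((Fin.cons 0 atail : Fin (n+1) → ℕ) p.1)
        * qPochL (CK qq * Xm p.2 1 * Xm p.1 (-1)) ((Fin.cons 0 atail : Fin (n+1) → ℕ) p.2))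

lemma dyson_split (n : ℕ) (atail : Fin n → ℕ) (a0 : ℕ) :
    dysonProd (Fin.cons a0 atail : Fin (n+1) → ℕ) = Afun n a0 * Bfix n atail := by
  classical
  rw [dysonProd]
  rw [← Finset.prod_filter_mul_prod_filter_not
      (Finset.univ.filter (fun p : Fin (n+1) × Fin (n+1) => p.1 < p.2)) (fun p => p.1 = 0)]
  have hp1 : ∏ p ∈ (Finset.univ.filter
        (fun p : Fin (n+1) × Fin (n+1) => p.1 < p.2)).filter (fun p => p.1 = 0),
        (qPochL (Xm p.1 1 * Xm p.2 (-1)) ((Fin.cons a0 atail : Fin (n+1) → ℕ) p.1)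
          * qPochL (CK qq * Xm p.2 1 * Xm p.1 (-1)) ((Fin.cons a0 atail : Fin (n+1) → ℕ) p.2))
      = ∏ j ∈ Finset.univ.filter (fun j : Fin (n+1) => (0:Fin (n+1)) < j),
        (qPochL (Xm (0 : Fin (n+1)) 1 * Xm j (-1)) a0
          * qPochL (CK qq * Xm j 1 * Xm (0 : Fin (n+1)) (-1))
              ((Fin.cons 0 atail : Fin (n+1) → ℕ) j)) := by
    refine Finset.prod_nbij' (fun p => p.2) (fun j => ((0 : Fin (n+1)), j)) ?_ ?_ ?_ ?_ ?_
    · intro p hp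
      simp only [Finset.mem_filter, Finset.mem_univ, true_and] at hp ⊢
      rcases hp with ⟨hlt, h0⟩
      rw [← h0]
      exact hlt
    · intro j hj
      simp only [Finset.mem_filter, Finset.mem_univ, true_and] at hj ⊢
      exact ⟨hj, trivial⟩
    · intro p hp
      simp only [Finset.mem_filter] at hp
      exact Prod.ext (hp.2).symm rfl
    · intro j _
      rfl
    · intro p hp
      simp only [Finset.mem_filter, Finset.mem_univ, true_and] at hp
      rcases hp with ⟨hlt, h0⟩
      have hne : p.2 ≠ 0 := by
        intro hc
        rw [h0, hc] at hlt
        exact lt_irrefl _ hlt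
      have ha2 : (Fin.cons a0 atail : Fin (n+1) → ℕ) p.2
          = (Fin.cons 0 atail : Fin (n+1) → ℕ) p.2 := cons_ne_zero_eq n a0 0 atail p.2 hne
      have ha1 : (Fin.cons a0 atail : Fin (n+1) → ℕ) p.1 = a0 := by
        rw [h0]; exact Fin.cons_zero _ _
      rw [ha1, ha2, h0]
  have hp2 : ∏ p ∈ (Finset.univ.filter
        (fun p : Fin (n+1) × Fin (n+1) => p.1 < p.2)).filter (fun p => ¬ p.1 = 0),
        (qPochL (Xm p.1 1 * Xm p.2 (-1)) ((Fin.cons a0 atail : Fin (n+1) → ℕ) p.1)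
          * qPochL (CK qq * Xm p.2 1 * Xm p.1 (-1)) ((Fin.cons a0 atail : Fin (n+1) → ℕ) p.2))
      = ∏ p ∈ Finset.univ.filter
          (fun p : Fin (n+1) × Fin (n+1) => (0:Fin (n+1)) < p.1 ∧ p.1 < p.2),
          (qPochL (Xm p.1 1 * Xm p.2 (-1)) ((Fin.cons 0 atail : Fin (n+1) → ℕ) p.1)
            * qPochL (CK qq * Xm p.2 1 * Xm p.1 (-1)) ((Fin.cons 0 atail : Fin (n+1) → ℕ) p.2)) := by
    rw [Finset.filter_filter]
    have hsets : Finset.univ.filter (fun p : Fin (n+1) × Fin (n+1) => p.1 < p.2 ∧ ¬ p.1 = 0)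
        = Finset.univ.filter (fun p : Fin (n+1) × Fin (n+1) => (0:Fin (n+1)) < p.1 ∧ p.1 < p.2) := by
      ext p
      simp only [Finset.mem_filter, Finset.mem_univ, true_and]
      rw [Fin.pos_iff_ne_zero]
      tauto
    rw [hsets]
    refine Finset.prod_congr rfl fun p hp => ?_
    simp only [Finset.mem_filter, Finset.mem_univ, true_and] at hp
    have h1 : p.1 ≠ 0 := by
      rw [← Fin.pos_iff_ne_zero]; exact hp.1
    have h2 : p.2 ≠ 0 := by
      rw [← Fin.pos_iff_ne_zero]; exact lt_trans hp.1 hp.2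
    rw [cons_ne_zero_eq n a0 0 atail p.1 h1, cons_ne_zero_eq n a0 0 atail p.2 h2]
  rw [hp1, hp2, Finset.prod_mul_distrib, Afun, Bfix]
  ring

/-! ### lower bounds for the fixed factor -/

lemma lbx0_CK {N : ℕ} (x : KK) : lbx0 (CK x : LL (N+1)) 0 := by
  rw [CK]
  exact lbx0_single (by simp)

lemma lbx0_qPochL {N : ℕ} (z : LL (N+1)) (d : ℤ) (hd : d ≤ 0) (hz : lbx0 z d) (c : ℕ) :
    lbx0 (qPochL z c) ((c:ℤ) * d) := by
  rw [qPochL]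
  have := lbx0_prod (Finset.range c) (fun i => 1 - z * CK (qq ^ i)) (fun _ => d)
    (fun i _ => lbx0_sub (lbx0_mono lbx0_one hd)
      (by simpa using lbx0_mul hz (lbx0_CK (qq ^ i))))
  simpa [Finset.sum_const, Finset.card_range, mul_comm] using this

lemma XmXm_single {N : ℕ} (i j : Fin (N+1)) (e f : ℤ) :
    Xm i e * Xm j f = AddMonoidAlgebra.single (Finsupp.single i e + Finsupp.single j f) (1:KK) := by
  rw [Xm, Xm, AddMonoidAlgebra.single_mul_single, one_mul]

lemma CKXmXm_single {N : ℕ} (i j : Fin (N+1)) (e f : ℤ) :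
    CK qq * Xm i e * Xm j f
      = AddMonoidAlgebra.single (Finsupp.single i e + Finsupp.single j f) qq := by
  rw [CK, Xm, Xm, AddMonoidAlgebra.single_mul_single, AddMonoidAlgebra.single_mul_single,
    zero_add, mul_one, mul_one]

lemma sum_cons_filter (n : ℕ) (atail : Fin n → ℕ) :
    ∑ j ∈ Finset.univ.filter (fun j : Fin (n+1) => (0:Fin (n+1)) < j),
      (((Fin.cons 0 atail : Fin (n+1) → ℕ) j : ℕ) : ℤ) = ∑ i, (atail i : ℤ) := by
  classical
  have hsplit := Finset.sum_filter_add_sum_filter_not (Finset.univ : Finset (Fin (n+1)))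
    (fun j => (0:Fin (n+1)) < j) (fun j => (((Fin.cons 0 atail : Fin (n+1) → ℕ) j : ℕ) : ℤ))
  have huniv : ∑ j : Fin (n+1), (((Fin.cons 0 atail : Fin (n+1) → ℕ) j : ℕ) : ℤ)
      = ∑ i, (atail i : ℤ) := by
    rw [Fin.sum_univ_succ]
    simp
  have hnot : ∑ j ∈ Finset.univ.filter (fun j : Fin (n+1) => ¬ (0:Fin (n+1)) < j),
      (((Fin.cons 0 atail : Fin (n+1) → ℕ) j : ℕ) : ℤ) = 0 := by
    have : Finset.univ.filter (fun j : Fin (n+1) => ¬ (0:Fin (n+1)) < j) = {0} := by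
      ext j
      simp only [Finset.mem_filter, Finset.mem_univ, true_and, Finset.mem_singleton]
      rw [Fin.pos_iff_ne_zero]
      tauto
    rw [this, Finset.sum_singleton]
    simp
  omega

lemma lbx0_Bfix (n : ℕ) (atail : Fin n → ℕ) :
    lbx0 (Bfix n atail) (-(∑ i, (atail i : ℤ))) := by
  rw [Bfix]
  have h1 : lbx0 (∏ j ∈ Finset.univ.filter (fun j : Fin (n+1) => (0:Fin (n+1)) < j),
      qPochL (CK qq * Xm j 1 * Xm (0 : Fin (n+1)) (-1)) ((Fin.cons 0 atail : Fin (n+1) → ℕ) j))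
      (∑ j ∈ Finset.univ.filter (fun j : Fin (n+1) => (0:Fin (n+1)) < j),
        ((((Fin.cons 0 atail : Fin (n+1) → ℕ) j : ℕ) : ℤ) * (-1))) := by
    refine lbx0_prod _ _ _ fun j hj => ?_
    refine lbx0_qPochL _ (-1) (by omega) ?_ _
    rw [CKXmXm_single]
    refine lbx0_single ?_
    simp only [Finset.mem_filter, Finset.mem_univ, true_and] at hj
    have hne : j ≠ 0 := by rw [← Fin.pos_iff_ne_zero]; exact hj
    rw [Finsupp.add_apply, Finsupp.single_eq_same, Finsupp.single_apply]
    simp [hne]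
  have h2 : lbx0 (∏ p ∈ Finset.univ.filter
      (fun p : Fin (n+1) × Fin (n+1) => (0:Fin (n+1)) < p.1 ∧ p.1 < p.2),
      (qPochL (Xm p.1 1 * Xm p.2 (-1)) ((Fin.cons 0 atail : Fin (n+1) → ℕ) p.1)
        * qPochL (CK qq * Xm p.2 1 * Xm p.1 (-1)) ((Fin.cons 0 atail : Fin (n+1) → ℕ) p.2)))
      (∑ _p ∈ Finset.univ.filter
      (fun p : Fin (n+1) × Fin (n+1) => (0:Fin (n+1)) < p.1 ∧ p.1 < p.2), (0:ℤ)) := by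
    refine lbx0_prod _ _ _ fun p hp => ?_
    simp only [Finset.mem_filter, Finset.mem_univ, true_and] at hp
    have h1' : p.1 ≠ 0 := by rw [← Fin.pos_iff_ne_zero]; exact hp.1
    have h2' : p.2 ≠ 0 := by rw [← Fin.pos_iff_ne_zero]; exact lt_trans hp.1 hp.2
    have e1 : lbx0 (qPochL (Xm p.1 1 * Xm p.2 (-1)) ((Fin.cons 0 atail : Fin (n+1) → ℕ) p.1))
        ((((Fin.cons 0 atail : Fin (n+1) → ℕ) p.1 : ℕ):ℤ) * 0) := by
      refine lbx0_qPochL _ 0 le_rfl ?_ _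
      rw [XmXm_single]
      refine lbx0_single ?_
      rw [Finsupp.add_apply, Finsupp.single_apply, Finsupp.single_apply]
      simp [h1', h2']
    have e2 : lbx0 (qPochL (CK qq * Xm p.2 1 * Xm p.1 (-1))
        ((Fin.cons 0 atail : Fin (n+1) → ℕ) p.2))
        ((((Fin.cons 0 atail : Fin (n+1) → ℕ) p.2 : ℕ):ℤ) * 0) := by
      refine lbx0_qPochL _ 0 le_rfl ?_ _
      rw [CKXmXm_single]
      refine lbx0_single ?_
      rw [Finsupp.add_apply, Finsupp.single_apply, Finsupp.single_apply]
      simp [h1', h2']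
    have := lbx0_mul e1 e2
    simpa using this
  have := lbx0_mul h1 h2
  refine lbx0_mono this ?_
  rw [Finset.sum_const_zero, add_zero]
  have := sum_cons_filter n atail
  have hrw : ∑ j ∈ Finset.univ.filter (fun j : Fin (n+1) => (0:Fin (n+1)) < j),
      ((((Fin.cons 0 atail : Fin (n+1) → ℕ) j : ℕ) : ℤ) * (-1))
      = -(∑ j ∈ Finset.univ.filter (fun j : Fin (n+1) => (0:Fin (n+1)) < j),
        (((Fin.cons 0 atail : Fin (n+1) → ℕ) j : ℕ) : ℤ)) := by
    rw [← Finset.sum_neg_distrib]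
    exact Finset.sum_congr rfl fun j _ => by ring
  omega

lemma lbx0_Xprod (n : ℕ) (v : Fin (n+1) → ℤ) :
    lbx0 (∏ i, Xm i (-(v i)) : LL (n+1)) (-(v 0)) := by
  have hps : (∏ i, Xm i (-(v i)) : LL (n+1))
      = AddMonoidAlgebra.single (∑ i, Finsupp.single i (-(v i))) 1 := by
    rw [show (∏ i, Xm i (-(v i)) : LL (n+1))
        = ∏ i, AddMonoidAlgebra.single (Finsupp.single i (-(v i))) (1:KK) from rfl]
    rw [AddMonoidAlgebra.prod_single]
    simp
  rw [hps]
  refine lbx0_single ?_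
  rw [Finsupp.finset_sum_apply]
  have : ∀ i : Fin (n+1), (Finsupp.single i (-(v i))) (0 : Fin (n+1))
      = if i = 0 then -(v i) else 0 := by
    intro i
    rw [Finsupp.single_apply]
  rw [Finset.sum_congr rfl (fun i _ => this i), Finset.sum_ite_eq' Finset.univ (0 : Fin (n+1))]
  simp

/-! ### final assembly -/

lemma GoodF_Afun (n : ℕ) : GoodF 0 (fun a0 => Afun n a0) := by
  have h := GoodF.prod (Finset.univ.filter (fun j : Fin (n+1) => (0:Fin (n+1)) < j))
    (fun j => fun a0 => qPochL (Xm (0 : Fin (n+1)) 1 * Xm j (-1)) a0)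
    (fun j hj => GoodF_poch j (by
      simp only [Finset.mem_filter, Finset.mem_univ, true_and] at hj
      rw [← Fin.pos_iff_ne_zero]; exact hj))
  exact h

lemma GoodF_hPart (n : ℕ) (atail : Fin n → ℕ) (m : ℕ) (lam : List ℕ) :
    GoodF 0 (fun a0 => hPart (Fin.cons a0 atail) m lam) := by
  induction lam with
  | nil =>
    have he : (fun a0 : ℕ => hPart (Fin.cons a0 atail : Fin (n+1) → ℕ) m ([] : List ℕ))
        = fun _ => (1 : LL (n+1)) := by
      funext a0
      rw [hPart]
      simp
    rw [he]
    exact GoodF.one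
  | cons r lam ih =>
    have h := (GoodF_WH n atail m r).mul ih
    have he : (fun a0 : ℕ => hPart (Fin.cons a0 atail : Fin (n+1) → ℕ) m (r :: lam))
        = fun a0 => WH n atail m r a0 * hPart (Fin.cons a0 atail : Fin (n+1) → ℕ) m lam := by
      funext a0
      rw [hPart, hPart, List.map_cons, List.prod_cons]
      rfl
    rw [he]
    exact h

lemma Dterm_factored (n : ℕ) (atail : Fin n → ℕ) (v : Fin (n+1) → ℤ) (lam : List ℕ)
    (m a0 : ℕ) :
    Dterm (n+1) v lam (Fin.cons a0 atail) m
      = CT ((hPart (Fin.cons a0 atail : Fin (n+1) → ℕ) m lam * Afun n a0)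
          * ((∏ i, Xm i (-(v i))) * Bfix n atail)) := by
  rw [Dterm, dyson_split]
  apply congrArg CT
  ring

lemma CT_pair {N : ℕ} (f g : LL N) : CT (f * g) = ∑ ν ∈ g.coeff.support, g ν * f (0 - ν) := by
  rw [CT, mul_comm, mul_apply_left]

end QDyson

/-- **Proposition 5.3 (polynomiality).** For fixed non-negative integers `a_1,…,a_n`,
if `-v_0 ≤ a_1+⋯+a_n` then `D_{v,λ}((a_0,a_1,…,a_n),m)` is a polynomial in `q^{a_0}` of
degree at most `a_1+⋯+a_n+v_0`; if `-v_0 > a_1+⋯+a_n` then it vanishes identically. -/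
theorem qDyson_polynomiality (n : ℕ) (atail : Fin n → ℕ) (v : Fin (n+1) → ℤ)
    (lam : List ℕ) (hpart : lam.Pairwise (· ≥ ·)) (hsum : (lam.sum : ℤ) = ∑ i, v i)
    (m : ℕ) (hm : m ≤ n+1) :
    ((-(v 0) ≤ (∑ i, (atail i : ℤ))) →
      ∃ P : Polynomial KK, (P.natDegree : ℤ) ≤ (∑ i, (atail i : ℤ)) + v 0 ∧
        ∀ a0 : ℕ, Dterm (n+1) v lam (Fin.cons a0 atail) m = P.eval (qq ^ a0)) ∧
    (((∑ i, (atail i : ℤ)) < -(v 0)) →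
      ∀ a0 : ℕ, Dterm (n+1) v lam (Fin.cons a0 atail) m = 0) := by
  classical
  open QDyson in
  have hGoodW : QDyson.GoodF 0
      (fun a0 => hPart (Fin.cons a0 atail : Fin (n+1) → ℕ) m lam * QDyson.Afun n a0) := by
    have := (QDyson.GoodF_hPart n atail m lam).mul (QDyson.GoodF_Afun n)
    simpa using this
  set G : LL (n+1) := (∏ i, Xm i (-(v i))) * QDyson.Bfix n atail with hG
  have hGlb : QDyson.lbx0 G (-(v 0) + -(∑ i, (atail i : ℤ))) :=
    QDyson.lbx0_mul (QDyson.lbx0_Xprod n v) (QDyson.lbx0_Bfix n atail)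
  constructor
  · intro hle
    choose Q hQ1 hQ2 using hGoodW.coeffs
    refine ⟨∑ ν ∈ G.coeff.support, Polynomial.C (G ν) * Q (0 - ν), ?_, ?_⟩
    · have hD0 : (0:ℤ) ≤ (∑ i, (atail i : ℤ)) + v 0 := by omega
      have hbound : ∀ ν ∈ G.coeff.support, (Polynomial.C (G ν) * Q (0 - ν)).natDegree
          ≤ ((∑ i, (atail i : ℤ)) + v 0).toNat := by
        intro ν hν
        refine le_trans (Polynomial.natDegree_C_mul_le _ _) ?_
        have hν0 := hGlb ν hν
        have hw : ((0 - ν : Fin (n+1) →₀ ℤ)) 0 = -(ν 0) := by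
          rw [Finsupp.sub_apply]
          simp
        by_cases hcase : (0:ℤ) ≤ ((0 - ν : Fin (n+1) →₀ ℤ)) 0
        · have h1 : (Q (0 - ν)).natDegree ≤ (((0 - ν : Fin (n+1) →₀ ℤ)) 0).toNat := by
            refine Polynomial.natDegree_le_iff_coeff_eq_zero.mpr fun k hk => ?_
            refine hQ1 (0 - ν) k ?_
            omega
          refine le_trans h1 ?_
          omega
        · have h1 : Q (0 - ν) = 0 := by
            ext k
            rw [Polynomial.coeff_zero]
            refine hQ1 (0 - ν) k ?_
            omega
          rw [h1]
          simp
      have h2 := Polynomial.natDegree_sum_le_of_forall_le G.coeff.support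
        (fun ν => Polynomial.C (G ν) * Q (0 - ν)) hbound
      have h3 : ((∑ ν ∈ G.coeff.support, Polynomial.C (G ν) * Q (0 - ν)).natDegree : ℤ)
          ≤ ((((∑ i, (atail i : ℤ)) + v 0).toNat : ℕ) : ℤ) := by exact_mod_cast h2
      omega
    · intro a0
      rw [QDyson.Dterm_factored n atail v lam m a0, QDyson.CT_pair, Polynomial.eval_finset_sum]
      refine Finset.sum_congr rfl fun ν _ => ?_
      rw [Polynomial.eval_mul, Polynomial.eval_C, hQ2 (0 - ν) a0]
  · intro hlt a0
    rw [QDyson.Dterm_factored n atail v lam m a0]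
    have hWlb : QDyson.lbx0
        (hPart (Fin.cons a0 atail : Fin (n+1) → ℕ) m lam * QDyson.Afun n a0) 0 := by
      intro ν hν
      have := hGoodW.zero_le a0 ν (Finsupp.mem_support_iff.mp hν)
      omega
    refine QDyson.lbx0_CT (QDyson.lbx0_mul hWlb hGlb) ?_
    omega

end
end

section
/- Let n ≥ 1, let L(x_1,…,x_n) be a Laurent polynomial in x_1,…,x_n with coefficients in ℚ(q), let a_1,…,a_n be fixed non-negative integers, and let t be an integer. If t ≤ a_1+⋯+a_n, then there exists a polynomial P with coefficients in ℚ(q), of degree at most a_1+⋯+a_n−t, such that for every non-negative integer a_0, CT_x x_0^{t} · L(x_1,…,x_n) · ∏_{0≤i<j≤n}(x_i/x_j;q)_{a_i}(q x_j/x_i;q)_{a_j} = P(q^{a_0}). If t > a_1+⋯+a_n, then this constant term vanishes for every non-negative integer a_0. -/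
/- Laurent polynomials in `N` variables `x_0, …, x_{N-1}` over `K = ℚ(q)`,
constant-term extraction, the q-Dyson product, the symmetric-function data and
the constant term `D_{v,λ}(a,m)` from the paper. -/

noncomputable section

/-- Embedding of Laurent polynomials in `x_1,…,x_n` into Laurent polynomials in
`x_0,x_1,…,x_n` (shifting variable indices by one). -/
def embedTail (n : ℕ) (f : AddMonoidAlgebra KK (Fin n →₀ ℤ)) : LL (n+1) :=
  AddMonoidAlgebra.ofCoeff (Finsupp.mapDomain (Finsupp.mapDomain Fin.succ) f.coeff)

lemma q_pow_ne_one {k : ℕ} (hk : k ≠ 0) : (qq : KK) ^ k ≠ 1 := by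
  intro h
  have h2 : algebraMap (Polynomial ℚ) (RatFunc ℚ) (Polynomial.X ^ k) =
      algebraMap (Polynomial ℚ) (RatFunc ℚ) 1 := by
    simpa [qq, RatFunc.algebraMap_X] using h
  have h3 := RatFunc.algebraMap_injective ℚ h2
  have := congrArg Polynomial.natDegree h3
  simp [Polynomial.natDegree_X_pow] at this
  exact hk this

lemma q_ne_zero : (qq : KK) ≠ 0 := RatFunc.X_ne_zero

lemma one_sub_q_pow_ne_zero {k : ℕ} (hk : k ≠ 0) : (1 : KK) - qq ^ k ≠ 0 := by
  intro h
  exact q_pow_ne_one hk (by linear_combination -h)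

def Ac : ℕ → KK
  | 0 => 1
  | m+1 => Ac m * (-(qq ^ m)) / (1 - qq ^ (m+1))

def cpoly (k : ℕ) : Polynomial KK :=
  Polynomial.C (Ac k) *
    ∏ i ∈ Finset.range k, (1 - Polynomial.C (qq ^ ((i : ℤ) + 1 - k)) * Polynomial.X)

lemma cpoly_zero : cpoly 0 = 1 := by simp [cpoly, Ac]

lemma cpoly_natDegree_le (k : ℕ) : (cpoly k).natDegree ≤ k := by
  unfold cpoly
  refine le_trans (Polynomial.natDegree_mul_le) ?_
  simp only [Polynomial.natDegree_C, zero_add]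
  refine le_trans (Polynomial.natDegree_prod_le _ _) ?_
  refine le_trans (Finset.sum_le_sum (fun i _ => ?_)) (by simp : ∑ _i ∈ Finset.range k, 1 ≤ k)
  refine le_trans (Polynomial.natDegree_sub_le _ _) ?_
  exact by simpa using Polynomial.natDegree_C_mul_le (qq ^ ((i : ℤ) + 1 - k)) Polynomial.X

lemma cpoly_eval_one {k : ℕ} (hk : k ≠ 0) : (cpoly k).eval 1 = 0 := by
  obtain ⟨m, rfl⟩ := Nat.exists_eq_succ_of_ne_zero hk
  unfold cpoly
  rw [Polynomial.eval_mul, Polynomial.eval_prod]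
  apply mul_eq_zero_of_right
  apply Finset.prod_eq_zero (Finset.self_mem_range_succ m)
  simp

lemma cpoly_eval (k : ℕ) (x : KK) :
    (cpoly k).eval x = Ac k * ∏ i ∈ Finset.range k, (1 - qq ^ ((i : ℤ) + 1 - k) * x) := by
  simp [cpoly, Polynomial.eval_prod]

lemma Ac_identity (m : ℕ) (s : KK) :
    Ac (m+1) * (1 - qq * s) = Ac (m+1) * (1 - qq ^ (-(m:ℤ)) * s) - s * Ac m := by
  have h1 : (1:KK) - qq ^ (m+1) ≠ 0 := one_sub_q_pow_ne_zero (Nat.succ_ne_zero m)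
  have h0 : (qq:KK) ≠ 0 := q_ne_zero
  have hpow : (qq:KK) ^ m ≠ 0 := pow_ne_zero _ h0
  rw [zpow_neg, zpow_natCast, show Ac (m+1) = Ac m * (-(qq ^ m)) / (1 - qq ^ (m+1)) from rfl]
  field_simp
  ring

lemma cpoly_funcEq (m : ℕ) (s : KK) :
    (cpoly (m+1)).eval (qq * s) = (cpoly (m+1)).eval s - s * (cpoly m).eval s := by
  have h0 : (qq:KK) ≠ 0 := q_ne_zero
  set Q : KK := ∏ i ∈ Finset.range m, (1 - qq ^ ((i : ℤ) + 1 - m) * s) with hQ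
  have hfac : ∀ i : ℕ, (1 - qq ^ ((i:ℤ) + 1 - ((m+1 : ℕ):ℤ)) * (qq * s))
      = 1 - qq ^ ((i:ℤ) + 1 - (m:ℤ)) * s := by
    intro i
    have : qq ^ ((i:ℤ) + 1 - ((m+1 : ℕ):ℤ)) * (qq * s) = qq ^ ((i:ℤ) + 1 - (m:ℤ)) * s := by
      rw [← mul_assoc, ← zpow_add_one₀ h0]
      congr 2
      push_cast; ring
    rw [this]
  have e1 : (cpoly (m+1)).eval (qq * s) = Ac (m+1) * ((1 - qq * s) * Q) := by
    rw [cpoly_eval, Finset.prod_congr rfl (fun i _ => hfac i), Finset.prod_range_succ]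
    have : ((m:ℤ) + 1 - (m:ℤ)) = 1 := by ring
    rw [this, zpow_one]
    ring
  have e2 : (cpoly (m+1)).eval s = Ac (m+1) * ((1 - qq ^ (-(m:ℤ)) * s) * Q) := by
    rw [cpoly_eval, Finset.prod_range_succ']
    have h2 : ∀ i : ℕ, (1 - qq ^ (((i+1 : ℕ):ℤ) + 1 - ((m+1 : ℕ):ℤ)) * s)
        = 1 - qq ^ ((i:ℤ) + 1 - (m:ℤ)) * s := by
      intro i; congr 2; push_cast; ring
    rw [Finset.prod_congr rfl (fun i _ => h2 i)]
    have h3 : (((0:ℕ):ℤ) + 1 - ((m+1 : ℕ):ℤ)) = -(m:ℤ) := by push_cast; ring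
    rw [h3]
    ring
  have e3 : (cpoly m).eval s = Ac m * Q := by rw [cpoly_eval]
  rw [e1, e2, e3]
  have h4 := Ac_identity m s
  calc Ac (m+1) * ((1 - qq * s) * Q) = (Ac (m+1) * (1 - qq * s)) * Q := by ring
    _ = (Ac (m+1) * (1 - qq ^ (-(m:ℤ)) * s) - s * Ac m) * Q := by rw [h4]
    _ = _ := by ring

/-- `(z;q)_a` as a univariate polynomial in `z`. -/
def Pz (a : ℕ) : Polynomial KK :=
  ∏ i ∈ Finset.range a, (1 - Polynomial.C ((qq : KK) ^ i) * Polynomial.X)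

lemma Pz_coeff (a k : ℕ) : (Pz a).coeff k = (cpoly k).eval (qq ^ a) := by
  induction a generalizing k with
  | zero =>
    simp only [Pz, Finset.range_zero, Finset.prod_empty, pow_zero]
    cases k with
    | zero => simp [cpoly_zero]
    | succ m =>
      rw [Polynomial.coeff_one, cpoly_eval_one (Nat.succ_ne_zero m)]
      simp
  | succ a ih =>
    have hsplit : Pz (a+1) = Pz a - Polynomial.C ((qq:KK) ^ a) * (Polynomial.X * Pz a) := by
      rw [Pz, Finset.prod_range_succ, ← Pz]
      ring
    rw [hsplit, Polynomial.coeff_sub, Polynomial.coeff_C_mul]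
    cases k with
    | zero =>
      rw [Polynomial.mul_coeff_zero]
      simp only [Polynomial.coeff_X_zero, zero_mul, mul_zero, sub_zero]
      rw [ih 0, cpoly_zero]
      simp
    | succ m =>
      rw [Polynomial.coeff_X_mul, ih (m+1), ih m]
      have : (qq : KK) ^ (a+1) = qq * qq ^ a := by ring
      rw [this, cpoly_funcEq m (qq ^ a)]

namespace CTAux
open AddMonoidAlgebra Polynomial Finset

variable {N : ℕ}

lemma CK_eq_algebraMap (c : KK) : (CK c : LL N) = algebraMap KK (LL N) c := by
  simp [CK, AddMonoidAlgebra.coe_algebraMap]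

lemma qPochL_eq_aeval (z : LL N) (a : ℕ) :
    qPochL z a = Polynomial.aeval z (Pz a) := by
  rw [Pz, map_prod]
  refine Finset.prod_congr rfl (fun i _ => ?_)
  rw [map_sub, map_one, map_mul, Polynomial.aeval_C, Polynomial.aeval_X, CK_eq_algebraMap]
  ring

lemma qPochL_single_mul_apply (v : Fin N →₀ ℤ) (a : ℕ) (F : LL N) (μ : Fin N →₀ ℤ) :
    (qPochL (AddMonoidAlgebra.single v 1) a * F).coeff μ
      = ∑ k ∈ Finset.range ((Pz a).natDegree + 1),
          (cpoly k).eval (qq ^ a) * F.coeff (μ - k • v) := by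
  rw [qPochL_eq_aeval, Polynomial.aeval_eq_sum_range, Finset.sum_mul, AddMonoidAlgebra.coeff_sum, Finset.sum_apply']
  refine Finset.sum_congr rfl (fun k _ => ?_)
  rw [smul_mul_assoc, AddMonoidAlgebra.coeff_smul, Finsupp.smul_apply, AddMonoidAlgebra.single_pow, one_pow,
      AddMonoidAlgebra.coeff_single_mul_apply, ← Pz_coeff, smul_eq_mul, one_mul, neg_add_eq_sub]

lemma keyB {ι : Type} [DecidableEq ι] (s : Finset ι) (v : ι → (Fin N →₀ ℤ)) (i0 : Fin N)
    (hv : ∀ j ∈ s, (v j) i0 = 1) (μ : Fin N →₀ ℤ) :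
    ∃ P : Polynomial KK, (P = 0 ∨ (P.natDegree : ℤ) ≤ μ i0) ∧
      ∀ a : ℕ, ((∏ j ∈ s, qPochL (AddMonoidAlgebra.single (v j) 1) a) : LL N).coeff μ
          = P.eval (qq ^ a) := by
  induction s using Finset.cons_induction generalizing μ with
  | empty =>
    simp only [Finset.prod_empty]
    by_cases hμ : (0 : Fin N →₀ ℤ) = μ
    · refine ⟨1, Or.inr ?_, fun a => ?_⟩
      · rw [Polynomial.natDegree_one]
        rw [← hμ]
        simp
      · rw [AddMonoidAlgebra.one_def, AddMonoidAlgebra.coeff_single, Finsupp.single_apply, if_pos hμ, Polynomial.eval_one]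
    · refine ⟨0, Or.inl rfl, fun a => ?_⟩
      rw [AddMonoidAlgebra.one_def, AddMonoidAlgebra.coeff_single, Finsupp.single_apply, if_neg hμ, Polynomial.eval_zero]
  | cons j s hjs ih =>
    have hvj : (v j) i0 = 1 := hv j (Finset.mem_cons_self j s)
    have hv' : ∀ i ∈ s, (v i) i0 = 1 := fun i hi => hv i (Finset.mem_cons_of_mem hi)
    have H : ∀ k : ℕ, ∃ P : Polynomial KK, (P = 0 ∨ (P.natDegree : ℤ) ≤ (μ - k • v j) i0) ∧
        ∀ a : ℕ, ((∏ i ∈ s, qPochL (AddMonoidAlgebra.single (v i) 1) a) : LL N).coeff (μ - k • v j)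
            = P.eval (qq ^ a) := fun k => ih hv' (μ - k • v j)
    choose Pk hdeg heval using H
    have hsub : ∀ k : ℕ, (μ - k • v j) i0 = μ i0 - k := by
      intro k
      rw [Finsupp.sub_apply, Finsupp.smul_apply, hvj, nsmul_eq_mul, mul_one]
    have hPzero : ∀ k : ℕ, μ i0 < k → Pk k = 0 := by
      intro k hk
      rcases hdeg k with h | h
      · exact h
      · exfalso
        rw [hsub k] at h
        have : (0:ℤ) ≤ ((Pk k).natDegree : ℤ) := Int.natCast_nonneg _
        omega
    set M0 : ℕ := (μ i0).toNat with hM0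
    have hM0ge : μ i0 ≤ (M0 : ℤ) := Int.self_le_toNat _
    refine ⟨∑ k ∈ Finset.range (M0+1), cpoly k * Pk k, ?_, ?_⟩
    · by_cases hneg : μ i0 < 0
      · left
        apply Finset.sum_eq_zero
        intro k _
        rw [hPzero k (lt_of_lt_of_le hneg (Int.natCast_nonneg k)), mul_zero]
      · right
        push_neg at hneg
        have : (∑ k ∈ Finset.range (M0+1), cpoly k * Pk k).natDegree ≤ M0 := by
          apply Polynomial.natDegree_sum_le_of_forall_le
          intro k hk
          rcases hdeg k with h | h
          · rw [h, mul_zero, Polynomial.natDegree_zero]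
            exact Nat.zero_le _
          · refine le_trans (Polynomial.natDegree_mul_le) ?_
            rw [hsub k] at h
            have h1 := cpoly_natDegree_le k
            have h2 : ((cpoly k).natDegree : ℤ) + ((Pk k).natDegree : ℤ) ≤ (M0 : ℤ) := by
              have : ((cpoly k).natDegree : ℤ) ≤ (k : ℤ) := by exact_mod_cast h1
              omega
            exact_mod_cast h2
        calc ((∑ k ∈ Finset.range (M0+1), cpoly k * Pk k).natDegree : ℤ) ≤ (M0 : ℤ) := by
              exact_mod_cast this
          _ = μ i0 := by rw [hM0, Int.toNat_of_nonneg (by omega)]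
    · intro a
      rw [Finset.prod_cons, qPochL_single_mul_apply]
      have hsummand : ∀ k ∈ Finset.range ((Pz a).natDegree + 1),
          (cpoly k).eval (qq ^ a)
              * ((∏ i ∈ s, qPochL (AddMonoidAlgebra.single (v i) 1) a) : LL N).coeff (μ - k • v j)
            = (cpoly k).eval (qq ^ a) * (Pk k).eval (qq ^ a) := by
        intro k _
        rw [heval k a]
      rw [Finset.sum_congr rfl hsummand, Polynomial.eval_finset_sum]
      set M : ℕ := max ((Pz a).natDegree) M0 with hM
      have e1 : ∑ k ∈ Finset.range ((Pz a).natDegree + 1),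
          (cpoly k).eval (qq ^ a) * (Pk k).eval (qq ^ a)
          = ∑ k ∈ Finset.range (M+1), (cpoly k).eval (qq ^ a) * (Pk k).eval (qq ^ a) := by
        apply Finset.sum_subset
        · exact Finset.range_subset_range.mpr (by omega)
        · intro k _ hk
          rw [Finset.mem_range, not_lt] at hk
          have : (Pz a).coeff k = 0 :=
            Polynomial.coeff_eq_zero_of_natDegree_lt (by omega)
          rw [← Pz_coeff, this, zero_mul]
      have e2 : ∑ k ∈ Finset.range (M0+1),
          (cpoly k * Pk k).eval (qq ^ a)
          = ∑ k ∈ Finset.range (M+1), (cpoly k).eval (qq ^ a) * (Pk k).eval (qq ^ a) := by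
        rw [Finset.sum_congr rfl (fun k _ => Polynomial.eval_mul (x := qq ^ a))]
        apply Finset.sum_subset
        · exact Finset.range_subset_range.mpr (by omega)
        · intro k _ hk
          rw [Finset.mem_range, not_lt] at hk
          have : Pk k = 0 := hPzero k (by omega)
          rw [this, Polynomial.eval_zero, mul_zero]
      rw [e1, ← e2]

end CTAux

namespace CTAux
open AddMonoidAlgebra Polynomial Finset

variable {N : ℕ}

/-- Lower bound on the `i0`-th exponent over the support. -/
def LB (i0 : Fin N) (b : ℤ) (f : LL N) : Prop := ∀ ν ∈ f.coeff.support, b ≤ ν i0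

lemma LB_mono {i0 : Fin N} {b b' : ℤ} (h : b ≤ b') {f : LL N} (hf : LB i0 b' f) : LB i0 b f :=
  fun ν hν => le_trans h (hf ν hν)

lemma LB_single {i0 : Fin N} {w : Fin N →₀ ℤ} {c : KK} {b : ℤ} (h : b ≤ w i0) :
    LB i0 b (AddMonoidAlgebra.single w c) := by
  intro ν hν
  have h2 := Finsupp.support_single_subset hν
  rw [Finset.mem_singleton] at h2
  subst h2; exact h

lemma LB_one (i0 : Fin N) : LB i0 0 (1 : LL N) := by
  rw [AddMonoidAlgebra.one_def]; exact LB_single (by simp)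

lemma LB_mul {i0 : Fin N} {b c : ℤ} {f g : LL N} (hf : LB i0 b f) (hg : LB i0 c g) :
    LB i0 (b + c) (f * g) := by
  classical
  intro ν hν
  have h2 := AddMonoidAlgebra.support_coeff_mul_subset f g hν
  rw [Finset.mem_add] at h2
  obtain ⟨x, hx, y, hy, rfl⟩ := h2
  rw [Finsupp.add_apply]
  exact add_le_add (hf x hx) (hg y hy)

lemma LB_sub {i0 : Fin N} {b : ℤ} {f g : LL N} (hf : LB i0 b f) (hg : LB i0 b g) :
    LB i0 b (f - g) := by
  classical
  intro ν hν
  have h2 := Finsupp.support_sub hν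
  rw [Finset.mem_union] at h2
  rcases h2 with h2 | h2
  exacts [hf ν h2, hg ν h2]

lemma LB_prod {ι : Type} {s : Finset ι} {c : ι → ℤ} {f : ι → LL N} {i0 : Fin N}
    (h : ∀ j ∈ s, LB i0 (c j) (f j)) : LB i0 (∑ j ∈ s, c j) (∏ j ∈ s, f j) := by
  induction s using Finset.cons_induction with
  | empty => simpa using LB_one i0
  | cons j s hjs ih =>
    rw [Finset.prod_cons, Finset.sum_cons]
    exact LB_mul (h j (Finset.mem_cons_self _ _)) (ih fun i hi => h i (Finset.mem_cons_of_mem hi))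

lemma LB_CK (i0 : Fin N) (c : KK) : LB i0 0 (CK c) := LB_single (by simp)

lemma LB_qPochL {i0 : Fin N} {b : ℤ} {z : LL N} (hb : b ≤ 0) (hz : LB i0 b z) (a : ℕ) :
    LB i0 ((a : ℤ) * b) (qPochL z a) := by
  rw [qPochL]
  have h2 := LB_prod (s := Finset.range a) (c := fun _ => b)
    (f := fun i => 1 - z * CK (qq ^ i)) (i0 := i0) ?_
  · simpa using h2
  · intro i _
    apply LB_sub (LB_mono hb (LB_one i0))
    have h3 := LB_mul hz (LB_CK i0 (qq ^ i))
    simpa using h3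

lemma keyC (n : ℕ) (G : LL (n+1)) (b : ℤ) (hG : LB 0 b G) :
    ∃ P : Polynomial KK, (P = 0 ∨ (P.natDegree : ℤ) ≤ -b) ∧
      ∀ a0 : ℕ, CT (G * ∏ j : Fin n, qPochL (Xm (0 : Fin (n+1)) 1 * Xm j.succ (-1)) a0)
        = P.eval (qq ^ a0) := by
  classical
  set v : Fin n → (Fin (n+1) →₀ ℤ) :=
    fun j => Finsupp.single 0 1 + Finsupp.single j.succ (-1) with hv
  have hXm : ∀ j : Fin n, Xm (0 : Fin (n+1)) 1 * Xm j.succ (-1)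
      = AddMonoidAlgebra.single (v j) 1 := by
    intro j
    rw [Xm, Xm, AddMonoidAlgebra.single_mul_single, one_mul]
  have hv0 : ∀ j ∈ (Finset.univ : Finset (Fin n)), (v j) (0 : Fin (n+1)) = 1 := by
    intro j _
    rw [hv]
    rw [Finsupp.add_apply, Finsupp.single_apply, Finsupp.single_apply,
        if_pos rfl, if_neg (Fin.succ_ne_zero j), add_zero]
  have H : ∀ ν : (Fin (n+1) →₀ ℤ), ∃ P : Polynomial KK,
      (P = 0 ∨ (P.natDegree : ℤ) ≤ (-ν) (0 : Fin (n+1))) ∧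
      ∀ a : ℕ, ((∏ j : Fin n, qPochL (AddMonoidAlgebra.single (v j) 1) a) : LL (n+1)).coeff (-ν)
          = P.eval (qq ^ a) :=
    fun ν => keyB Finset.univ v 0 hv0 (-ν)
  choose Pf hdeg heval using H
  refine ⟨∑ ν ∈ G.coeff.support, Polynomial.C (G.coeff ν) * Pf ν, ?_, ?_⟩
  · by_cases hb' : -b < 0
    · left
      apply Finset.sum_eq_zero
      intro ν hν
      rcases hdeg ν with h | h
      · rw [h, mul_zero]
      · exfalso
        rw [Finsupp.neg_apply] at h
        have h2 := hG ν hν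
        have h3 : (0:ℤ) ≤ ((Pf ν).natDegree : ℤ) := Int.natCast_nonneg _
        omega
    · right
      push_neg at hb'
      have hdeg' : (∑ ν ∈ G.coeff.support, Polynomial.C (G.coeff ν) * Pf ν).natDegree ≤ (-b).toNat := by
        apply Polynomial.natDegree_sum_le_of_forall_le
        intro ν hν
        rcases hdeg ν with h | h
        · rw [h, mul_zero, Polynomial.natDegree_zero]; exact Nat.zero_le _
        · refine le_trans (Polynomial.natDegree_mul_le) ?_
          rw [Polynomial.natDegree_C, zero_add]
          rw [Finsupp.neg_apply] at h
          have h2 := hG ν hν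
          omega
      calc ((∑ ν ∈ G.coeff.support, Polynomial.C (G.coeff ν) * Pf ν).natDegree : ℤ)
          ≤ ((-b).toNat : ℤ) := by exact_mod_cast hdeg'
        _ = -b := Int.toNat_of_nonneg hb'
  · intro a0
    rw [CT]
    have hF : (∏ j : Fin n, qPochL (Xm (0 : Fin (n+1)) 1 * Xm j.succ (-1)) a0)
        = ∏ j : Fin n, qPochL (AddMonoidAlgebra.single (v j) 1) a0 :=
      Finset.prod_congr rfl (fun j _ => by rw [hXm j])
    have hGdecomp : G = ∑ ν ∈ G.coeff.support, AddMonoidAlgebra.single ν (G.coeff ν) :=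
      (AddMonoidAlgebra.sum_coeff_single G).symm
    rw [hF]
    conv_lhs => rw [hGdecomp]
    rw [Finset.sum_mul, AddMonoidAlgebra.coeff_sum, Finset.sum_apply']
    rw [Polynomial.eval_finset_sum]
    refine Finset.sum_congr rfl (fun ν _ => ?_)
    rw [AddMonoidAlgebra.coeff_single_mul_apply, add_zero, heval ν a0,
        Polynomial.eval_mul, Polynomial.eval_C]

/-- The embedding as a ring homomorphism. -/
def embedRH (n : ℕ) : AddMonoidAlgebra KK (Fin n →₀ ℤ) →+* LL (n+1) :=
  AddMonoidAlgebra.mapDomainRingHom KK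
    (Finsupp.mapDomain.addMonoidHom (Fin.succ : Fin n → Fin (n+1)))

lemma embedTail_eq (n : ℕ) (f : AddMonoidAlgebra KK (Fin n →₀ ℤ)) :
    embedTail n f = embedRH n f := rfl

lemma embedTail_Xm (n : ℕ) (i : Fin n) (e : ℤ) : embedTail n (Xm i e) = Xm i.succ e := by
  simp only [Xm, embedTail, AddMonoidAlgebra.coeff_single]
  rw [Finsupp.mapDomain_single, Finsupp.mapDomain_single, AddMonoidAlgebra.ofCoeff_single]

lemma embedTail_CK (n : ℕ) (c : KK) : embedTail n (CK c) = CK c := by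
  simp only [CK, embedTail, AddMonoidAlgebra.coeff_single]
  rw [Finsupp.mapDomain_single, Finsupp.mapDomain_zero, AddMonoidAlgebra.ofCoeff_single]

lemma embedTail_qPochL (n : ℕ) (z : AddMonoidAlgebra KK (Fin n →₀ ℤ)) (k : ℕ) :
    embedTail n (qPochL z k) = qPochL (embedTail n z) k := by
  rw [embedTail_eq, qPochL, qPochL, map_prod]
  refine Finset.prod_congr rfl (fun i _ => ?_)
  rw [map_sub, map_one, map_mul, ← embedTail_eq, ← embedTail_eq, embedTail_CK]

lemma embedTail_mul (n : ℕ) (f g : AddMonoidAlgebra KK (Fin n →₀ ℤ)) :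
    embedTail n (f * g) = embedTail n f * embedTail n g := by
  rw [embedTail_eq, embedTail_eq, embedTail_eq, map_mul]

lemma LB_embedTail (n : ℕ) (f : AddMonoidAlgebra KK (Fin n →₀ ℤ)) :
    LB (0 : Fin (n+1)) 0 (embedTail n f) := by
  classical
  intro ν hν
  have h1 : ν ∈ f.coeff.support.image (Finsupp.mapDomain (Fin.succ : Fin n → Fin (n+1))) :=
    Finsupp.mapDomain_support hν
  rw [Finset.mem_image] at h1
  obtain ⟨ν', _, rfl⟩ := h1
  rw [Finsupp.mapDomain_notin_range]
  rintro ⟨i, hi⟩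
  exact Fin.succ_ne_zero i hi

lemma dyson_factor (n : ℕ) (a0 : ℕ) (atail : Fin n → ℕ) :
    dysonProd (Fin.cons a0 atail) =
      (∏ j : Fin n, qPochL (Xm (0:Fin (n+1)) 1 * Xm j.succ (-1)) a0)
      * ((∏ j : Fin n, qPochL (CK qq * Xm j.succ 1 * Xm (0:Fin (n+1)) (-1)) (atail j))
      * embedTail n (dysonProd atail)) := by
  classical
  rw [dysonProd]
  rw [← Finset.prod_filter_mul_prod_filter_not
    (Finset.univ.filter (fun p : Fin (n+1) × Fin (n+1) => p.1 < p.2))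
    (fun p => p.1 = (0 : Fin (n+1)))]
  have h1 : ∏ p ∈ (Finset.univ.filter
        (fun p : Fin (n+1) × Fin (n+1) => p.1 < p.2)).filter (fun p => p.1 = 0),
      (qPochL (Xm p.1 1 * Xm p.2 (-1)) ((Fin.cons a0 atail : Fin (n+1) → ℕ) p.1)
        * qPochL (CK qq * Xm p.2 1 * Xm p.1 (-1)) ((Fin.cons a0 atail : Fin (n+1) → ℕ) p.2))
      = (∏ j : Fin n, qPochL (Xm (0:Fin (n+1)) 1 * Xm j.succ (-1)) a0)
        * (∏ j : Fin n, qPochL (CK qq * Xm j.succ 1 * Xm (0:Fin (n+1)) (-1)) (atail j)) := by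
    rw [← Finset.prod_mul_distrib]
    symm
    apply Finset.prod_bij (fun (j : Fin n) _ => ((0 : Fin (n+1)), j.succ))
    · intro j _
      exact Finset.mem_filter.mpr ⟨Finset.mem_filter.mpr ⟨Finset.mem_univ _, Fin.succ_pos j⟩, rfl⟩
    · intro j1 _ j2 _ h
      have := congrArg Prod.snd h
      exact Fin.succ_injective _ this
    · intro p hp
      simp only [Finset.mem_filter, Finset.mem_univ, true_and] at hp
      obtain ⟨hlt, h0⟩ := hp
      have hne : p.2 ≠ 0 := by
        intro h2
        rw [h0, h2] at hlt
        exact lt_irrefl _ hlt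
      obtain ⟨j, hj⟩ := Fin.exists_succ_eq.mpr hne
      refine ⟨j, Finset.mem_univ j, ?_⟩
      obtain ⟨p1, p2⟩ := p
      simp only at h0 hj
      rw [h0, ← hj]
    · intro j _
      show qPochL (Xm (0:Fin (n+1)) 1 * Xm j.succ (-1)) a0
            * qPochL (CK qq * Xm j.succ 1 * Xm (0:Fin (n+1)) (-1)) (atail j)
          = qPochL (Xm (0:Fin (n+1)) 1 * Xm j.succ (-1)) ((Fin.cons a0 atail : Fin (n+1) → ℕ) 0)
            * qPochL (CK qq * Xm j.succ 1 * Xm (0:Fin (n+1)) (-1))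
                ((Fin.cons a0 atail : Fin (n+1) → ℕ) j.succ)
      rw [Fin.cons_zero, Fin.cons_succ]
  have h2 : ∏ p ∈ (Finset.univ.filter
        (fun p : Fin (n+1) × Fin (n+1) => p.1 < p.2)).filter (fun p => ¬ p.1 = 0),
      (qPochL (Xm p.1 1 * Xm p.2 (-1)) ((Fin.cons a0 atail : Fin (n+1) → ℕ) p.1)
        * qPochL (CK qq * Xm p.2 1 * Xm p.1 (-1)) ((Fin.cons a0 atail : Fin (n+1) → ℕ) p.2))
      = embedTail n (dysonProd atail) := by
    rw [dysonProd, embedTail_eq, map_prod]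
    symm
    apply Finset.prod_bij (fun (p : Fin n × Fin n) _ => (p.1.succ, p.2.succ))
    · intro p hp
      simp only [Finset.mem_filter, Finset.mem_univ, true_and] at hp
      exact Finset.mem_filter.mpr ⟨Finset.mem_filter.mpr
        ⟨Finset.mem_univ _, Fin.succ_lt_succ_iff.mpr hp⟩, Fin.succ_ne_zero p.1⟩
    · intro p1 _ p2 _ h
      have ha := congrArg Prod.fst h
      have hb := congrArg Prod.snd h
      have ha' := Fin.succ_injective _ ha
      have hb' := Fin.succ_injective _ hb
      exact Prod.ext ha' hb'
    · intro p hp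
      simp only [Finset.mem_filter, Finset.mem_univ, true_and] at hp
      obtain ⟨hlt, h0⟩ := hp
      have hne2 : p.2 ≠ 0 := by
        intro h2
        rw [h2] at hlt
        exact absurd (Fin.le_zero_iff.mp hlt.le) h0
      obtain ⟨i, hi⟩ := Fin.exists_succ_eq.mpr h0
      obtain ⟨j, hj⟩ := Fin.exists_succ_eq.mpr hne2
      refine ⟨(i, j), ?_, ?_⟩
      · refine Finset.mem_filter.mpr ⟨Finset.mem_univ _, ?_⟩
        show i < j
        rw [← Fin.succ_lt_succ_iff, hi, hj]
        exact hlt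
      · show (i.succ, j.succ) = p
        obtain ⟨p1, p2⟩ := p
        simp only at hi hj
        rw [hi, hj]
    · intro p _
      show (embedRH n) (qPochL (Xm p.1 1 * Xm p.2 (-1)) (atail p.1)
            * qPochL (CK qq * Xm p.2 1 * Xm p.1 (-1)) (atail p.2))
          = qPochL (Xm p.1.succ 1 * Xm p.2.succ (-1))
              ((Fin.cons a0 atail : Fin (n+1) → ℕ) p.1.succ)
            * qPochL (CK qq * Xm p.2.succ 1 * Xm p.1.succ (-1))
                ((Fin.cons a0 atail : Fin (n+1) → ℕ) p.2.succ)
      rw [← embedTail_eq, embedTail_mul, embedTail_qPochL, embedTail_qPochL,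
          embedTail_mul, embedTail_mul, embedTail_mul, embedTail_Xm, embedTail_Xm,
          embedTail_Xm, embedTail_Xm, embedTail_CK, Fin.cons_succ, Fin.cons_succ]
  rw [h1, h2, mul_assoc]

end CTAux
/-- **Lemma 5.2 (Lu–Xin–Zhou).** For a Laurent polynomial `L` in `x_1,…,x_n`, fixed
non-negative integers `a_1,…,a_n` and an integer `t ≤ a_1+⋯+a_n`, the constant term
`CT x_0^t L ∏_{0≤i<j≤n}(x_i/x_j;q)_{a_i}(q x_j/x_i;q)_{a_j}` is a polynomial in
`q^{a_0}` of degree at most `a_1+⋯+a_n-t`; it vanishes when `t > a_1+⋯+a_n`. -/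
theorem ct_polynomiality (n : ℕ) (hn : 1 ≤ n) (Lp : AddMonoidAlgebra KK (Fin n →₀ ℤ))
    (atail : Fin n → ℕ) (t : ℤ) :
    (t ≤ (∑ i, (atail i : ℤ)) →
      ∃ P : Polynomial KK, (P.natDegree : ℤ) ≤ (∑ i, (atail i : ℤ)) - t ∧
        ∀ a0 : ℕ,
          CT (Xm (0 : Fin (n+1)) t * embedTail n Lp * dysonProd (Fin.cons a0 atail)) =
            P.eval (qq ^ a0)) ∧
    ((∑ i, (atail i : ℤ)) < t →
      ∀ a0 : ℕ,
        CT (Xm (0 : Fin (n+1)) t * embedTail n Lp * dysonProd (Fin.cons a0 atail)) = 0) := by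
  classical
  set S : ℤ := ∑ i, (atail i : ℤ) with hS
  set Hpoch : LL (n+1) :=
    ∏ j : Fin n, qPochL (CK qq * Xm j.succ 1 * Xm (0:Fin (n+1)) (-1)) (atail j) with hHp
  set Gbig : LL (n+1) :=
    Xm (0:Fin (n+1)) t * embedTail n Lp * (Hpoch * embedTail n (dysonProd atail)) with hGb
  have hLB : CTAux.LB (0:Fin (n+1)) (t - S) Gbig := by
    have h1 : CTAux.LB (0:Fin (n+1)) t (Xm (0:Fin (n+1)) t) := by
      apply CTAux.LB_single
      rw [Finsupp.single_eq_same]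
    have h2 := CTAux.LB_embedTail n Lp
    have h3 : CTAux.LB (0:Fin (n+1)) (-S) Hpoch := by
      rw [hHp, hS]
      have hmain := CTAux.LB_prod (s := Finset.univ) (c := fun j => -(atail j : ℤ))
        (f := fun j => qPochL (CK qq * Xm j.succ 1 * Xm (0:Fin (n+1)) (-1)) (atail j))
        (i0 := (0:Fin (n+1))) ?_
      · simpa using hmain
      · intro j _
        have hz : CTAux.LB (0:Fin (n+1)) (-1)
            (CK qq * Xm j.succ 1 * Xm (0:Fin (n+1)) (-1)) := by
          have hrw : CK qq * Xm j.succ 1 * Xm (0:Fin (n+1)) (-1)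
              = AddMonoidAlgebra.single
                  (Finsupp.single j.succ 1 + Finsupp.single (0:Fin (n+1)) (-1)) qq := by
            rw [CK, Xm, Xm, AddMonoidAlgebra.single_mul_single,
                AddMonoidAlgebra.single_mul_single]
            rw [zero_add, mul_one, mul_one]
          rw [hrw]
          apply CTAux.LB_single
          rw [Finsupp.add_apply, Finsupp.single_apply, Finsupp.single_apply,
              if_neg (Fin.succ_ne_zero j), if_pos rfl, zero_add]
        have h6 := CTAux.LB_qPochL (by omega) hz (atail j)
        simpa using h6
    have h4 := CTAux.LB_embedTail n (dysonProd atail)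
    have h5 := CTAux.LB_mul (CTAux.LB_mul h1 h2) (CTAux.LB_mul h3 h4)
    have he : t + 0 + (-S + 0) = t - S := by ring
    rw [he] at h5
    exact h5
  obtain ⟨P, hdeg, heval⟩ := CTAux.keyC n Gbig (t - S) hLB
  have hCTeq : ∀ a0 : ℕ,
      CT (Xm (0:Fin (n+1)) t * embedTail n Lp * dysonProd (Fin.cons a0 atail))
        = P.eval (qq ^ a0) := by
    intro a0
    rw [← heval a0]
    congr 1
    rw [CTAux.dyson_factor n a0 atail, hGb, hHp]
    ring
  constructor
  · intro ht
    refine ⟨P, ?_, hCTeq⟩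
    rcases hdeg with h | h
    · rw [h, Polynomial.natDegree_zero]
      push_cast
      omega
    · have he2 : -(t - S) = S - t := by ring
      rw [he2] at h
      exact h
  · intro ht a0
    rcases hdeg with h | h
    · rw [hCTeq a0, h, Polynomial.eval_zero]
    · exfalso
      have h7 : (0:ℤ) ≤ (P.natDegree : ℤ) := Int.natCast_nonneg _
      omega

end
end

section
/- For s a positive integer, let (b_1,…,b_{s+1}) and (k_1,…,k_s) be compositions of non-negative integers such that 1 ≤ k_i ≤ b_1+⋯+b_{s+1} for all 1 ≤ i ≤ s. Then at least one of the following holds: (1) 1 ≤ k_i ≤ b_i for some i with 1 ≤ i ≤ s; (2) −b_j ≤ k_i − k_j ≤ b_i − 1 for some 1 ≤ i < j ≤ s; (3) there exists a permutation w of {1,…,s} and non-negative integers t_1,…,t_s such that, setting w(0) := 0 and k_0 := 0, one has k_{w(j)} − k_{w(j−1)} = b_{w(j)} + t_j for all 1 ≤ j ≤ s, t_1+⋯+t_s ≤ b_{s+1}, and t_j > 0 whenever w(j−1) < w(j) for 1 ≤ j ≤ s. -/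
/-- Sorting relation: compare by `k`-value, ties broken by larger index first. -/
def tlRel (k : ℕ → ℕ) (i j : ℕ) : Prop := k i < k j ∨ (k i = k j ∧ j ≤ i)

instance (k : ℕ → ℕ) : DecidableRel (tlRel k) := fun i j => by
  unfold tlRel; exact inferInstance

instance (k : ℕ → ℕ) : IsTrans ℕ (tlRel k) :=
  ⟨fun a b c h1 h2 => by unfold tlRel at *; omega⟩

instance (k : ℕ → ℕ) : IsAntisymm ℕ (tlRel k) :=
  ⟨fun a b h1 h2 => by unfold tlRel at *; omega⟩

instance (k : ℕ → ℕ) : IsTotal ℕ (tlRel k) :=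
  ⟨fun a b => by unfold tlRel; omega⟩

/-- **Lemma 5.4.** For `s ≥ 1` and compositions `(b_1,…,b_{s+1})`, `(k_1,…,k_s)` with
`1 ≤ k_i ≤ b_1+⋯+b_{s+1}` for all `1 ≤ i ≤ s`, at least one of the following holds:
(1) `1 ≤ k_i ≤ b_i` for some `i`;
(2) `-b_j ≤ k_i - k_j ≤ b_i - 1` for some `i < j`;
(3) there is a bijection `w` of `{1,…,s}` (with the convention `w(0) = 0`, `k_0 = 0`)
and non-negative integers `t_1,…,t_s` with `k_{w(j)} = k_{w(j-1)} + b_{w(j)} + t_j` for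
`1 ≤ j ≤ s`, `t_1+⋯+t_s ≤ b_{s+1}`, and `t_j > 0` whenever `w(j-1) < w(j)`. -/
theorem tournament_lemma (s : ℕ) (hs : 1 ≤ s) (b k : ℕ → ℕ)
    (hk : ∀ i, 1 ≤ i → i ≤ s → 1 ≤ k i ∧ k i ≤ ∑ j ∈ Finset.Icc 1 (s+1), b j) :
    (∃ i, 1 ≤ i ∧ i ≤ s ∧ 1 ≤ k i ∧ k i ≤ b i) ∨
    (∃ i j, 1 ≤ i ∧ i < j ∧ j ≤ s ∧
      -(b j : ℤ) ≤ (k i : ℤ) - (k j : ℤ) ∧ (k i : ℤ) - (k j : ℤ) ≤ (b i : ℤ) - 1) ∨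
    (∃ w t : ℕ → ℕ, w 0 = 0 ∧ Set.BijOn w (Set.Icc 1 s) (Set.Icc 1 s) ∧
      (∀ j, 1 ≤ j → j ≤ s →
        (if w j = 0 then 0 else k (w j)) =
          (if w (j-1) = 0 then 0 else k (w (j-1))) + b (w j) + t j) ∧
      (∑ j ∈ Finset.Icc 1 s, t j) ≤ b (s+1) ∧
      (∀ j, 1 ≤ j → j ≤ s → w (j-1) < w j → 0 < t j)) := by
  by_cases h1 : ∃ i, 1 ≤ i ∧ i ≤ s ∧ 1 ≤ k i ∧ k i ≤ b i
  · exact Or.inl h1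
  by_cases h2 : ∃ i j, 1 ≤ i ∧ i < j ∧ j ≤ s ∧
      -(b j : ℤ) ≤ (k i : ℤ) - (k j : ℤ) ∧ (k i : ℤ) - (k j : ℤ) ≤ (b i : ℤ) - 1
  · exact Or.inr (Or.inl h2)
  refine Or.inr (Or.inr ?_)
  push_neg at h1 h2
  -- every k i exceeds b i
  have hbk : ∀ i, 1 ≤ i → i ≤ s → b i + 1 ≤ k i := by
    intro i hi his
    have h := h1 i hi his (hk i hi his).1
    omega
  -- from failure of (2)
  have key2 : ∀ i j, 1 ≤ i → i < j → j ≤ s →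
      k i + b j + 1 ≤ k j ∨ k j + b i ≤ k i := by
    intro i j hi hij hjs
    have h := h2 i j hi hij hjs
    omega
  -- the sorted list
  set l : List ℕ := (Finset.Icc 1 s).sort (tlRel k) with hl
  have hlen : l.length = s := by
    rw [hl, Finset.length_sort, Nat.card_Icc]; omega
  have hmem : ∀ a, a ∈ l ↔ 1 ≤ a ∧ a ≤ s := by
    intro a; rw [hl, Finset.mem_sort, Finset.mem_Icc]
  have hnd : l.Nodup := Finset.sort_nodup _ _
  have hsort : l.Pairwise (tlRel k) := Finset.pairwise_sort _ _
  -- the permutation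
  set w : ℕ → ℕ := fun j => if j = 0 then 0 else l.getD (j - 1) 0 with hwdef
  have hw0 : w 0 = 0 := by simp [hwdef]
  have hwget : ∀ j, 1 ≤ j → j ≤ s → ∀ (h : j - 1 < l.length), w j = l[j-1] := by
    intro j hj hjs h
    simp only [hwdef]
    rw [if_neg (by omega), List.getD_eq_getElem l 0 h]
  have hwmem : ∀ j, 1 ≤ j → j ≤ s → 1 ≤ w j ∧ w j ≤ s := by
    intro j hj hjs
    have h : j - 1 < l.length := by omega
    rw [hwget j hj hjs h]
    exact (hmem _).1 (List.getElem_mem h)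
  -- the key step inequality
  have hstep : ∀ j, 1 ≤ j → j ≤ s →
      (if w (j-1) = 0 then 0 else k (w (j-1))) + b (w j) ≤ k (w j) ∧
      (w (j-1) < w j → (if w (j-1) = 0 then 0 else k (w (j-1))) + b (w j) < k (w j)) := by
    intro j hj hjs
    rcases Nat.eq_or_lt_of_le hj with h1j | h1j
    · -- j = 1
      subst h1j
      have hz : (if w (1-1) = 0 then 0 else k (w (1-1))) = 0 := by simp [hw0]
      rw [hz]
      have := hbk (w 1) (hwmem 1 le_rfl hjs).1 (hwmem 1 le_rfl hjs).2
      omega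
    · -- j ≥ 2
      have hj2 : 2 ≤ j := h1j
      have hlt1 : j - 2 < l.length := by omega
      have hlt2 : j - 1 < l.length := by omega
      have hp : w (j-1) = l[j-2] := by
        have := hwget (j-1) (by omega) (by omega) (by omega : (j-1)-1 < l.length)
        simpa [show j - 1 - 1 = j - 2 by omega] using this
      have hq : w j = l[j-1] := hwget j hj hjs hlt2
      have hrel : tlRel k (w (j-1)) (w j) := by
        rw [hp, hq]
        exact List.Pairwise.rel_get_of_lt hsort
          (by simp only [Fin.mk_lt_mk]; omega : (⟨j-2, hlt1⟩ : Fin l.length) < ⟨j-1, hlt2⟩)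
      have hne : w (j-1) ≠ w j := by
        rw [hp, hq]
        intro hcontra
        have := (List.Nodup.getElem_inj_iff hnd).1 hcontra
        omega
      have hpmem := hwmem (j-1) (by omega) (by omega)
      have hqmem := hwmem j hj hjs
      rw [if_neg (by omega)]
      set p := w (j-1)
      set q := w j
      rcases Nat.lt_or_ge p q with hpq | hqp
      · -- p < q : need strict
        have hkey := key2 p q hpmem.1 hpq hqmem.2
        unfold tlRel at hrel
        omega
      · -- q < p
        have hqp' : q < p := by omega
        have hkey := key2 q p hqmem.1 hqp' hpmem.2
        unfold tlRel at hrel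
        omega
  -- define t
  set t : ℕ → ℕ := fun j =>
    k (w j) - (if w (j-1) = 0 then 0 else k (w (j-1))) - b (w j) with htdef
  have hteq : ∀ j, 1 ≤ j → j ≤ s →
      (if w j = 0 then 0 else k (w j)) =
        (if w (j-1) = 0 then 0 else k (w (j-1))) + b (w j) + t j := by
    intro j hj hjs
    have h := (hstep j hj hjs).1
    have hwj : w j ≠ 0 := by have := hwmem j hj hjs; omega
    rw [if_neg hwj]
    simp only [htdef]
    omega
  have htpos : ∀ j, 1 ≤ j → j ≤ s → w (j-1) < w j → 0 < t j := by
    intro j hj hjs hlt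
    have h := (hstep j hj hjs).2 hlt
    simp only [htdef]
    omega
  -- BijOn
  have hbij : Set.BijOn w (Set.Icc 1 s) (Set.Icc 1 s) := by
    refine ⟨?_, ?_, ?_⟩
    · intro j hj
      simp only [Set.mem_Icc] at *
      exact hwmem j hj.1 hj.2
    · intro j1 hj1 j2 hj2 hww
      simp only [Set.mem_Icc] at hj1 hj2
      have h1 : j1 - 1 < l.length := by omega
      have h2 : j2 - 1 < l.length := by omega
      rw [hwget j1 hj1.1 hj1.2 h1, hwget j2 hj2.1 hj2.2 h2] at hww
      have := (List.Nodup.getElem_inj_iff hnd).1 hww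
      omega
    · intro y hy
      simp only [Set.mem_Icc] at hy
      have hyl : y ∈ l := (hmem y).2 hy
      obtain ⟨n, hn, hny⟩ := List.mem_iff_getElem.1 hyl
      refine ⟨n + 1, ?_, ?_⟩
      · simp only [Set.mem_Icc]; omega
      · rw [hwget (n+1) (by omega) (by omega) (by simpa using hn)]
        simpa using hny
  -- telescoping sum
  have hsum : ∀ j, 1 ≤ j → j ≤ s →
      (∑ m ∈ Finset.Icc 1 j, (b (w m) + t m)) = k (w j) := by
    intro j
    induction j with
    | zero => omega
    | succ n ih =>
      intro _ hns
      rcases Nat.eq_or_lt_of_le (by omega : 1 ≤ n + 1) with h1 | h1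
      · -- n + 1 = 1
        have hn0 : n = 0 := by omega
        subst hn0
        simp only [Nat.zero_add] at hns ⊢
        rw [show Finset.Icc 1 1 = {1} from rfl, Finset.sum_singleton]
        have h := hteq 1 le_rfl hns
        have hwj : w 1 ≠ 0 := by have := hwmem 1 le_rfl hns; omega
        rw [if_neg hwj, hw0, if_pos rfl] at h
        omega
      · have hn1 : 1 ≤ n := by omega
        rw [Finset.sum_Icc_succ_top (by omega : 1 ≤ n + 1)]
        rw [ih hn1 (by omega)]
        have h := hteq (n+1) (by omega) hns
        have hwj : w (n+1) ≠ 0 := by have := hwmem (n+1) (by omega) hns; omega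
        have hwn : w n ≠ 0 := by have := hwmem n hn1 (by omega); omega
        rw [if_neg hwj] at h
        simp only [Nat.add_sub_cancel] at h
        rw [if_neg hwn] at h
        omega
  -- sum of b over permuted indices
  have hbsum : (∑ m ∈ Finset.Icc 1 s, b (w m)) = ∑ i ∈ Finset.Icc 1 s, b i := by
    apply Finset.sum_bij (fun m _ => w m)
    · intro a ha
      simp only [Finset.mem_Icc] at *
      exact hwmem a ha.1 ha.2
    · intro a1 ha1 a2 ha2 hww
      simp only [Finset.mem_Icc] at ha1 ha2
      have h1 : a1 - 1 < l.length := by omega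
      have h2 : a2 - 1 < l.length := by omega
      rw [hwget a1 ha1.1 ha1.2 h1, hwget a2 ha2.1 ha2.2 h2] at hww
      have := (List.Nodup.getElem_inj_iff hnd).1 hww
      omega
    · intro y hy
      simp only [Finset.mem_Icc] at hy
      have hyl : y ∈ l := (hmem y).2 hy
      obtain ⟨n, hn, hny⟩ := List.mem_iff_getElem.1 hyl
      refine ⟨n + 1, Finset.mem_Icc.2 (by omega), ?_⟩
      rw [hwget (n+1) (by omega) (by omega) (by simpa using hn)]
      simpa using hny
    · intro a _; rfl
  -- total bound
  have htsum : (∑ j ∈ Finset.Icc 1 s, t j) ≤ b (s+1) := by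
    have hws := hwmem s hs le_rfl
    have hkb := (hk (w s) hws.1 hws.2).2
    have hS := hsum s hs le_rfl
    rw [Finset.sum_add_distrib] at hS
    rw [Finset.sum_Icc_succ_top (by omega : 1 ≤ s + 1)] at hkb
    omega
  exact ⟨w, t, hw0, hbij, hteq, htsum, htpos⟩
end

section
/- For s a positive integer, let (b_1,…,b_{s+1}) and (k_1,…,k_s) be compositions of non-negative integers with 1 ≤ k_i ≤ b_1+⋯+b_{s+1} for all i, and suppose there exists a permutation w of {1,…,s} and non-negative integers t_1,…,t_s such that, with w(0) := 0 and k_0 := 0, k_{w(j)} − k_{w(j−1)} = b_{w(j)} + t_j for 1 ≤ j ≤ s, t_1+⋯+t_s ≤ b_{s+1}, and t_j > 0 whenever w(j−1) < w(j). Let m be a non-negative integer and set b_0 := −(b_1+⋯+b_{s+1}). Then in ℚ(q) there exist integers n_1,…,n_{b_{s+1}} such that −∑_{i=0}^{s} ((1−q^{b_i})/(1−q)) · q^{k_s−k_i−χ(i<m)} = q^{n_1}+⋯+q^{n_{b_{s+1}}}, where k_0 := 0 and χ is the 0/1 indicator. -/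
noncomputable section

/-- **Proposition 5.5.** Suppose `s ≥ 1`, `(b_1,…,b_{s+1})` and `(k_1,…,k_s)` are
compositions with `1 ≤ k_i ≤ b_1+⋯+b_{s+1}`, and case (3) of the tournament lemma holds:
there is a bijection `w` of `{1,…,s}` (with `w(0) = 0`, `k_0 = 0`) and non-negative
integers `t_j` with `k_{w(j)} = k_{w(j-1)} + b_{w(j)} + t_j`, `t_1+⋯+t_s ≤ b_{s+1}`, and
`t_j > 0` whenever `w(j-1) < w(j)`.  Let `m ≥ 0` and `b_0 := -(b_1+⋯+b_{s+1})`.  Then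
there exist integers `n_1,…,n_{b_{s+1}}` with
`-∑_{i=0}^s ((1-q^{b_i})/(1-q)) q^{k_s-k_i-χ(i<m)} = q^{n_1}+⋯+q^{n_{b_{s+1}}}` in `ℚ(q)`. -/
theorem alphabet_substitution (s : ℕ) (hs : 1 ≤ s) (b k t w : ℕ → ℕ) (m : ℕ)
    (hk : ∀ i, 1 ≤ i → i ≤ s → 1 ≤ k i ∧ k i ≤ ∑ j ∈ Finset.Icc 1 (s+1), b j)
    (hw0 : w 0 = 0) (hbij : Set.BijOn w (Set.Icc 1 s) (Set.Icc 1 s))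
    (hrec : ∀ j, 1 ≤ j → j ≤ s →
      (if w j = 0 then 0 else k (w j)) =
        (if w (j-1) = 0 then 0 else k (w (j-1))) + b (w j) + t j)
    (htsum : (∑ j ∈ Finset.Icc 1 s, t j) ≤ b (s+1))
    (htpos : ∀ j, 1 ≤ j → j ≤ s → w (j-1) < w j → 0 < t j) :
    ∃ nn : Fin (b (s+1)) → ℤ,
      -(∑ i ∈ Finset.range (s+1),
          ((1 - qq ^ (if i = 0 then -(∑ j ∈ Finset.Icc 1 (s+1), (b j : ℤ)) else (b i : ℤ)))
              / (1 - qq)) *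
            qq ^ ((k s : ℤ) - (if i = 0 then 0 else (k i : ℤ)) -
              (if i < m then 1 else 0))) =
        ∑ r, qq ^ (nn r) := by
  classical
  have hq0 : qq ≠ 0 := RatFunc.X_ne_zero
  have hq1 : (1 : KK) - qq ≠ 0 := by
    intro h
    have h2 : (1 : KK) = qq := sub_eq_zero.mp h
    have h3 : algebraMap (Polynomial ℚ) KK 1 = algebraMap (Polynomial ℚ) KK Polynomial.X := by
      rw [map_one, RatFunc.algebraMap_X]; exact h2
    have h4 := RatFunc.algebraMap_injective ℚ h3
    have h5 := congrArg Polynomial.natDegree h4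
    simp at h5
  have geo : ∀ n : ℕ, (1 - qq ^ (n:ℤ)) / (1 - qq) = ∑ a ∈ Finset.range n, qq ^ a := by
    intro n
    rw [div_eq_iff hq1, zpow_natCast]
    linear_combination geom_sum_mul qq n
  -- block lemma
  have block : ∀ (n : ℕ) (e : ℤ),
      ((1 - qq ^ (n:ℤ)) / (1 - qq)) * qq ^ e
        = ∑ x ∈ Finset.Ico e (e + (n:ℤ)), qq ^ x := by
    intro n e
    have hmapeq : Finset.Ico e (e + (n:ℤ))
        = Finset.map ⟨fun a : ℕ => e + a, fun a b h => by simp only at h; exact_mod_cast add_left_cancel h⟩ (Finset.range n) := by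
      ext x
      simp only [Finset.mem_Ico, Finset.mem_map, Finset.mem_range,
        Function.Embedding.coeFn_mk]
      constructor
      · rintro ⟨hx1, hx2⟩
        exact ⟨(x - e).toNat, by omega, by show e + ((x - e).toNat : ℤ) = x; omega⟩
      · rintro ⟨a, ha, rfl⟩
        show e ≤ e + (a:ℤ) ∧ e + (a:ℤ) < e + n
        omega
    rw [geo, Finset.sum_mul, hmapeq, Finset.sum_map]
    refine Finset.sum_congr rfl fun a _ => ?_
    change _ = qq ^ (e + (a:ℤ))
    rw [zpow_add₀ hq0, zpow_natCast, mul_comm]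
  -- notation
  set B : ℕ := ∑ j ∈ Finset.Icc 1 (s+1), b j with hBdef
  set c : ℕ → ℤ := fun i => if i < m then 1 else 0 with hcdef
  have hcj : ∀ i, c i = if i < m then 1 else 0 := fun _ => rfl
  set K : ℕ → ℕ := fun j => if w j = 0 then 0 else k (w j) with hKdef
  have hKj : ∀ j, K j = if w j = 0 then 0 else k (w j) := fun _ => rfl
  set L : ℕ → ℤ := fun j => (k s : ℤ) - K j - c (w j) with hLdef
  have hLj : ∀ j, L j = (k s : ℤ) - K j - c (w j) := fun _ => rfl
  have hwmem : ∀ j, 1 ≤ j → j ≤ s → 1 ≤ w j ∧ w j ≤ s := by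
    intro j h1 h2
    have := hbij.mapsTo (Set.mem_Icc.mpr ⟨h1, h2⟩)
    exact Set.mem_Icc.mp this
  have hrecK : ∀ j, 1 ≤ j → j ≤ s → K j = K (j-1) + b (w j) + t j := by
    intro j h1 h2
    rw [hKj, hKj]; exact hrec j h1 h2
  -- chain inequality
  have hchain : ∀ j, 1 ≤ j → j ≤ s → L j + (b (w j) : ℤ) ≤ L (j-1) := by
    intro j h1 h2
    have hr := hrecK j h1 h2
    have hrZ : (K j : ℤ) = K (j-1) + (b (w j) : ℤ) + (t j : ℤ) := by exact_mod_cast hr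
    have hcineq : c (w (j-1)) ≤ (t j : ℤ) + c (w j) := by
      rcases Nat.eq_zero_or_pos (t j) with ht | ht
      · have hnlt : ¬ w (j-1) < w j := fun hlt => by
          have := htpos j h1 h2 hlt; omega
        rcases Nat.lt_or_ge j 2 with hj1 | hj2
        · have hj : j = 1 := by omega
          subst hj
          have := (hwmem 1 le_rfl hs).1
          simp only [Nat.sub_self, hw0] at hnlt
          omega
        · have hne : w (j-1) ≠ w j := by
            intro he
            have := hbij.injOn (Set.mem_Icc.mpr ⟨by omega, by omega⟩)
              (Set.mem_Icc.mpr ⟨h1, h2⟩) he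
            omega
          have hlt : w j < w (j-1) := by omega
          rw [hcj, hcj]
          split_ifs <;> omega
      · rw [hcj, hcj]
        split_ifs <;> omega
    rw [hLj, hLj]
    linarith
  have hmono : ∀ d j0, j0 + d ≤ s → L (j0 + d) ≤ L j0 := by
    intro d
    induction d with
    | zero => intro j0 _; simp
    | succ n ih =>
      intro j0 h
      have h1 := hchain (j0 + n + 1) (by omega) (by omega)
      have hb0 : (0:ℤ) ≤ (b (w (j0 + n + 1)) : ℤ) := Int.natCast_nonneg _
      have h2 : L (j0 + (n+1)) ≤ L (j0 + n) := by
        have : j0 + n + 1 - 1 = j0 + n := by omega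
        rw [this] at h1
        have : j0 + (n+1) = j0 + n + 1 := by omega
        rw [this]
        linarith
      exact le_trans h2 (ih j0 (by omega))
  have hmono' : ∀ j' j, j' ≤ j → j ≤ s → L j ≤ L j' := by
    intro j' j h1 h2
    obtain ⟨d, rfl⟩ := Nat.exists_eq_add_of_le h1
    exact hmono d j' (by omega)
  -- intervals
  set P : Finset ℤ := Finset.Ico (L 0 - B) (L 0) with hPdef
  set I : ℕ → Finset ℤ := fun j => Finset.Ico (L j) (L j + (b (w j) : ℤ)) with hIdef
  have hIj : ∀ j, I j = Finset.Ico (L j) (L j + (b (w j) : ℤ)) := fun _ => rfl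
  have hK0 : K 0 = 0 := by rw [hKj]; simp [hw0]
  have hKval : ∀ j, 1 ≤ j → j ≤ s → K j = k (w j) := by
    intro j h1 h2
    have h3 := (hwmem j h1 h2).1
    have h4 : w j ≠ 0 := by omega
    rw [hKj]; simp [h4]
  have hsub : ∀ j, 1 ≤ j → j ≤ s → I j ⊆ P := by
    intro j h1 h2 x hx
    rw [hIj, Finset.mem_Ico] at hx
    rw [hPdef, Finset.mem_Ico]
    have hwj := hwmem j h1 h2
    have hkb := (hk (w j) hwj.1 hwj.2).2
    constructor
    · -- lower bound
      have hKv := hKval j h1 h2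
      have hcc : (k (w j) : ℤ) + c (w j) ≤ (B : ℤ) + c 0 := by
        rw [hcj, hcj]
        split_ifs <;> omega
      have hL0 : L 0 = (k s : ℤ) - 0 - c 0 := by rw [hLj, hK0, hw0]; simp
      have hLjv : L j = (k s : ℤ) - (k (w j) : ℤ) - c (w j) := by
        rw [hLj, hKv]
      linarith [hx.1]
    · -- upper bound
      have h3 := hchain j h1 h2
      have h4 := hmono' 0 (j-1) (by omega) (by omega)
      linarith [hx.2]
  have hdisj : ∀ j j', 1 ≤ j → j < j' → j' ≤ s → Disjoint (I j) (I j') := by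
    intro j j' h1 h2 h3
    rw [Finset.disjoint_right]
    intro x hx hx'
    rw [hIj, Finset.mem_Ico] at hx hx'
    have h4 := hchain j' (by omega) h3
    have h5 := hmono' j (j'-1) (by omega) (by omega)
    linarith [hx.1, hx'.2]
  have hpd : ∀ j ∈ Finset.Icc 1 s, ∀ j' ∈ Finset.Icc 1 s, j ≠ j' → Disjoint (I j) (I j') := by
    intro j hj j' hj' hne
    rw [Finset.mem_Icc] at hj hj'
    rcases lt_or_gt_of_ne hne with h | h
    · exact hdisj j j' hj.1 h hj'.2
    · exact (hdisj j' j hj'.1 h hj.2).symm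
  set N : Finset ℤ := (Finset.Icc 1 s).biUnion I with hNdef
  have hNP : N ⊆ P := by
    rw [hNdef]
    refine Finset.biUnion_subset.mpr fun j hj => ?_
    rw [Finset.mem_Icc] at hj
    exact hsub j hj.1 hj.2
  -- reindexing along w
  have hreindex : ∀ (f : ℕ → ℕ),
      ∑ i ∈ Finset.Icc 1 s, f i = ∑ j ∈ Finset.Icc 1 s, f (w j) := by
    intro f
    refine (Finset.sum_bij (fun j _ => w j) ?_ ?_ ?_ ?_).symm
    · intro a ha
      rw [Finset.mem_Icc] at ha ⊢
      exact hwmem a ha.1 ha.2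
    · intro a1 h1 a2 h2 he
      rw [Finset.mem_Icc] at h1 h2
      exact hbij.injOn (Set.mem_Icc.mpr h1) (Set.mem_Icc.mpr h2) he
    · intro i hi
      rw [Finset.mem_Icc] at hi
      obtain ⟨a, ha, he⟩ := hbij.surjOn (Set.mem_Icc.mpr hi)
      exact ⟨a, Finset.mem_Icc.mpr (Set.mem_Icc.mp ha), he⟩
    · intro a _; rfl
  -- cards
  have hNcard : N.card = ∑ j ∈ Finset.Icc 1 s, b (w j) := by
    rw [hNdef, Finset.card_biUnion hpd]
    refine Finset.sum_congr rfl fun j _ => ?_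
    rw [hIj, Int.card_Ico, add_sub_cancel_left, Int.toNat_natCast]
  have hPcard : P.card = B := by
    rw [hPdef, Int.card_Ico, sub_sub_cancel, Int.toNat_natCast]
  have hBsplit : B = (∑ i ∈ Finset.Icc 1 s, b i) + b (s+1) := by
    rw [hBdef, Finset.sum_Icc_succ_top (by omega : 1 ≤ s + 1)]
  have hTcard : (P \ N).card = b (s+1) := by
    rw [Finset.card_sdiff_of_subset hNP, hPcard, hNcard, ← hreindex b]
    omega
  -- the witness
  refine ⟨fun r => (((P \ N).equivFin.symm (Fin.cast hTcard.symm r)) : ℤ), ?_⟩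
  -- RHS equals sum over P \ N
  have hRHS : (∑ r : Fin (b (s+1)),
        qq ^ ((((P \ N).equivFin.symm (Fin.cast hTcard.symm r)) : ℤ)))
      = ∑ x ∈ P \ N, qq ^ x := by
    rw [← Finset.sum_coe_sort (P \ N) (fun x => qq ^ (x : ℤ))]
    exact Fintype.sum_equiv ((finCongr hTcard.symm).trans (P \ N).equivFin.symm)
      _ _ (fun r => rfl)
  rw [hRHS]
  -- split off i = 0
  have hsplit : Finset.range (s+1) = insert 0 (Finset.Icc 1 s) := by
    ext x
    simp only [Finset.mem_range, Finset.mem_insert, Finset.mem_Icc]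
    omega
  rw [hsplit, Finset.sum_insert (by simp)]
  -- the i = 0 term
  have hL0 : L 0 = (k s : ℤ) - 0 - c 0 := by rw [hLj, hK0, hw0]; simp
  have hterm0 :
      -(((1 - qq ^ (if (0:ℕ) = 0 then -(∑ j ∈ Finset.Icc 1 (s+1), (b j : ℤ)) else ((b 0 : ℤ))))
            / (1 - qq)) *
          qq ^ ((k s : ℤ) - (if (0:ℕ) = 0 then 0 else (k 0 : ℤ)) -
            (if 0 < m then 1 else 0)))
        = ∑ x ∈ P, qq ^ x := by
    have hBZ : ∑ j ∈ Finset.Icc 1 (s+1), (b j : ℤ) = (B : ℤ) := by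
      rw [hBdef]; push_cast; ring
    simp only [reduceIte, hBZ]
    have hexp : (k s : ℤ) - 0 - (if 0 < m then (1:ℤ) else 0) = L 0 := by
      rw [hL0, hcj]
    rw [hexp]
    have key : -((1 - qq ^ (-(B:ℤ))) / (1 - qq) * qq ^ (L 0))
        = ((1 - qq ^ ((B:ℕ):ℤ)) / (1 - qq)) * qq ^ (L 0 - B) := by
      have e1 : qq ^ (L 0) = qq ^ (L 0 - (B:ℤ)) * qq ^ ((B:ℤ)) := by
        rw [← zpow_add₀ hq0]; congr 1; ring
      have e2 : qq ^ (-(B:ℤ)) * qq ^ ((B:ℤ)) = 1 := by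
        rw [← zpow_add₀ hq0]; simp
      rw [div_mul_eq_mul_div, div_mul_eq_mul_div, ← neg_div, div_eq_div_iff hq1 hq1]
      push_cast
      linear_combination (1 - qq) * ((qq ^ (-(B:ℤ)) - 1) * e1 + qq ^ (L 0 - (B:ℤ)) * e2)
    rw [key, block, hPdef]
    congr 1
    ring
  rw [neg_add, hterm0]
  -- the i ∈ [1,s] terms
  have hterms : (∑ i ∈ Finset.Icc 1 s,
        ((1 - qq ^ (if i = 0 then -(∑ j ∈ Finset.Icc 1 (s+1), (b j : ℤ)) else (b i : ℤ)))
            / (1 - qq)) *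
          qq ^ ((k s : ℤ) - (if i = 0 then 0 else (k i : ℤ)) -
            (if i < m then 1 else 0)))
      = ∑ x ∈ N, qq ^ x := by
    have step1 : ∀ i ∈ Finset.Icc 1 s,
        ((1 - qq ^ (if i = 0 then -(∑ j ∈ Finset.Icc 1 (s+1), (b j : ℤ)) else (b i : ℤ)))
            / (1 - qq)) *
          qq ^ ((k s : ℤ) - (if i = 0 then 0 else (k i : ℤ)) -
            (if i < m then 1 else 0))
        = ∑ x ∈ Finset.Ico ((k s : ℤ) - (k i : ℤ) - c i)
            ((k s : ℤ) - (k i : ℤ) - c i + (b i : ℤ)), qq ^ x := by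
      intro i hi
      rw [Finset.mem_Icc] at hi
      have hi0 : i ≠ 0 := by omega
      simp only [if_neg hi0, hcj]
      rw [block]
    rw [Finset.sum_congr rfl step1]
    -- reindex through w
    have step2 : ∑ i ∈ Finset.Icc 1 s,
        (∑ x ∈ Finset.Ico ((k s : ℤ) - (k i : ℤ) - c i)
            ((k s : ℤ) - (k i : ℤ) - c i + (b i : ℤ)), qq ^ x)
        = ∑ j ∈ Finset.Icc 1 s, ∑ x ∈ I j, qq ^ x := by
      refine (Finset.sum_bij (fun j _ => w j) ?_ ?_ ?_ ?_).symm
      · intro a ha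
        rw [Finset.mem_Icc] at ha ⊢
        exact hwmem a ha.1 ha.2
      · intro a1 h1 a2 h2 he
        rw [Finset.mem_Icc] at h1 h2
        exact hbij.injOn (Set.mem_Icc.mpr h1) (Set.mem_Icc.mpr h2) he
      · intro i hi
        rw [Finset.mem_Icc] at hi
        obtain ⟨a, ha, he⟩ := hbij.surjOn (Set.mem_Icc.mpr hi)
        exact ⟨a, Finset.mem_Icc.mpr (Set.mem_Icc.mp ha), he⟩
      · intro j hj
        rw [Finset.mem_Icc] at hj
        rw [hIj, hLj, hKval j hj.1 hj.2]
    rw [step2, hNdef, Finset.sum_biUnion]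
    intro j hj j' hj' hne
    exact hpd j hj j' hj' hne
  rw [hterms]
  -- conclude
  have hss := Finset.sum_sdiff (f := fun x => qq ^ x) hNP
  linear_combination -hss


end
end

section
/- Let n ≥ 0, let a = (a_0,…,a_n) be a composition of non-negative integers, let v ∈ ℤ^{n+1}, let λ be a partition with |λ| = |v|, let k ∈ {0,1,…,n}, and let m ∈ {0,1,…,n}. Let m' be the unique element of {1,…,n+1} with m' ≡ m−k (mod n+1), and write γ^{−(n+1−k)}(v) := (v_k,…,v_n,v_0,…,v_{k−1}) and γ^{k−n−1}(a) := (a_k,…,a_n,a_0,…,a_{k−1}). Then D_{v,λ}(a,m) = q^{v_k+⋯+v_n} · D_{γ^{−(n+1−k)}(v),λ}(γ^{k−n−1}(a), m') if m ≤ k, and D_{v,λ}(a,m) = q^{−(v_0+⋯+v_{k−1})} · D_{γ^{−(n+1−k)}(v),λ}(γ^{k−n−1}(a), m') if m > k. -/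
/- Laurent polynomials in `N` variables `x_0, …, x_{N-1}` over `K = ℚ(q)`,
constant-term extraction, the q-Dyson product, the symmetric-function data and
the constant term `D_{v,λ}(a,m)` from the paper. -/

noncomputable section

open Fin.NatCast

/-! ### Auxiliary development for the cyclic-shift identity -/

lemma qq_ne_zero : qq ≠ 0 := RatFunc.X_ne_zero

lemma CK_eq_algebraMap {N : ℕ} (c : KK) : CK (N := N) c = algebraMap KK (LL N) c := by
  rw [CK]
  rw [show (algebraMap KK (LL N)) c = AddMonoidAlgebra.single 0 ((algebraMap KK KK) c) from
    congrFun (AddMonoidAlgebra.coe_algebraMap) c]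
  simp

lemma CK_one {N : ℕ} : CK (N := N) 1 = 1 := by rw [CK_eq_algebraMap, map_one]

lemma CK_mul {N : ℕ} (b c : KK) : CK (N := N) (b * c) = CK b * CK c := by
  simp [CK_eq_algebraMap, map_mul]

lemma CK_pow {N : ℕ} (b : KK) (k : ℕ) : CK (N := N) (b ^ k) = CK b ^ k := by
  simp [CK_eq_algebraMap, map_pow]

lemma prod_CK {N : ℕ} {α : Type*} (s : Finset α) (f : α → KK) :
    ∏ i ∈ s, CK (N := N) (f i) = CK (∏ i ∈ s, f i) := by
  simp only [CK_eq_algebraMap]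
  exact (map_prod _ _ _).symm

lemma zpow_finsum {α : Type*} (s : Finset α) (f : α → ℤ) :
    qq ^ (∑ i ∈ s, f i) = ∏ i ∈ s, qq ^ f i := by
  classical
  induction s using Finset.induction_on with
  | empty => simp
  | @insert a s' h ih => rw [Finset.sum_insert h, Finset.prod_insert h,
      zpow_add₀ qq_ne_zero, ih]

/-! ### The substitution homomorphism -/

def rotE (n : ℕ) : Fin (n+1) ≃ Fin (n+1) := Equiv.addRight 1

def Amap (n : ℕ) (f : Fin (n+1) →₀ ℤ) : Fin (n+1) →₀ ℤ := Finsupp.equivMapDomain (rotE n) f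

lemma Amap_add (n : ℕ) (f g : Fin (n+1) →₀ ℤ) : Amap n (f + g) = Amap n f + Amap n g := by
  ext b; simp [Amap, Finsupp.equivMapDomain_apply]

lemma Amap_zero (n : ℕ) : Amap n 0 = 0 := by
  ext b; simp [Amap, Finsupp.equivMapDomain_apply]

lemma Amap_single (n : ℕ) (i : Fin (n+1)) (e : ℤ) :
    Amap n (Finsupp.single i e) = Finsupp.single (i + 1) e := by
  simp [Amap, Finsupp.equivMapDomain_single, rotE]

lemma Amap_eq_zero_iff (n : ℕ) (f : Fin (n+1) →₀ ℤ) : Amap n f = 0 ↔ f = 0 := by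
  constructor
  · intro h; ext i
    have := DFunLike.congr_fun h (rotE n i)
    simpa [Amap, Finsupp.equivMapDomain_apply] using this
  · rintro rfl; exact Amap_zero n

def Fhom (n : ℕ) : Multiplicative (Fin (n+1) →₀ ℤ) →* LL (n+1) where
  toFun e := AddMonoidAlgebra.single (Amap n (Multiplicative.toAdd e))
      (qq ^ (-(Multiplicative.toAdd e (Fin.last n))))
  map_one' := by
    simp [Amap_zero, AddMonoidAlgebra.one_def]
  map_mul' e f := by
    simp only [toAdd_mul, Amap_add, Finsupp.add_apply, neg_add, AddMonoidAlgebra.single_mul_single]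
    rw [zpow_add₀ qq_ne_zero]

def phi (n : ℕ) : LL (n+1) →ₐ[KK] LL (n+1) :=
  AddMonoidAlgebra.lift KK (LL (n+1)) (Fin (n+1) →₀ ℤ) (Fhom n)

lemma phi_single (n : ℕ) (e : Fin (n+1) →₀ ℤ) (c : KK) :
    phi n (AddMonoidAlgebra.single e c)
      = AddMonoidAlgebra.single (Amap n e) (c * qq ^ (-(e (Fin.last n)))) := by
  rw [phi, AddMonoidAlgebra.lift_single]
  simp [Fhom, Finsupp.smul_single, smul_eq_mul]

lemma phi_CT (n : ℕ) (f : LL (n+1)) : (phi n f).coeff 0 = f.coeff 0 := by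
  induction f using AddMonoidAlgebra.induction_linear with
  | zero => simp
  | add f g hf hg =>
    rw [map_add, AddMonoidAlgebra.coeff_add, AddMonoidAlgebra.coeff_add, Finsupp.add_apply,
      Finsupp.add_apply, hf, hg]
  | single a b =>
    rw [phi_single]
    by_cases h : a = 0
    · subst h; simp [Amap_zero, AddMonoidAlgebra.coeff_single, Finsupp.single_apply]
    · rw [AddMonoidAlgebra.coeff_single, AddMonoidAlgebra.coeff_single,
        Finsupp.single_apply, Finsupp.single_apply]
      rw [if_neg (by simpa [Amap_eq_zero_iff] using h), if_neg (by simpa using h)]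

lemma phi_CK (n : ℕ) (c : KK) : phi n (CK c) = CK c := by
  rw [CK_eq_algebraMap, (phi n).commutes, ← CK_eq_algebraMap]

lemma CK_mul_Xm (n : ℕ) (c : KK) (j : Fin (n+1)) (e : ℤ) :
    CK c * Xm j e = AddMonoidAlgebra.single (Finsupp.single j e) c := by
  rw [CK, Xm, AddMonoidAlgebra.single_mul_single, zero_add, mul_one]

lemma phi_Xm (n : ℕ) (i : Fin (n+1)) (e : ℤ) :
    phi n (Xm i e) = CK (qq ^ (-(if i = Fin.last n then e else 0))) * Xm (i + 1) e := by
  rw [Xm, phi_single, Amap_single, CK_mul_Xm, one_mul, Finsupp.single_apply]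

/-! ### The Dyson product under the substitution -/

def dTerm {N : ℕ} (a : Fin N → ℕ) (p : Fin N × Fin N) : LL N :=
  qPochL (CK (qq ^ (if p.2 < p.1 then (1:ℤ) else 0)) * Xm p.1 1 * Xm p.2 (-1)) (a p.1)

lemma dysonProd_eq {N : ℕ} (a : Fin N → ℕ) :
    dysonProd a = ∏ p ∈ Finset.univ.filter (fun p : Fin N × Fin N => p.1 ≠ p.2), dTerm a p := by
  classical
  have hsplit : (Finset.univ.filter (fun p : Fin N × Fin N => p.1 ≠ p.2))
      = (Finset.univ.filter (fun p : Fin N × Fin N => p.1 < p.2)) ∪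
        (Finset.univ.filter (fun p : Fin N × Fin N => p.2 < p.1)) := by
    rw [← Finset.filter_or]
    apply Finset.filter_congr
    intro p _
    exact ne_iff_lt_or_gt
  rw [hsplit, Finset.prod_union]
  · have h2 : ∏ p ∈ Finset.univ.filter (fun p : Fin N × Fin N => p.2 < p.1), dTerm a p
        = ∏ p ∈ Finset.univ.filter (fun p : Fin N × Fin N => p.1 < p.2), dTerm a p.swap := by
      apply Finset.prod_nbij' (fun p => p.swap) (fun p => p.swap) <;> simp
    rw [h2, ← Finset.prod_mul_distrib, dysonProd]
    apply Finset.prod_congr rfl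
    intro p hp
    have hlt : p.1 < p.2 := by simpa using hp
    rw [dTerm, dTerm]
    simp only [Prod.fst_swap, Prod.snd_swap, if_neg (asymm hlt), if_pos hlt]
    rw [zpow_zero, zpow_one, CK_one, one_mul]
  · rw [Finset.disjoint_filter]
    intro p _ h1
    simp only [not_lt]
    exact le_of_lt h1

lemma chi_rot (n : ℕ) (p1 p2 : Fin (n+1)) (hp : p1 ≠ p2) :
    ((if p2 < p1 then (1:ℤ) else 0) - (if p1 = Fin.last n then 1 else 0)
      + (if p2 = Fin.last n then 1 else 0)) = (if p2 + 1 < p1 + 1 then 1 else 0) := by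
  have h1 := Fin.val_add_one p1
  have h2 := Fin.val_add_one p2
  have hv1 := p1.isLt
  have hv2 := p2.isLt
  have hne : p1.val ≠ p2.val := fun h => hp (Fin.ext h)
  simp only [Fin.lt_def, Fin.ext_iff, Fin.val_last] at *
  split_ifs at h1 h2 ⊢ <;> omega

lemma phi_qPochL (n : ℕ) (z : LL (n+1)) (k : ℕ) :
    phi n (qPochL z k) = qPochL (phi n z) k := by
  rw [qPochL, map_prod, qPochL]
  apply Finset.prod_congr rfl
  intro i _
  rw [map_sub, map_one, map_mul, phi_CK]

lemma phi_dTerm (n : ℕ) (a : Fin (n+1) → ℕ) (p : Fin (n+1) × Fin (n+1)) (hp : p.1 ≠ p.2) :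
    phi n (dTerm a p) = dTerm (fun j => a (j - 1)) (p.1 + 1, p.2 + 1) := by
  rw [dTerm, phi_qPochL, dTerm]
  have harg : phi n (CK (qq ^ (if p.2 < p.1 then (1:ℤ) else 0)) * Xm p.1 1 * Xm p.2 (-1))
      = CK (qq ^ (if p.2 + 1 < p.1 + 1 then (1:ℤ) else 0)) * Xm (p.1 + 1) 1 * Xm (p.2 + 1) (-1) := by
    rw [map_mul, map_mul, phi_CK, phi_Xm, phi_Xm]
    have : (-(if p.2 = Fin.last n then (-1:ℤ) else 0)) = (if p.2 = Fin.last n then (1:ℤ) else 0) := by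
      split_ifs <;> ring
    rw [this]
    have hexp : qq ^ (if p.2 < p.1 then (1:ℤ) else 0)
        * qq ^ (-(if p.1 = Fin.last n then (1:ℤ) else 0))
        * qq ^ (if p.2 = Fin.last n then (1:ℤ) else 0)
        = qq ^ (if p.2 + 1 < p.1 + 1 then (1:ℤ) else 0) := by
      rw [← zpow_add₀ qq_ne_zero, ← zpow_add₀ qq_ne_zero, ← chi_rot n p.1 p.2 hp]
      ring_nf
    calc CK (qq ^ (if p.2 < p.1 then (1:ℤ) else 0))
          * (CK (qq ^ (-(if p.1 = Fin.last n then (1:ℤ) else 0))) * Xm (p.1 + 1) 1)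
          * (CK (qq ^ (if p.2 = Fin.last n then (1:ℤ) else 0)) * Xm (p.2 + 1) (-1))
        = (CK (qq ^ (if p.2 < p.1 then (1:ℤ) else 0))
            * CK (qq ^ (-(if p.1 = Fin.last n then (1:ℤ) else 0)))
            * CK (qq ^ (if p.2 = Fin.last n then (1:ℤ) else 0)))
          * Xm (p.1 + 1) 1 * Xm (p.2 + 1) (-1) := by ring
      _ = _ := by rw [← CK_mul, ← CK_mul, hexp]
  rw [harg]
  congr 1
  show a p.1 = a (p.1 + 1 - 1)
  rw [add_sub_cancel_right]

lemma phi_dysonProd (n : ℕ) (a : Fin (n+1) → ℕ) :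
    phi n (dysonProd a) = dysonProd (fun j => a (j - 1)) := by
  rw [dysonProd_eq, dysonProd_eq, map_prod]
  apply Finset.prod_nbij' (fun p : Fin (n+1) × Fin (n+1) => (p.1 + 1, p.2 + 1))
    (fun p : Fin (n+1) × Fin (n+1) => (p.1 - 1, p.2 - 1))
  · intro p hp
    simp only [Finset.mem_filter, Finset.mem_univ, true_and] at *
    exact fun h => hp (by simpa using h)
  · intro p hp
    simp only [Finset.mem_filter, Finset.mem_univ, true_and] at *
    exact fun h => hp (by rw [← sub_add_cancel p.1 1, ← sub_add_cancel p.2 1, h])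
  · intro p _; simp [add_sub_cancel_right]
  · intro p _; simp [sub_add_cancel]
  · intro p hp
    exact phi_dTerm n a p (by simpa using hp)

/-! ### The symmetric functions under the substitution -/

lemma hsym_reindex {N : ℕ} {ι κ : Type} [Fintype ι] [DecidableEq ι] [Fintype κ] [DecidableEq κ]
    (E : ι ≃ κ) (y : κ → LL N) (r : ℕ) : hsym (fun i => y (E i)) r = hsym y r := by
  classical
  rw [hsym, hsym]
  apply Finset.sum_nbij' (fun c => fun j => c (E.symm j)) (fun d => fun i => d (E i))
  · intro c hc
    rw [Finset.mem_piAntidiag] at *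
    refine ⟨?_, fun i _ => Finset.mem_univ i⟩
    rw [← hc.1]
    exact Fintype.sum_equiv E.symm _ _ (fun j => rfl)
  · intro d hd
    rw [Finset.mem_piAntidiag] at *
    refine ⟨?_, fun i _ => Finset.mem_univ i⟩
    rw [← hd.1]
    exact Fintype.sum_equiv E _ _ (fun j => rfl)
  · intro c _; funext i; simp
  · intro d _; funext j; simp
  · intro c _
    exact Fintype.prod_equiv E _ _ (fun i => by simp)

lemma hsym_smul {N : ℕ} {ι : Type} [Fintype ι] [DecidableEq ι] (c : KK) (y : ι → LL N) (r : ℕ) :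
    hsym (fun i => y i * CK c) r = CK (c ^ r) * hsym y r := by
  classical
  rw [hsym, hsym, Finset.mul_sum]
  apply Finset.sum_congr rfl
  intro d hd
  rw [Finset.mem_piAntidiag] at hd
  calc ∏ i, (y i * CK c) ^ d i = (∏ i, y i ^ d i) * ∏ i, (CK c) ^ d i := by
        rw [← Finset.prod_mul_distrib]; exact Finset.prod_congr rfl fun i _ => mul_pow _ _ _
    _ = (∏ i, y i ^ d i) * CK (c ^ r) := by
        rw [Finset.prod_pow_eq_pow_sum, hd.1, CK_pow]
    _ = CK (c ^ r) * ∏ i, y i ^ d i := mul_comm _ _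

lemma phi_hsym (n : ℕ) {ι : Type} [Fintype ι] [DecidableEq ι] (y : ι → LL (n+1)) (r : ℕ) :
    phi n (hsym y r) = hsym (fun i => phi n (y i)) r := by
  rw [hsym, map_sum, hsym]
  apply Finset.sum_congr rfl
  intro c _
  rw [map_prod]
  exact Finset.prod_congr rfl fun i _ => map_pow _ _ _

lemma chi_alpha (n : ℕ) (m : ℕ) (hm : m ≤ n) (i : Fin (n+1)) :
    ((if ((i+1 : Fin (n+1)) : ℕ) < m + 1 then (1:ℤ) else 0))
      = (if (i : ℕ) < m then (1:ℤ) else 0) + (if i = Fin.last n then 1 else 0) := by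
  have h1 := Fin.val_add_one i
  have hv := i.isLt
  simp only [Fin.ext_iff, Fin.val_last] at *
  split_ifs at h1 ⊢ <;> omega

def alphaEquiv (n : ℕ) (a : Fin (n+1) → ℕ) :
    ((i : Fin (n+1)) × Fin (a i)) ≃ ((j : Fin (n+1)) × Fin (a (j - 1))) :=
  Equiv.sigmaCongr (Equiv.addRight 1)
    (fun i => finCongr (congrArg a (add_sub_cancel_right i 1).symm))

lemma phi_alphabet (n : ℕ) (a : Fin (n+1) → ℕ) (m : ℕ) (hm : m ≤ n)
    (p : (i : Fin (n+1)) × Fin (a i)) :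
    phi n (alphabetX a m p) = alphabetX (fun j => a (j - 1)) (m+1) (alphaEquiv n a p) := by
  obtain ⟨i, j⟩ := p
  have happ : alphaEquiv n a ⟨i, j⟩
      = ⟨i + 1, finCongr (congrArg a (add_sub_cancel_right i 1).symm) j⟩ := rfl
  rw [happ, alphabetX, alphabetX, map_mul, phi_Xm, phi_CK]
  simp only [finCongr_apply, Fin.coe_cast]
  have heq : (-(if i = Fin.last n then (1:ℤ) else 0)) + ((j : ℤ) - (if (i : ℕ) < m then 1 else 0))
      = (j : ℤ) - (if ((i+1 : Fin (n+1)) : ℕ) < m + 1 then 1 else 0) := by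
    rw [chi_alpha n m hm i]; ring
  calc CK (qq ^ (-(if i = Fin.last n then (1:ℤ) else 0))) * Xm (i+1) 1
        * CK (qq ^ ((j : ℤ) - (if (i : ℕ) < m then 1 else 0)))
      = Xm (i+1) 1 * (CK (qq ^ (-(if i = Fin.last n then (1:ℤ) else 0)))
          * CK (qq ^ ((j : ℤ) - (if (i : ℕ) < m then 1 else 0)))) := by ring
    _ = _ := by rw [← CK_mul, ← zpow_add₀ qq_ne_zero, heq]

lemma phi_hPart (n : ℕ) (a : Fin (n+1) → ℕ) (m : ℕ) (hm : m ≤ n) (lam : List ℕ) :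
    phi n (hPart a m lam) = hPart (fun j => a (j - 1)) (m+1) lam := by
  rw [hPart, hPart, map_list_prod]
  congr 1
  rw [List.map_map]
  apply List.map_congr_left
  intro r _
  show phi n (hsym (alphabetX a m) r) = hsym (alphabetX (fun j => a (j-1)) (m+1)) r
  rw [phi_hsym]
  rw [show (fun p => phi n (alphabetX a m p))
      = (fun p => alphabetX (fun j => a (j - 1)) (m+1) (alphaEquiv n a p)) from
    funext (phi_alphabet n a m hm)]
  exact hsym_reindex (alphaEquiv n a) _ r

lemma hPart_cons {N : ℕ} (a : Fin N → ℕ) (m : ℕ) (r : ℕ) (t : List ℕ) :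
    hPart a m (r :: t) = hsym (alphabetX a m) r * hPart a m t := by
  rw [hPart, List.map_cons, List.prod_cons, hPart]

lemma alphabet_wrap {n : ℕ} (a : Fin (n+1) → ℕ) (p : (i : Fin (n+1)) × Fin (a i)) :
    alphabetX a (n+1) p = alphabetX a 0 p * CK (qq ^ (-1 : ℤ)) := by
  rw [alphabetX, alphabetX, if_pos (by omega : ((p.1 : ℕ) < n+1)), if_neg (by omega)]
  rw [mul_assoc, ← CK_mul, ← zpow_add₀ qq_ne_zero]
  ring_nf

lemma hPart_wrap {n : ℕ} (a : Fin (n+1) → ℕ) (lam : List ℕ) :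
    hPart a (n+1) lam = CK (qq ^ (-(lam.sum : ℤ))) * hPart a 0 lam := by
  induction lam with
  | nil => simp [hPart, CK_one]
  | cons r t ih =>
    rw [hPart_cons, hPart_cons]
    rw [show hsym (alphabetX a (n+1)) r = CK ((qq ^ (-1:ℤ)) ^ r) * hsym (alphabetX a 0) r from by
      rw [← hsym_smul]; congr 1; exact funext (alphabet_wrap a)]
    rw [ih]
    have hck : CK (N := n+1) ((qq ^ (-1:ℤ)) ^ r) * CK (qq ^ (-(t.sum : ℤ)))
        = CK (qq ^ (-(((r :: t : List ℕ)).sum : ℤ))) := by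
      rw [← CK_mul, ← zpow_natCast (qq ^ (-1:ℤ)) r, ← zpow_mul, ← zpow_add₀ qq_ne_zero]
      congr 1
      push_cast [List.sum_cons]
      ring
    calc CK ((qq ^ (-1:ℤ)) ^ r) * hsym (alphabetX a 0) r * (CK (qq ^ (-(t.sum : ℤ))) * hPart a 0 t)
        = (CK ((qq ^ (-1:ℤ)) ^ r) * CK (qq ^ (-(t.sum : ℤ))))
          * (hsym (alphabetX a 0) r * hPart a 0 t) := by ring
      _ = _ := by rw [hck]

/-! ### Step, wrap and iteration for `Dterm` -/

lemma CK_mul_CT {N : ℕ} (c : KK) (f : LL N) : CT (CK c * f) = c * CT f :=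
  AddMonoidAlgebra.coeff_single_zero_mul f c 0

lemma phi_CT' (n : ℕ) (f : LL (n+1)) : CT (phi n f) = CT f := phi_CT n f

lemma phi_Xm_prod (n : ℕ) (v : Fin (n+1) → ℤ) :
    phi n (∏ i, Xm i (-(v i)))
      = CK (qq ^ (v (Fin.last n))) * ∏ i, Xm i (-(v (i - 1))) := by
  rw [map_prod]
  have h1 : ∀ i : Fin (n+1), phi n (Xm i (-(v i)))
      = CK (qq ^ (if i = Fin.last n then v i else 0)) * Xm (i+1) (-(v i)) := by
    intro i; rw [phi_Xm]
    congr 2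
    split_ifs <;> ring
  rw [Finset.prod_congr rfl (fun i _ => h1 i), Finset.prod_mul_distrib, prod_CK]
  congr 1
  · congr 1
    rw [← zpow_finsum]
    congr 1
    rw [Finset.sum_ite_eq' Finset.univ (Fin.last n) v]
    simp
  · exact Fintype.prod_equiv (Equiv.addRight 1) _ _
      (fun i => by simp [add_sub_cancel_right])

lemma Dterm_step (n : ℕ) (v : Fin (n+1) → ℤ) (lam : List ℕ) (a : Fin (n+1) → ℕ)
    (m : ℕ) (hm : m ≤ n) :
    Dterm (n+1) v lam a m
      = qq ^ (v (Fin.last n))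
        * Dterm (n+1) (fun i => v (i - 1)) lam (fun i => a (i - 1)) (m+1) := by
  rw [Dterm, Dterm, ← phi_CT' n, map_mul, map_mul, phi_hPart n a m hm,
    phi_dysonProd, phi_Xm_prod]
  have hre : (CK (qq ^ (v (Fin.last n))) * ∏ i, Xm i (-(v (i - 1))))
        * hPart (fun j => a (j-1)) (m+1) lam * dysonProd (fun j => a (j-1))
      = CK (qq ^ (v (Fin.last n))) * ((∏ i, Xm i (-(v (i - 1))))
        * hPart (fun j => a (j-1)) (m+1) lam * dysonProd (fun j => a (j-1))) := by ring
  rw [hre, CK_mul_CT]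

lemma Dterm_wrap (n : ℕ) (v : Fin (n+1) → ℤ) (lam : List ℕ) (a : Fin (n+1) → ℕ) :
    Dterm (n+1) v lam a (n+1) = qq ^ (-(lam.sum : ℤ)) * Dterm (n+1) v lam a 0 := by
  rw [Dterm, Dterm, hPart_wrap]
  have hre : (∏ i, Xm i (-(v i))) * (CK (qq ^ (-(lam.sum : ℤ))) * hPart a 0 lam) * dysonProd a
      = CK (qq ^ (-(lam.sum : ℤ))) * ((∏ i, Xm i (-(v i))) * hPart a 0 lam * dysonProd a) := by
    ring
  rw [hre, CK_mul_CT]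

lemma Dterm_iter (n : ℕ) (lam : List ℕ) (t : ℕ) :
    ∀ (v : Fin (n+1) → ℤ) (a : Fin (n+1) → ℕ) (m : ℕ), m + t ≤ n+1 →
    Dterm (n+1) v lam a m
      = qq ^ (∑ s ∈ Finset.range t, v (Fin.last n - ((s : ℕ) : Fin (n+1))))
        * Dterm (n+1) (fun i => v (i - ((t : ℕ) : Fin (n+1)))) lam
            (fun i => a (i - ((t : ℕ) : Fin (n+1)))) (m + t) := by
  induction t with
  | zero => intro v a m _; simp
  | succ t ih =>
    intro v a m hm
    rw [Dterm_step n v lam a m (by omega)]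
    rw [ih (fun i => v (i - 1)) (fun i => a (i - 1)) (m+1) (by omega)]
    rw [← mul_assoc, ← zpow_add₀ qq_ne_zero]
    have hcast : ((t + 1 : ℕ) : Fin (n+1)) = ((t : ℕ) : Fin (n+1)) + 1 := by push_cast; ring
    have hv : (fun i : Fin (n+1) => v (i - ((t : ℕ) : Fin (n+1)) - 1))
        = (fun i : Fin (n+1) => v (i - ((t + 1 : ℕ) : Fin (n+1)))) := by
      funext i; rw [hcast, sub_sub]
    have ha : (fun i : Fin (n+1) => a (i - ((t : ℕ) : Fin (n+1)) - 1))
        = (fun i : Fin (n+1) => a (i - ((t + 1 : ℕ) : Fin (n+1)))) := by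
      funext i; rw [hcast, sub_sub]
    have hexp : v (Fin.last n) + (∑ s ∈ Finset.range t, v (Fin.last n - ((s : ℕ) : Fin (n+1)) - 1))
        = ∑ s ∈ Finset.range (t+1), v (Fin.last n - ((s : ℕ) : Fin (n+1))) := by
      rw [Finset.sum_range_succ']
      rw [add_comm]
      congr 1
      · apply Finset.sum_congr rfl
        intro s _
        congr 1
        rw [show ((s + 1 : ℕ) : Fin (n+1)) = ((s : ℕ) : Fin (n+1)) + 1 by push_cast; ring,
          sub_sub]
      · simp
    rw [hv, ha, hexp, show m + 1 + t = m + (t+1) from by omega]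

/-! ### Index bookkeeping -/

lemma fin_last_sub (n s : ℕ) (hs : s ≤ n) :
    Fin.last n - ((s : ℕ) : Fin (n+1)) = ((n - s : ℕ) : Fin (n+1)) := by
  rw [sub_eq_iff_eq_add, ← Nat.cast_add, show n - s + s = n from by omega,
    Fin.natCast_eq_last]

lemma fin_rot_eq (n : ℕ) (k : Fin (n+1)) (i : Fin (n+1)) :
    i - ((n + 1 - (k : ℕ) : ℕ) : Fin (n+1)) = k + i := by
  have h : ((n + 1 - (k : ℕ) : ℕ) : Fin (n+1)) = -k := by
    have h0 : ((n + 1 - (k : ℕ) : ℕ) : Fin (n+1)) + (((k : ℕ) : ℕ) : Fin (n+1)) = 0 := by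
      rw [← Nat.cast_add, show n + 1 - (k : ℕ) + (k : ℕ) = n + 1 from by
        have := k.isLt; omega]
      exact Fin.natCast_self (n+1)
    rw [Fin.cast_val_eq_self] at h0
    exact eq_neg_of_add_eq_zero_left h0
  rw [h, sub_neg_eq_add]
  exact add_comm i k

lemma sum_shift (n : ℕ) (v : Fin (n+1) → ℤ) (c t : ℕ) (hct : c + t ≤ n+1) (hcn : c ≤ n) :
    ∑ s ∈ Finset.range t, v (((n - c - s : ℕ) : Fin (n+1)))
      = ∑ i ∈ Finset.univ.filter
          (fun i : Fin (n+1) => n+1-c-t ≤ (i : ℕ) ∧ (i : ℕ) ≤ n - c), v i := by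
  apply Finset.sum_nbij' (fun s => ((n - c - s : ℕ) : Fin (n+1)))
    (fun i : Fin (n+1) => n - c - (i : ℕ))
  · intro s hs
    rw [Finset.mem_range] at hs
    rw [Finset.mem_filter]
    refine ⟨Finset.mem_univ _, ?_⟩
    rw [Fin.val_cast_of_lt (by omega)]
    omega
  · intro i hi
    rw [Finset.mem_filter] at hi
    rw [Finset.mem_range]
    omega
  · intro s hs
    rw [Finset.mem_range] at hs
    rw [Fin.val_cast_of_lt (by omega)]
    omega
  · intro i hi
    rw [Finset.mem_filter] at hi
    apply Fin.ext
    rw [Fin.val_cast_of_lt (by omega)]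
    omega
  · intro s _
    rfl

/-- **Equation (5.5) (cyclic shift).** For `0 ≤ m ≤ n`, `0 ≤ k ≤ n`, and `m'` the unique
element of `{1,…,n+1}` with `m' ≡ m - k (mod n+1)`:
`D_{v,λ}(a,m) = q^{v_k+⋯+v_n} D_{γ^{-(n+1-k)}(v),λ}(γ^{k-n-1}(a), m')` if `m ≤ k`, and
`D_{v,λ}(a,m) = q^{-(v_0+⋯+v_{k-1})} D_{γ^{-(n+1-k)}(v),λ}(γ^{k-n-1}(a), m')` if `m > k`,
where `γ^{-(n+1-k)}(v) = (v_k,…,v_n,v_0,…,v_{k-1})` is cyclic rotation. -/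
theorem Dterm_cycle (n : ℕ) (a : Fin (n+1) → ℕ) (v : Fin (n+1) → ℤ) (lam : List ℕ)
    (hpart : lam.Pairwise (· ≥ ·)) (hsum : (lam.sum : ℤ) = ∑ i, v i)
    (k : Fin (n+1)) (m m' : ℕ) (hm : m ≤ n) (hm'1 : 1 ≤ m') (hm'2 : m' ≤ n+1)
    (hcong : (m' : ℤ) ≡ (m : ℤ) - ((k : ℕ) : ℤ) [ZMOD (n+1)]) :
    (m ≤ (k : ℕ) →
      Dterm (n+1) v lam a m =
        qq ^ (∑ i ∈ Finset.univ.filter (fun i : Fin (n+1) => (k : ℕ) ≤ (i : ℕ)), v i) *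
          Dterm (n+1) (fun i => v (k + i)) lam (fun i => a (k + i)) m') ∧
    ((k : ℕ) < m →
      Dterm (n+1) v lam a m =
        qq ^ (-(∑ i ∈ Finset.univ.filter (fun i : Fin (n+1) => (i : ℕ) < (k : ℕ)), v i)) *
          Dterm (n+1) (fun i => v (k + i)) lam (fun i => a (k + i)) m') := by
  have hk := k.isLt
  have hdvd : ((n : ℤ) + 1) ∣ ((m : ℤ) - (k : ℕ) - m') := by
    have := hcong.dvd
    push_cast at this ⊢
    convert this using 2
  constructor
  · -- case m ≤ k
    intro h1
    set t : ℕ := n + 1 - (k : ℕ) with ht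
    have hm' : m + t = m' := by
      have habs : |(m : ℤ) - (k : ℕ) - m' + (n + 1)| < (n : ℤ) + 1 := by
        rw [abs_lt]
        constructor <;> push_cast <;> omega
      have hz : (m : ℤ) - (k : ℕ) - m' + (n + 1) = 0 :=
        Int.eq_zero_of_abs_lt_dvd (dvd_add hdvd dvd_rfl) habs
      omega
    have hiter := Dterm_iter n lam t v a m (by omega)
    have hexp : (∑ s ∈ Finset.range t, v (Fin.last n - ((s : ℕ) : Fin (n+1))))
        = ∑ i ∈ Finset.univ.filter (fun i : Fin (n+1) => (k : ℕ) ≤ (i : ℕ)), v i := by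
      calc (∑ s ∈ Finset.range t, v (Fin.last n - ((s : ℕ) : Fin (n+1))))
          = ∑ s ∈ Finset.range t, v (((n - 0 - s : ℕ) : Fin (n+1))) := by
            apply Finset.sum_congr rfl
            intro s hs
            rw [Finset.mem_range] at hs
            rw [fin_last_sub n s (by omega)]
            congr 2 <;> omega
        _ = ∑ i ∈ Finset.univ.filter
              (fun i : Fin (n+1) => n+1-0-t ≤ (i : ℕ) ∧ (i : ℕ) ≤ n - 0), v i :=
            sum_shift n v 0 t (by omega) (by omega)
        _ = _ := by
            apply Finset.sum_congr _ (fun _ _ => rfl)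
            apply Finset.filter_congr
            intro i _
            have := i.isLt
            constructor
            · intro hh; omega
            · intro hh; omega
    have hfv : (fun i : Fin (n+1) => v (i - ((t : ℕ) : Fin (n+1)))) = fun i => v (k + i) :=
      funext fun i => congrArg v (fin_rot_eq n k i)
    have hfa : (fun i : Fin (n+1) => a (i - ((t : ℕ) : Fin (n+1)))) = fun i => a (k + i) :=
      funext fun i => congrArg a (fin_rot_eq n k i)
    rw [hexp, hfv, hfa, hm'] at hiter
    exact hiter
  · -- case k < m
    intro h2
    set t₁ : ℕ := n + 1 - m with ht₁
    set t₂ : ℕ := m - (k : ℕ) with ht₂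
    have hm' : m' = t₂ := by
      have habs : |(m : ℤ) - (k : ℕ) - m'| < (n : ℤ) + 1 := by
        rw [abs_lt]
        constructor <;> push_cast <;> omega
      have hz : (m : ℤ) - (k : ℕ) - m' = 0 := Int.eq_zero_of_abs_lt_dvd hdvd habs
      omega
    set w₁ : Fin (n+1) → ℤ := fun i => v (i - ((t₁ : ℕ) : Fin (n+1))) with hw₁
    set b₁ : Fin (n+1) → ℕ := fun i => a (i - ((t₁ : ℕ) : Fin (n+1))) with hb₁
    have h₁ := Dterm_iter n lam t₁ v a m (by omega)
    rw [show m + t₁ = n + 1 from by omega] at h₁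
    have h₂ := Dterm_wrap n w₁ lam b₁
    have h₃ := Dterm_iter n lam t₂ w₁ b₁ 0 (by omega)
    rw [zero_add] at h₃
    rw [h₂, h₃, ← mul_assoc, ← mul_assoc, ← zpow_add₀ qq_ne_zero, ← zpow_add₀ qq_ne_zero,
      hsum] at h₁
    have hE₁ : (∑ s ∈ Finset.range t₁, v (Fin.last n - ((s : ℕ) : Fin (n+1))))
        = ∑ i ∈ Finset.univ.filter
            (fun i : Fin (n+1) => n+1-0-t₁ ≤ (i : ℕ) ∧ (i : ℕ) ≤ n - 0), v i := by
      calc (∑ s ∈ Finset.range t₁, v (Fin.last n - ((s : ℕ) : Fin (n+1))))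
          = ∑ s ∈ Finset.range t₁, v (((n - 0 - s : ℕ) : Fin (n+1))) := by
            apply Finset.sum_congr rfl
            intro s hs
            rw [Finset.mem_range] at hs
            rw [fin_last_sub n s (by omega)]
            congr 2 <;> omega
        _ = _ := sum_shift n v 0 t₁ (by omega) (by omega)
    have hE₂ : (∑ s ∈ Finset.range t₂, w₁ (Fin.last n - ((s : ℕ) : Fin (n+1))))
        = ∑ i ∈ Finset.univ.filter
            (fun i : Fin (n+1) => n+1-t₁-t₂ ≤ (i : ℕ) ∧ (i : ℕ) ≤ n - t₁), v i := by
      calc (∑ s ∈ Finset.range t₂, w₁ (Fin.last n - ((s : ℕ) : Fin (n+1))))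
          = ∑ s ∈ Finset.range t₂, v (((n - t₁ - s : ℕ) : Fin (n+1))) := by
            apply Finset.sum_congr rfl
            intro s hs
            rw [Finset.mem_range] at hs
            rw [hw₁]
            show v (Fin.last n - ((s : ℕ) : Fin (n+1)) - ((t₁ : ℕ) : Fin (n+1))) = _
            congr 1
            rw [sub_sub, ← Nat.cast_add, show (s : ℕ) + t₁ = s + t₁ from rfl]
            rw [show Fin.last n - ((s + t₁ : ℕ) : Fin (n+1)) = ((n - (s + t₁) : ℕ) : Fin (n+1))
              from fin_last_sub n (s + t₁) (by omega)]
            congr 1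
            omega
        _ = _ := sum_shift n v t₁ t₂ (by omega) (by omega)
    have hfv : (fun i : Fin (n+1) => w₁ (i - ((t₂ : ℕ) : Fin (n+1)))) = fun i => v (k + i) := by
      funext i
      rw [hw₁]
      show v (i - ((t₂ : ℕ) : Fin (n+1)) - ((t₁ : ℕ) : Fin (n+1))) = _
      congr 1
      rw [sub_sub, ← Nat.cast_add, show t₂ + t₁ = n + 1 - (k : ℕ) from by omega]
      exact fin_rot_eq n k i
    have hfa : (fun i : Fin (n+1) => b₁ (i - ((t₂ : ℕ) : Fin (n+1)))) = fun i => a (k + i) := by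
      funext i
      rw [hb₁]
      show a (i - ((t₂ : ℕ) : Fin (n+1)) - ((t₁ : ℕ) : Fin (n+1))) = _
      congr 1
      rw [sub_sub, ← Nat.cast_add, show t₂ + t₁ = n + 1 - (k : ℕ) from by omega]
      exact fin_rot_eq n k i
    rw [hE₁, hE₂, hfv, hfa] at h₁
    have hfinal : (∑ i ∈ Finset.univ.filter
            (fun i : Fin (n+1) => n+1-0-t₁ ≤ (i : ℕ) ∧ (i : ℕ) ≤ n - 0), v i)
          + -(∑ i, v i)
          + (∑ i ∈ Finset.univ.filter
            (fun i : Fin (n+1) => n+1-t₁-t₂ ≤ (i : ℕ) ∧ (i : ℕ) ≤ n - t₁), v i)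
        = -(∑ i ∈ Finset.univ.filter (fun i : Fin (n+1) => (i : ℕ) < (k : ℕ)), v i) := by
      have hsplit : (∑ i ∈ Finset.univ.filter
            (fun i : Fin (n+1) => n+1-0-t₁ ≤ (i : ℕ) ∧ (i : ℕ) ≤ n - 0), v i)
          + (∑ i ∈ Finset.univ.filter
            (fun i : Fin (n+1) => n+1-t₁-t₂ ≤ (i : ℕ) ∧ (i : ℕ) ≤ n - t₁), v i)
          + (∑ i ∈ Finset.univ.filter (fun i : Fin (n+1) => (i : ℕ) < (k : ℕ)), v i)
          = ∑ i, v i := by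
        rw [Finset.sum_filter, Finset.sum_filter, Finset.sum_filter,
          ← Finset.sum_add_distrib, ← Finset.sum_add_distrib]
        apply Finset.sum_congr rfl
        intro i _
        have hi := i.isLt
        split_ifs <;> first | ring1 | (exfalso; omega)
      linarith
    rw [hfinal, ← hm'] at h₁
    exact h₁

end
end

section
/- (Dyson's constant term identity.) Let n ≥ 0 and let a_0,…,a_n be non-negative integers. Then CT_x ∏_{0≤i≠j≤n}(1−x_i/x_j)^{a_i} = (a_0+a_1+⋯+a_n)! / (a_0! a_1! ⋯ a_n!). -/
noncomputable section

/-- Laurent polynomials in `x_0, …, x_{N-1}` over `ℚ`. -/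
abbrev LQ (N : ℕ) : Type := AddMonoidAlgebra ℚ (Fin N →₀ ℤ)

/-- The Laurent monomial `x_i^e`. -/
def XmQ {N : ℕ} (i : Fin N) (e : ℤ) : LQ N := AddMonoidAlgebra.single (Finsupp.single i e) 1

/-- Constant term: the coefficient of `x_0^0 ⋯ x_{N-1}^0`. -/
def CTQ {N : ℕ} (f : LQ N) : ℚ := f.coeff 0

set_option maxHeartbeats 1000000

open Finset AddMonoidAlgebra Pointwise

variable {N : ℕ}

lemma XmQ_mul (i : Fin N) (e e' : ℤ) : XmQ i e * XmQ i e' = XmQ i (e + e') := by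
  simp [XmQ, AddMonoidAlgebra.single_mul_single, Finsupp.single_add]

lemma XmQ_zero (i : Fin N) : XmQ i 0 = 1 := by
  simp [XmQ, AddMonoidAlgebra.one_def]

lemma XmQ_mul_pair (i k : Fin N) :
    XmQ i 1 * XmQ k (-1)
      = AddMonoidAlgebra.single (Finsupp.single i 1 + Finsupp.single k (-1)) (1 : ℚ) := by
  simp [XmQ, AddMonoidAlgebra.single_mul_single]

lemma pair_ne_zero {i k : Fin N} (h : i ≠ k) :
    Finsupp.single i (1:ℤ) + Finsupp.single k (-1) ≠ 0 := by
  intro hc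
  have := DFunLike.congr_fun hc i
  simp [Finsupp.single_apply, h, (Ne.symm h)] at this

lemma CTQ_one : CTQ (1 : LQ N) = 1 := by
  simp [CTQ, AddMonoidAlgebra.one_def]

lemma CTQ_sum {α : Type*} (s : Finset α) (f : α → LQ N) :
    CTQ (∑ x ∈ s, f x) = ∑ x ∈ s, CTQ (f x) := by
  simp [CTQ]

lemma CTQ_factor {i k : Fin N} (h : i ≠ k) :
    CTQ (1 - XmQ i 1 * XmQ k (-1)) = 1 := by
  rw [XmQ_mul_pair]
  simp only [CTQ, Finsupp.sub_apply, AddMonoidAlgebra.one_def]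
  rw [AddMonoidAlgebra.coeff_sub, Finsupp.sub_apply]
  simp only [AddMonoidAlgebra.coeff_single, Finsupp.single_apply]
  rw [if_neg (pair_ne_zero h)]
  norm_num

lemma factor_ne_zero {i k : Fin N} (h : i ≠ k) :
    (1 - XmQ i 1 * XmQ k (-1)) ≠ 0 := by
  intro hc
  have := CTQ_factor h
  rw [hc] at this
  simp [CTQ] at this

lemma support_factor {i k : Fin N} :
    (1 - XmQ i 1 * XmQ k (-1)).coeff.support
      ⊆ {0, Finsupp.single i 1 + Finsupp.single k (-1)} := by
  rw [XmQ_mul_pair]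
  intro d hd
  have := Finsupp.support_sub (f := (1 : LQ N).coeff)
      (g := (AddMonoidAlgebra.single (Finsupp.single i 1 + Finsupp.single k (-1)) (1:ℚ)).coeff) hd
  rw [Finset.mem_union] at this
  rcases this with h1 | h2
  · have := Finsupp.support_single_subset h1
    simp only [AddMonoidAlgebra.one_def] at *
    simp_all
  · have := Finsupp.support_single_subset h2
    simp_all

lemma CTQ_mul_of (f g : LQ N)
    (h : ∀ d₁ ∈ f.coeff.support, ∀ d₂ ∈ g.coeff.support, d₁ + d₂ = 0 → d₁ = 0 ∧ d₂ = 0) :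
    CTQ (f * g) = CTQ f * CTQ g := by
  classical
  show (f * g).coeff 0 = f.coeff 0 * g.coeff 0
  rw [AddMonoidAlgebra.coeff_mul]
  simp only [Finsupp.sum]
  have key : ∀ d₁ ∈ f.coeff.support, ∀ d₂ ∈ g.coeff.support,
      (if d₁ + d₂ = 0 then f.coeff d₁ * g.coeff d₂ else 0)
        = (if d₁ = 0 then f.coeff d₁ else 0) * (if d₂ = 0 then g.coeff d₂ else 0) := by
    intro d₁ h₁ d₂ h₂
    by_cases hs : d₁ + d₂ = 0
    · obtain ⟨e₁, e₂⟩ := h d₁ h₁ d₂ h₂ hs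
      simp [hs, e₁, e₂]
    · have hno : ¬ (d₁ = 0 ∧ d₂ = 0) := by rintro ⟨rfl, rfl⟩; simp at hs
      rcases Decidable.not_and_iff_or_not.mp hno with h' | h' <;> simp [hs, h']
  rw [Finset.sum_congr rfl (fun d₁ h₁ => Finset.sum_congr rfl (fun d₂ h₂ => key d₁ h₁ d₂ h₂))]
  rw [← Finset.sum_mul_sum]
  have hf : ∀ (f : LQ N), (∑ d₁ ∈ f.coeff.support, if d₁ = 0 then f.coeff d₁ else 0) = f.coeff 0 := by
    intro f
    rw [Finset.sum_ite_eq' f.coeff.support 0 f.coeff]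
    by_cases h0 : (0 : Fin N →₀ ℤ) ∈ f.coeff.support
    · rw [if_pos h0]
    · rw [if_neg h0, (Finsupp.notMem_support_iff.mp h0)]
  rw [hf f, hf g]

/-- support condition: all exponent vectors vanish at `j`. -/
def SuppZero (j : Fin N) (f : LQ N) : Prop := ∀ d ∈ f.coeff.support, d j = 0

/-- support condition: exponent vectors are `0` or strictly negative at `j`. -/
def SuppNeg (j : Fin N) (f : LQ N) : Prop := ∀ d ∈ f.coeff.support, d = 0 ∨ d j < 0

lemma suppZero_mul {j : Fin N} {f g : LQ N} (hf : SuppZero j f) (hg : SuppZero j g) :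
    SuppZero j (f * g) := by
  intro d hd
  have := AddMonoidAlgebra.support_coeff_mul_subset f g hd
  rw [Finset.mem_add] at this
  obtain ⟨d₁, h₁, d₂, h₂, rfl⟩ := this
  simp [Finsupp.add_apply, hf d₁ h₁, hg d₂ h₂]

lemma suppZero_one {j : Fin N} : SuppZero j (1 : LQ N) := by
  intro d hd
  have : d = 0 := by simpa [AddMonoidAlgebra.one_def] using hd
  simp_all

lemma suppZero_prod {j : Fin N} {α : Type*} (s : Finset α) (f : α → LQ N)
    (h : ∀ x ∈ s, SuppZero j (f x)) : SuppZero j (∏ x ∈ s, f x) := by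
  classical
  induction s using Finset.induction_on with
  | empty => simpa using suppZero_one
  | @insert x s' hx ih =>
      rw [Finset.prod_insert hx]
      exact suppZero_mul (h x (Finset.mem_insert_self x s'))
        (ih fun y hy => h y (Finset.mem_insert_of_mem hy))

lemma suppNeg_mul {j : Fin N} {f g : LQ N} (hf : SuppNeg j f) (hg : SuppNeg j g) :
    SuppNeg j (f * g) := by
  intro d hd
  have := AddMonoidAlgebra.support_coeff_mul_subset f g hd
  rw [Finset.mem_add] at this
  obtain ⟨d₁, h₁, d₂, h₂, rfl⟩ := this
  rcases hf d₁ h₁ with rfl | h1 <;> rcases hg d₂ h₂ with rfl | h2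
  · left; simp
  · right; simpa using h2
  · right; simpa using h1
  · right; have : d₁ j + d₂ j < 0 := by omega
    simpa [Finsupp.add_apply] using this

lemma suppNeg_one {j : Fin N} : SuppNeg j (1 : LQ N) := fun d hd => Or.inl (by
  have : d = 0 := by simpa [AddMonoidAlgebra.one_def] using hd
  simp_all)

lemma suppNeg_prod {j : Fin N} {α : Type*} (s : Finset α) (f : α → LQ N)
    (h : ∀ x ∈ s, SuppNeg j (f x)) : SuppNeg j (∏ x ∈ s, f x) := by
  classical
  induction s using Finset.induction_on with
  | empty => simpa using suppNeg_one
  | @insert x s' hx ih =>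
      rw [Finset.prod_insert hx]
      exact suppNeg_mul (h x (Finset.mem_insert_self x s'))
        (ih fun y hy => h y (Finset.mem_insert_of_mem hy))

lemma suppNeg_pow {j : Fin N} {f : LQ N} (hf : SuppNeg j f) (m : ℕ) : SuppNeg j (f ^ m) := by
  induction m with
  | zero => simpa using suppNeg_one
  | succ m ih => rw [pow_succ]; exact suppNeg_mul ih hf

lemma CTQ_mul_suppNeg {j : Fin N} {f g : LQ N} (hf : SuppNeg j f) (hg : SuppNeg j g) :
    CTQ (f * g) = CTQ f * CTQ g := by
  apply CTQ_mul_of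
  intro d₁ h₁ d₂ h₂ hsum
  rcases hf d₁ h₁ with rfl | h1
  · simpa using hsum
  · rcases hg d₂ h₂ with rfl | h2
    · constructor
      · simpa using hsum
      · rfl
    · exfalso
      have := DFunLike.congr_fun hsum j
      simp only [Finsupp.add_apply, Finsupp.coe_zero, Pi.zero_apply] at this
      omega

lemma CTQ_mul_suppZero_suppNeg {j : Fin N} {f g : LQ N}
    (hf : SuppZero j f) (hg : SuppNeg j g) :
    CTQ (f * g) = CTQ f * CTQ g := by
  apply CTQ_mul_of
  intro d₁ h₁ d₂ h₂ hsum
  rcases hg d₂ h₂ with rfl | h2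
  · constructor
    · simpa using hsum
    · rfl
  · exfalso
    have := DFunLike.congr_fun hsum j
    simp only [Finsupp.add_apply, Finsupp.coe_zero, Pi.zero_apply] at this
    have := hf d₁ h₁
    omega


open MvPolynomial in
lemma star_mv (S : Finset (Fin N)) (hS : S.Nonempty) :
    ∑ j ∈ S, ((∏ i ∈ S.erase j, (X i : MvPolynomial (Fin N) ℚ)) *
        ∏ k ∈ S.erase j, ∏ i ∈ S.erase k, (X i - X k))
      = ∏ k ∈ S, ∏ i ∈ S.erase k, ((X i : MvPolynomial (Fin N) ℚ) - X k) := by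
  classical
  set R := MvPolynomial (Fin N) ℚ with hR
  have hinj : Function.Injective (algebraMap R (FractionRing R)) :=
    IsFractionRing.injective R (FractionRing R)
  apply hinj
  set φ := algebraMap R (FractionRing R) with hφ
  set v : Fin N → FractionRing R := fun i => φ (X i) with hv
  have hvinj : Set.InjOn v ↑S := by
    intro i _ k _ hik
    exact MvPolynomial.X_injective (hinj hik)
  have vne : ∀ i ∈ S, ∀ k ∈ S, i ≠ k → v i - v k ≠ 0 := by
    intro i hi k hk hik
    exact sub_ne_zero.mpr (fun hc => hik (hvinj hi hk hc))
  -- Lagrange interpolation of the constant 1 at the nodes v, evaluated at 0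
  have h1 : ∑ j ∈ S, ∏ i ∈ S.erase j, (v i * (v i - v j)⁻¹) = 1 := by
    have hdeg : (1 : Polynomial (FractionRing R)).degree < S.card := by
      rw [Polynomial.degree_one]
      exact_mod_cast hS.card_pos
    have hL := Lagrange.eq_interpolate (f := (1 : Polynomial (FractionRing R))) hvinj hdeg
    have hE := congrArg (Polynomial.eval 0) hL
    rw [Polynomial.eval_one, Lagrange.interpolate_apply] at hE
    rw [Polynomial.eval_finset_sum] at hE
    simp only [Polynomial.eval_one, Polynomial.eval_mul, Polynomial.eval_C,
      Lagrange.basis, Polynomial.eval_prod, Lagrange.basisDivisor,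
      Polynomial.eval_sub, Polynomial.eval_X, one_mul] at hE
    rw [hE]
    apply Finset.sum_congr rfl
    intro j hj
    apply Finset.prod_congr rfl
    intro i hi
    rw [show v j - v i = -(v i - v j) by ring, inv_neg]
    ring
  -- now push the algebra map through and conclude
  simp only [map_sum, map_mul, map_prod, map_sub]
  have key : ∀ j ∈ S,
      (∏ i ∈ S.erase j, v i) * ∏ k ∈ S.erase j, ∏ i ∈ S.erase k, (v i - v k)
        = (∏ i ∈ S.erase j, (v i * (v i - v j)⁻¹)) *
            ∏ k ∈ S, ∏ i ∈ S.erase k, (v i - v k) := by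
    intro j hj
    rw [← Finset.mul_prod_erase S _ hj, Finset.prod_mul_distrib]
    have hBW : (∏ i ∈ S.erase j, (v i - v j)⁻¹) * ∏ i ∈ S.erase j, (v i - v j) = 1 := by
      rw [← Finset.prod_mul_distrib]
      apply Finset.prod_eq_one
      intro i hi
      exact inv_mul_cancel₀ (vne i (Finset.mem_of_mem_erase hi) j hj (Finset.ne_of_mem_erase hi))
    linear_combination (-(∏ i ∈ S.erase j, v i) *
      (∏ k ∈ S.erase j, ∏ i ∈ S.erase k, (v i - v k))) * hBW
  rw [Finset.sum_congr rfl key, ← Finset.sum_mul, h1, one_mul]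

lemma star_LQ (S : Finset (Fin N)) (hS : S.Nonempty) :
    ∑ j ∈ S, ((∏ i ∈ S.erase j, XmQ i 1) *
        ∏ k ∈ S.erase j, ∏ i ∈ S.erase k, (XmQ i 1 - XmQ k 1))
      = ∏ k ∈ S, ∏ i ∈ S.erase k, (XmQ i 1 - XmQ k 1) := by
  have h := congrArg (MvPolynomial.aeval (fun i : Fin N => XmQ i 1) :
      MvPolynomial (Fin N) ℚ →ₐ[ℚ] LQ N) (star_mv S hS)
  simpa only [map_sum, map_mul, map_prod, map_sub, MvPolynomial.aeval_X] using h


lemma suppZero_pow {j : Fin N} {f : LQ N} (hf : SuppZero j f) (m : ℕ) : SuppZero j (f ^ m) := by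
  induction m with
  | zero => simpa using suppZero_one
  | succ m ih => rw [pow_succ]; exact suppZero_mul ih hf

lemma CTQ_prod_suppNeg {j : Fin N} {α : Type*} (s : Finset α) (f : α → LQ N)
    (h : ∀ x ∈ s, SuppNeg j (f x)) :
    CTQ (∏ x ∈ s, f x) = ∏ x ∈ s, CTQ (f x) := by
  classical
  induction s using Finset.induction_on with
  | empty => simpa using CTQ_one
  | @insert x s' hx ih =>
      rw [Finset.prod_insert hx, Finset.prod_insert hx,
        CTQ_mul_suppNeg (h x (Finset.mem_insert_self x s'))
          (suppNeg_prod s' f fun y hy => h y (Finset.mem_insert_of_mem hy)),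
        ih fun y hy => h y (Finset.mem_insert_of_mem hy)]

lemma CTQ_pow_suppNeg {j : Fin N} {f : LQ N} (hf : SuppNeg j f) (m : ℕ) :
    CTQ (f ^ m) = CTQ f ^ m := by
  induction m with
  | zero => simpa using CTQ_one
  | succ m ih => rw [pow_succ, pow_succ, CTQ_mul_suppNeg (suppNeg_pow hf m) hf, ih]

lemma suppZero_factor {i k j : Fin N} (hi : i ≠ j) (hk : k ≠ j) :
    SuppZero j (1 - XmQ i 1 * XmQ k (-1)) := by
  intro d hd
  rcases Finset.mem_insert.mp (support_factor hd) with rfl | h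
  · simp
  · rw [Finset.mem_singleton] at h
    subst h
    simp [Finsupp.single_apply, hi, hk, Ne.symm hi, Ne.symm hk]

lemma suppNeg_factor {i j : Fin N} (hi : i ≠ j) :
    SuppNeg j (1 - XmQ i 1 * XmQ j (-1)) := by
  intro d hd
  rcases Finset.mem_insert.mp (support_factor hd) with rfl | h
  · exact Or.inl rfl
  · rw [Finset.mem_singleton] at h
    subst h
    right
    simp [Finsupp.single_apply, hi, Ne.symm hi]

/-- The Dyson product over an index set `S`. -/
def DF (S : Finset (Fin N)) (a : Fin N → ℕ) : LQ N :=
  ∏ p ∈ (S ×ˢ S).filter (fun p => p.1 ≠ p.2), (1 - XmQ p.1 1 * XmQ p.2 (-1)) ^ a p.1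

/-- `P_j = ∏_{i ∈ S, i ≠ j} (1 - x_j/x_i)`. -/
def Pfac (S : Finset (Fin N)) (j : Fin N) : LQ N :=
  ∏ i ∈ S.erase j, (1 - XmQ j 1 * XmQ i (-1))

lemma Pfac_eq (S : Finset (Fin N)) (j : Fin N) :
    Pfac S j = (∏ i ∈ S.erase j, (XmQ i 1 - XmQ j 1)) * ∏ i ∈ S.erase j, XmQ i (-1) := by
  rw [Pfac, ← Finset.prod_mul_distrib]
  apply Finset.prod_congr rfl
  intro i hi
  rw [sub_mul, XmQ_mul]
  norm_num [XmQ_zero]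

lemma prod_XmQ_cancel (s : Finset (Fin N)) :
    (∏ i ∈ s, XmQ i 1) * ∏ i ∈ s, XmQ i (-1) = 1 := by
  rw [← Finset.prod_mul_distrib]
  apply Finset.prod_eq_one
  intro i hi
  rw [XmQ_mul]
  norm_num [XmQ_zero]

lemma star_Pfac (S : Finset (Fin N)) (hS : S.Nonempty) :
    ∑ j ∈ S, ∏ k ∈ S.erase j, Pfac S k = ∏ k ∈ S, Pfac S k := by
  classical
  set V : Fin N → LQ N := fun k => ∏ i ∈ S.erase k, (XmQ i 1 - XmQ k 1) with hV
  set nn : Fin N → LQ N := fun k => ∏ i ∈ S.erase k, XmQ i (-1) with hnn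
  set m : LQ N := ∏ k ∈ S, nn k with hm
  have hP : ∀ k, Pfac S k = V k * nn k := fun k => Pfac_eq S k
  have hprod : ∀ (T : Finset (Fin N)), ∏ k ∈ T, Pfac S k = (∏ k ∈ T, V k) * ∏ k ∈ T, nn k := by
    intro T
    rw [← Finset.prod_mul_distrib]
    exact Finset.prod_congr rfl fun k _ => hP k
  have hkey : ∀ j ∈ S, ∏ k ∈ S.erase j, nn k = (∏ i ∈ S.erase j, XmQ i 1) * m := by
    intro j hj
    rw [hm, ← Finset.mul_prod_erase S nn hj, ← mul_assoc]
    rw [hnn]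
    rw [prod_XmQ_cancel (S.erase j), one_mul]
  calc ∑ j ∈ S, ∏ k ∈ S.erase j, Pfac S k
      = ∑ j ∈ S, ((∏ i ∈ S.erase j, XmQ i 1) * ∏ k ∈ S.erase j, V k) * m := by
        apply Finset.sum_congr rfl
        intro j hj
        rw [hprod (S.erase j), hkey j hj]
        ring
    _ = (∏ k ∈ S, V k) * m := by
        rw [← Finset.sum_mul, star_LQ S hS]
    _ = ∏ k ∈ S, Pfac S k := (hprod S).symm

/-- decrement `a` at `j` -/
def dec (a : Fin N → ℕ) (j : Fin N) : Fin N → ℕ := fun i => if i = j then a i - 1 else a i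

lemma DF_dec_mul (S : Finset (Fin N)) (a : Fin N → ℕ) {j : Fin N} (hj : j ∈ S)
    (haj : 1 ≤ a j) : DF S a = DF S (dec a j) * Pfac S j := by
  classical
  have hsplit : ∀ p : Fin N × Fin N,
      (1 - XmQ p.1 1 * XmQ p.2 (-1)) ^ a p.1
        = (1 - XmQ p.1 1 * XmQ p.2 (-1)) ^ (dec a j p.1)
            * (if p.1 = j then (1 - XmQ p.1 1 * XmQ p.2 (-1)) else 1) := by
    intro p
    by_cases h : p.1 = j
    · rw [if_pos h, ← pow_succ]
      congr 1
      simp only [dec, if_pos h]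
      subst h
      omega
    · rw [if_neg h, mul_one]
      congr 1
      simp [dec, h]
  rw [DF, Finset.prod_congr rfl fun p _ => hsplit p, Finset.prod_mul_distrib]
  congr 1
  rw [← Finset.prod_filter]
  have hset : ((S ×ˢ S).filter (fun p => p.1 ≠ p.2)).filter (fun p => p.1 = j)
      = (S.erase j).image (fun i => (j, i)) := by
    ext p
    simp only [Finset.mem_filter, Finset.mem_product, Finset.mem_image, Finset.mem_erase]
    constructor
    · rintro ⟨⟨⟨h1, h2⟩, h3⟩, h4⟩
      exact ⟨p.2, ⟨fun hc => h3 (by rw [h4, hc]), h2⟩, by rw [← h4]⟩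
    · rintro ⟨i, ⟨hne, hiS⟩, rfl⟩
      exact ⟨⟨⟨hj, hiS⟩, fun hc => hne hc.symm⟩, rfl⟩
  rw [hset, Finset.prod_image (by intro x _ y _ h; exact (Prod.mk.injEq _ _ _ _).mp h |>.2)]
  rfl

lemma Pfac_ne_zero (S : Finset (Fin N)) (j : Fin N) : Pfac S j ≠ 0 := by
  rw [Pfac]
  rw [Finset.prod_ne_zero_iff]
  intro i hi
  exact factor_ne_zero (Finset.ne_of_mem_erase hi).symm

lemma DF_recursion (S : Finset (Fin N)) (a : Fin N → ℕ) (hS : S.Nonempty)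
    (ha : ∀ j ∈ S, 1 ≤ a j) :
    DF S a = ∑ j ∈ S, DF S (dec a j) := by
  classical
  have hQ : (∏ k ∈ S, Pfac S k) ≠ 0 :=
    Finset.prod_ne_zero_iff.mpr fun k _ => Pfac_ne_zero S k
  apply mul_right_cancel₀ hQ
  rw [Finset.sum_mul]
  calc DF S a * ∏ k ∈ S, Pfac S k
      = DF S a * ∑ j ∈ S, ∏ k ∈ S.erase j, Pfac S k := by rw [star_Pfac S hS]
    _ = ∑ j ∈ S, DF S a * ∏ k ∈ S.erase j, Pfac S k := by rw [Finset.mul_sum]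
    _ = ∑ j ∈ S, DF S (dec a j) * ∏ k ∈ S, Pfac S k := by
        apply Finset.sum_congr rfl
        intro j hj
        rw [DF_dec_mul S a hj (ha j hj), ← Finset.mul_prod_erase S _ hj]
        ring
lemma DF_erase (S : Finset (Fin N)) (a : Fin N → ℕ) {j : Fin N} (hj : j ∈ S) (haj : a j = 0) :
    CTQ (DF S a) = CTQ (DF (S.erase j) a) := by
  classical
  have eA : (((S ×ˢ S).filter (fun p => p.1 ≠ p.2)).filter
        (fun p => ¬(p.1 = j ∨ p.2 = j)))
      = ((S.erase j) ×ˢ (S.erase j)).filter (fun p => p.1 ≠ p.2) := by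
    ext p
    simp only [Finset.mem_filter, Finset.mem_product, Finset.mem_erase, not_or]
    tauto
  have eB : (((((S ×ˢ S).filter (fun p => p.1 ≠ p.2)).filter
        (fun p => p.1 = j ∨ p.2 = j))).filter (fun p => ¬ p.1 = j))
      = (S.erase j).image (fun i => (i, j)) := by
    ext p
    simp only [Finset.mem_filter, Finset.mem_product, Finset.mem_image, Finset.mem_erase]
    constructor
    · rintro ⟨⟨⟨⟨h1, h2⟩, h3⟩, h4⟩, h5⟩
      rcases h4 with h4 | h4
      · exact absurd h4 h5
      · exact ⟨p.1, ⟨fun hc => h3 (by rw [hc, h4]), h1⟩, by rw [← h4]⟩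
    · rintro ⟨i, ⟨hne, hiS⟩, rfl⟩
      exact ⟨⟨⟨⟨hiS, hj⟩, hne⟩, Or.inr rfl⟩, hne⟩
  have h1 : DF S a
      = ((∏ p ∈ ((((S ×ˢ S).filter (fun p => p.1 ≠ p.2)).filter
            (fun p => p.1 = j ∨ p.2 = j))).filter (fun p => p.1 = j),
          (1 - XmQ p.1 1 * XmQ p.2 (-1)) ^ a p.1)
          * ∏ i ∈ S.erase j, (1 - XmQ i 1 * XmQ j (-1)) ^ a i)
          * DF (S.erase j) a := by
    rw [DF, ← Finset.prod_filter_mul_prod_filter_not ((S ×ˢ S).filter (fun p => p.1 ≠ p.2))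
      (fun p => p.1 = j ∨ p.2 = j), eA, ← DF]
    congr 1
    rw [← Finset.prod_filter_mul_prod_filter_not _ (fun p => p.1 = j), eB,
      Finset.prod_image (by intro x _ y _ h; exact ((Prod.mk.injEq _ _ _ _).mp h).1)]
  have h2 : (∏ p ∈ ((((S ×ˢ S).filter (fun p => p.1 ≠ p.2)).filter
        (fun p => p.1 = j ∨ p.2 = j))).filter (fun p => p.1 = j),
        (1 - XmQ p.1 1 * XmQ p.2 (-1)) ^ a p.1) = 1 := by
    apply Finset.prod_eq_one
    intro p hp
    have : p.1 = j := (Finset.mem_filter.mp hp).2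
    rw [this, haj, pow_zero]
  rw [h1, h2, one_mul, mul_comm]
  have hG : SuppZero j (DF (S.erase j) a) := by
    apply suppZero_prod
    intro p hp
    simp only [Finset.mem_filter, Finset.mem_product, Finset.mem_erase] at hp
    exact suppZero_pow (suppZero_factor hp.1.1.1 hp.1.2.1) _
  have hH : SuppNeg j (∏ i ∈ S.erase j, (1 - XmQ i 1 * XmQ j (-1)) ^ a i) := by
    apply suppNeg_prod
    intro i hi
    exact suppNeg_pow (suppNeg_factor (Finset.ne_of_mem_erase hi)) _
  rw [CTQ_mul_suppZero_suppNeg hG hH]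
  have hCTH : CTQ (∏ i ∈ S.erase j, (1 - XmQ i 1 * XmQ j (-1)) ^ a i) = 1 := by
    rw [CTQ_prod_suppNeg (j := j) _ _
      (fun i hi => suppNeg_pow (suppNeg_factor (Finset.ne_of_mem_erase hi)) _)]
    apply Finset.prod_eq_one
    intro i hi
    rw [CTQ_pow_suppNeg (suppNeg_factor (Finset.ne_of_mem_erase hi)),
      CTQ_factor (Finset.ne_of_mem_erase hi), one_pow]
  rw [hCTH, mul_one]

lemma DF_empty (a : Fin N → ℕ) : DF (∅ : Finset (Fin N)) a = 1 := by
  rw [DF]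
  simp

lemma prod_factorial_ne_zero (S : Finset (Fin N)) (a : Fin N → ℕ) :
    (∏ i ∈ S, ((a i).factorial : ℚ)) ≠ 0 :=
  Finset.prod_ne_zero_iff.mpr fun i _ => Nat.cast_ne_zero.mpr (Nat.factorial_ne_zero _)

lemma DF_CTQ : ∀ (M : ℕ) (S : Finset (Fin N)) (a : Fin N → ℕ),
    2 * (∑ i ∈ S, a i) + S.card ≤ M →
    CTQ (DF S a) = ((∑ i ∈ S, a i).factorial : ℚ) / ∏ i ∈ S, ((a i).factorial : ℚ) := by
  intro M
  induction M with
  | zero =>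
      intro S a h
      have : S = ∅ := Finset.card_eq_zero.mp (by omega)
      subst this
      simp [DF_empty, CTQ_one]
  | succ M ih =>
      intro S a hM
      classical
      by_cases hS : S = ∅
      · subst hS
        simp [DF_empty, CTQ_one]
      · have hSne : S.Nonempty := Finset.nonempty_iff_ne_empty.mpr hS
        by_cases hz : ∃ j ∈ S, a j = 0
        · obtain ⟨j, hj, haj⟩ := hz
          rw [DF_erase S a hj haj]
          have hsum : ∑ i ∈ S.erase j, a i = ∑ i ∈ S, a i := Finset.sum_erase S haj
          have hprod : (∏ i ∈ S.erase j, ((a i).factorial : ℚ)) = ∏ i ∈ S, ((a i).factorial : ℚ) :=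
            Finset.prod_erase S (by rw [haj]; norm_num)
          have hcard : (S.erase j).card = S.card - 1 := Finset.card_erase_of_mem hj
          have hcp : 1 ≤ S.card := Finset.card_pos.mpr hSne
          rw [ih (S.erase j) a (by omega), hsum, hprod]
        · push_neg at hz
          have ha : ∀ j ∈ S, 1 ≤ a j := fun j hj => Nat.one_le_iff_ne_zero.mpr (hz j hj)
          set T : ℕ := ∑ i ∈ S, a i with hT
          have hTpos : 1 ≤ T := by
            obtain ⟨j, hj⟩ := hSne
            calc 1 ≤ a j := ha j hj
              _ ≤ T := Finset.single_le_sum (fun i _ => Nat.zero_le _) hj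
          rw [DF_recursion S a hSne ha, CTQ_sum]
          have hdecsum : ∀ j ∈ S, ∑ i ∈ S, dec a j i = T - 1 := by
            intro j hj
            rw [hT, ← Finset.add_sum_erase S a hj, ← Finset.add_sum_erase S (dec a j) hj]
            have h1 : dec a j j = a j - 1 := by simp [dec]
            have h2 : ∑ i ∈ S.erase j, dec a j i = ∑ i ∈ S.erase j, a i := by
              apply Finset.sum_congr rfl
              intro i hi
              simp [dec, Finset.ne_of_mem_erase hi]
            have := ha j hj
            omega
          rw [Finset.sum_congr rfl (fun j hj => by
            rw [ih S (dec a j) (by have := hdecsum j hj; omega), hdecsum j hj])]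
          -- arithmetic
          have hDj : ∀ j ∈ S, (∏ i ∈ S, ((dec a j i).factorial : ℚ)) * (a j : ℚ)
              = ∏ i ∈ S, ((a i).factorial : ℚ) := by
            intro j hj
            rw [← Finset.mul_prod_erase S (fun i => ((dec a j i).factorial : ℚ)) hj,
              ← Finset.mul_prod_erase S (fun i => ((a i).factorial : ℚ)) hj]
            have h2 : ∏ i ∈ S.erase j, ((dec a j i).factorial : ℚ)
                = ∏ i ∈ S.erase j, ((a i).factorial : ℚ) := by
              apply Finset.prod_congr rfl
              intro i hi
              simp [dec, Finset.ne_of_mem_erase hi]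
            have h3 : ((dec a j j).factorial : ℚ) * (a j : ℚ) = ((a j).factorial : ℚ) := by
              have : dec a j j = a j - 1 := by simp [dec]
              rw [this]
              rw [← Nat.cast_mul]
              norm_cast
              rw [Nat.mul_comm]
              exact Nat.mul_factorial_pred (Nat.one_le_iff_ne_zero.mp (ha j hj))
            rw [h2, mul_right_comm, h3]
          have hterm : ∀ j ∈ S, ((T - 1).factorial : ℚ) / ∏ i ∈ S, ((dec a j i).factorial : ℚ)
              = (a j : ℚ) * (((T - 1).factorial : ℚ) / ∏ i ∈ S, ((a i).factorial : ℚ)) := by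
            intro j hj
            rw [div_eq_iff (prod_factorial_ne_zero S (dec a j))]
            have hD := hDj j hj
            field_simp
            linear_combination (-1 : ℚ) * hD
          rw [Finset.sum_congr rfl hterm, ← Finset.sum_mul]
          have hcast : (∑ j ∈ S, (a j : ℚ)) = (T : ℚ) := by
            rw [hT]
            push_cast
            rfl
          rw [hcast, ← mul_div_assoc]
          have : (T : ℚ) * ((T-1).factorial : ℚ) = (T.factorial : ℚ) := by
            rw [← Nat.cast_mul]
            norm_cast
            exact Nat.mul_factorial_pred (Nat.one_le_iff_ne_zero.mp hTpos)
          rw [this]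

/-- **Dyson's constant term identity.** For non-negative integers `a_0,…,a_n`,
`CT ∏_{0≤i≠j≤n} (1 - x_i/x_j)^{a_i} = (a_0+⋯+a_n)! / (a_0! ⋯ a_n!)`. -/
theorem dyson_conjecture (n : ℕ) (a : Fin (n+1) → ℕ) :
    CTQ (∏ p ∈ Finset.univ.filter (fun p : Fin (n+1) × Fin (n+1) => p.1 ≠ p.2),
        (1 - XmQ p.1 1 * XmQ p.2 (-1)) ^ (a p.1)) =
      (Nat.factorial (∑ i, a i) : ℚ) / ∏ i, (Nat.factorial (a i) : ℚ) := by
  have h := DF_CTQ (2 * (∑ i, a i) + (n+1)) Finset.univ a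
    (by simp [Finset.card_univ])
  rw [DF, Finset.univ_product_univ] at h
  exact h

end
end
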